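/- arXiv:1801.08425 — 6 statements merged into one kernel-verified Lean document; each statement's English description precedes it below -/
import Mathlib

section
/- For every finite simple graph G and all x, y ∈ (−1,1) and α ∈ (0,1), one has τ(G, αx + (1−α)y) ≥ τ(G,x)^α · τ(G,y)^{1−α} (logarithmic concavity), and moreover τ(G, xy) ≥ τ(G,x). -/
open Matrix Finset Real

/-- `M ∈ 𝒜(G,x)`: `M` is a real symmetric positive definite `V × V` matrix with
`1`s on the diagonal and value `x` at every edge of `G`. -/
def memA {V : Type*} [Fintype V] [DecidableEq V] (G : SimpleGraph V) (x : ℝ) (M : Matrix V V ℝ) : Prop :=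
  M.PosDef ∧ (∀ i, M i i = 1) ∧ ∀ i j, G.Adj i j → M i j = x

/-- `A = 𝔸_G(x)`: `A` is the determinant-maximizing matrix in `𝒜(G,x)`,
so that `τ(G,x) = A.det`. -/
def IsMaxA {V : Type*} [Fintype V] [DecidableEq V] (G : SimpleGraph V) (x : ℝ) (A : Matrix V V ℝ) : Prop :=
  memA G x A ∧ ∀ M : Matrix V V ℝ, memA G x M → M.det ≤ A.det

set_option linter.unusedSectionVars false
set_option maxHeartbeats 1000000

open scoped MatrixOrder in
noncomputable def Matrix.PosSemidef.sqrt {n : Type*} [Fintype n] [DecidableEq n]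
    {A : Matrix n n ℝ} (_hA : A.PosSemidef) : Matrix n n ℝ := CFC.sqrt A

open scoped MatrixOrder in
lemma Matrix.PosSemidef.posSemidef_sqrt {n : Type*} [Fintype n] [DecidableEq n]
    {A : Matrix n n ℝ} (hA : A.PosSemidef) : hA.sqrt.PosSemidef :=
  (CFC.sqrt_nonneg A).posSemidef

open scoped MatrixOrder in
lemma Matrix.PosSemidef.sqrt_mul_self {n : Type*} [Fintype n] [DecidableEq n]
    {A : Matrix n n ℝ} (hA : A.PosSemidef) : hA.sqrt * hA.sqrt = A :=
  CFC.sqrt_mul_sqrt_self A hA.nonneg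

open scoped MatrixOrder in
lemma Matrix.posSemidef_iff_eq_transpose_mul_self {n : Type*} [Fintype n] [DecidableEq n]
    {A : Matrix n n ℝ} : A.PosSemidef ↔ ∃ B : Matrix n n ℝ, A = Bᴴ * B := by
  constructor
  · intro hA
    obtain ⟨B, hB⟩ := CStarAlgebra.nonneg_iff_eq_star_mul_self.mp hA.nonneg
    exact ⟨B, by rw [hB, Matrix.star_eq_conjTranspose]⟩
  · rintro ⟨B, rfl⟩
    exact Matrix.posSemidef_conjTranspose_mul_self B

namespace Tau

variable {n : Type*} [Fintype n] [DecidableEq n]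




lemma det_smul_one_add_smul (a b : ℝ) {C : Matrix n n ℝ} (hC : C.IsHermitian) :
    (a • (1 : Matrix n n ℝ) + b • C).det = ∏ i, (a + b * hC.eigenvalues i) := by
  have hU : (hC.eigenvectorUnitary : Matrix n n ℝ) * (star hC.eigenvectorUnitary : Matrix n n ℝ) = 1 :=
    (Matrix.mem_unitaryGroup_iff).mp hC.eigenvectorUnitary.2
  have hdiag : Matrix.diagonal (RCLike.ofReal ∘ hC.eigenvalues) = Matrix.diagonal hC.eigenvalues := by
    ext i j; simp [Matrix.diagonal_apply]
  have key : a • (1 : Matrix n n ℝ) + b • C =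
      (hC.eigenvectorUnitary : Matrix n n ℝ) *
        (a • (1 : Matrix n n ℝ) + b • Matrix.diagonal hC.eigenvalues) *
        (star hC.eigenvectorUnitary : Matrix n n ℝ) := by
    rw [Matrix.mul_add, Matrix.add_mul, Matrix.mul_smul, Matrix.mul_smul, Matrix.smul_mul,
      Matrix.smul_mul, Matrix.mul_one, hU]
    congr 1
    conv_lhs => rw [hC.spectral_theorem, hdiag]
    rw [Unitary.conjStarAlgAut_apply]
  rw [key, Matrix.det_mul_right_comm, hU, Matrix.one_mul]
  have : a • (1 : Matrix n n ℝ) + b • Matrix.diagonal hC.eigenvalues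
      = Matrix.diagonal (fun i => a + b * hC.eigenvalues i) := by
    ext i j
    by_cases h : i = j <;> simp [Matrix.diagonal_apply, Matrix.one_apply, h]
  rw [this, Matrix.det_diagonal]

lemma posSemidef_det_nonneg {M : Matrix n n ℝ} (hM : M.PosSemidef) : 0 ≤ M.det := by
  rw [hM.1.det_eq_prod_eigenvalues]
  exact Finset.prod_nonneg fun i _ => hM.eigenvalues_nonneg i

lemma posDef_of_det_ne_zero {M : Matrix n n ℝ} (hM : M.PosSemidef) (hd : M.det ≠ 0) :
    M.PosDef := by
  refine PosDef.of_dotProduct_mulVec_pos hM.1 fun x hx =>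
    lt_of_le_of_ne (hM.dotProduct_mulVec_nonneg x) fun h => hx ?_
  have h0 : M *ᵥ x = 0 := (hM.dotProduct_mulVec_zero_iff x).mp h.symm
  have : M⁻¹ *ᵥ (M *ᵥ x) = x := by
    rw [Matrix.mulVec_mulVec, Matrix.nonsing_inv_mul _ (isUnit_iff_ne_zero.mpr hd),
      Matrix.one_mulVec]
  rw [h0, Matrix.mulVec_zero] at this
  exact this.symm

lemma PosDef.diag_pos {M : Matrix n n ℝ} (hM : M.PosDef) (i : n) : 0 < M i i := by
  have := hM.dotProduct_mulVec_pos (x := Pi.single i 1) (by simp [Function.ne_iff])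
  simpa [dotProduct, Matrix.mulVec, Pi.single_apply] using this

lemma isHermitian_smul {M : Matrix n n ℝ} (hM : M.IsHermitian) (c : ℝ) :
    (c • M).IsHermitian := by
  rw [Matrix.IsHermitian, Matrix.conjTranspose_smul, star_trivial, hM.eq]

lemma posSemidef_smul {M : Matrix n n ℝ} (hM : M.PosSemidef) {c : ℝ} (hc : 0 ≤ c) :
    (c • M).PosSemidef := by
  refine PosSemidef.of_dotProduct_mulVec_nonneg (isHermitian_smul hM.1 c) fun x => ?_
  have h2 := hM.dotProduct_mulVec_nonneg x
  rw [Matrix.smul_mulVec, dotProduct_smul]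
  simp only [star_trivial, smul_eq_mul] at *
  positivity

lemma posDef_smul {M : Matrix n n ℝ} (hM : M.PosDef) {c : ℝ} (hc : 0 < c) :
    (c • M).PosDef := by
  refine PosDef.of_dotProduct_mulVec_pos (isHermitian_smul hM.1 c) fun x hx => ?_
  have h2 := hM.dotProduct_mulVec_pos hx
  rw [Matrix.smul_mulVec, dotProduct_smul]
  simp only [star_trivial, smul_eq_mul] at *
  positivity


-- from a.lean (assume proven)
/-- PD square root of a PD matrix. -/
lemma posDef_sqrt {M : Matrix n n ℝ} (hM : M.PosDef) : hM.posSemidef.sqrt.PosDef := by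
  apply posDef_of_det_ne_zero hM.posSemidef.posSemidef_sqrt
  intro h
  have := hM.posSemidef.sqrt_mul_self
  have hd : M.det = 0 := by
    rw [← this, Matrix.det_mul, h, zero_mul]
  exact hM.det_pos.ne' hd

lemma conj_posDef {M B : Matrix n n ℝ} (hM : M.PosDef) (hB : B.PosDef) (hBH : B.IsHermitian) :
    (B * M * B).PosDef := by
  have hpsd : (B * M * B).PosSemidef := by
    have := hM.posSemidef.mul_mul_conjTranspose_same B
    rwa [hBH.eq] at this
  apply posDef_of_det_ne_zero hpsd
  rw [Matrix.det_mul, Matrix.det_mul]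
  exact mul_ne_zero (mul_ne_zero hB.det_pos.ne' hM.det_pos.ne') hB.det_pos.ne'

/-- det(1+C) ≥ 1 for PSD C -/
lemma one_le_det_one_add {C : Matrix n n ℝ} (hC : C.PosSemidef) :
    1 ≤ (1 + C).det := by
  have h := det_smul_one_add_smul 1 1 hC.1
  rw [one_smul, one_smul] at h
  rw [h]
  calc (1:ℝ) = ∏ _i : n, 1 := by simp
  _ ≤ _ := Finset.prod_le_prod (by simp) (fun i _ => by
      have := hC.eigenvalues_nonneg i; linarith)

/-- det(α•1+(1-α)•C) ≥ (det C)^(1-α) for PD C, α ∈ [0,1] -/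
lemma rpow_det_le {C : Matrix n n ℝ} (hC : C.PosDef) {a : ℝ} (h0 : 0 ≤ a) (h1 : a ≤ 1) :
    C.det ^ (1 - a) ≤ (a • (1 : Matrix n n ℝ) + (1 - a) • C).det := by
  have h := det_smul_one_add_smul a (1 - a) hC.1
  rw [h]
  have hev : ∀ i, 0 < hC.1.eigenvalues i := fun i => hC.eigenvalues_pos i
  have hdet : C.det = ∏ i, hC.1.eigenvalues i := by
    rw [hC.1.det_eq_prod_eigenvalues]; norm_num
  rw [hdet, ← Real.finset_prod_rpow _ _ (fun i _ => (hev i).le)]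
  refine Finset.prod_le_prod (fun i _ => Real.rpow_nonneg (hev i).le _) (fun i _ => ?_)
  have := Real.geom_mean_le_arith_mean2_weighted (w₁ := a) (w₂ := 1 - a) (p₁ := 1)
    (p₂ := hC.1.eigenvalues i) h0 (by linarith) zero_le_one (hev i).le (by ring)
  simpa using this

/-- key identity: for S PD hermitian invertible, M = S⁻¹(SMS)S⁻¹ style -/
lemma conj_sandwich {S B : Matrix n n ℝ} (hS : IsUnit S.det) :
    S * (S⁻¹ * B * S⁻¹) * S = B := by
  have h1 := Matrix.mul_nonsing_inv S hS
  have h2 := Matrix.nonsing_inv_mul S hS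
  calc S * (S⁻¹ * B * S⁻¹) * S = (S * S⁻¹) * B * (S⁻¹ * S) := by
        noncomm_ring
  _ = B := by rw [h1, h2, Matrix.one_mul, Matrix.mul_one]

/-- log-concavity of det -/
lemma det_convex_comb {A B : Matrix n n ℝ} (hA : A.PosDef) (hB : B.PosDef)
    {a : ℝ} (h0 : 0 ≤ a) (h1 : a ≤ 1) :
    A.det ^ a * B.det ^ (1 - a) ≤ (a • A + (1 - a) • B).det := by
  set S := hA.posSemidef.sqrt with hSdef
  have hSpd : S.PosDef := posDef_sqrt hA
  have hSH : S.IsHermitian := hA.posSemidef.posSemidef_sqrt.1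
  have hSS : S * S = A := hA.posSemidef.sqrt_mul_self
  have hSu : IsUnit S.det := isUnit_iff_ne_zero.mpr hSpd.det_pos.ne'
  have hSiH : (S⁻¹).IsHermitian := hSH.inv
  set C := S⁻¹ * B * S⁻¹ with hCdef
  have hCpd : C.PosDef := by
    have := conj_posDef hB (hSpd.inv) hSiH
    exact this
  have key : a • A + (1 - a) • B = S * (a • (1 : Matrix n n ℝ) + (1 - a) • C) * S := by
    rw [Matrix.mul_add, Matrix.add_mul, Matrix.mul_smul, Matrix.mul_smul, Matrix.smul_mul,
      Matrix.smul_mul, Matrix.mul_one, hSS, conj_sandwich hSu]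
  have hdetC : C.det = B.det / A.det := by
    rw [hCdef, Matrix.det_mul, Matrix.det_mul, Matrix.det_nonsing_inv, ← hSS, Matrix.det_mul,
      Ring.inverse_eq_inv']
    field_simp
  have h2 : C.det ^ (1 - a) ≤ (a • (1 : Matrix n n ℝ) + (1 - a) • C).det :=
    rpow_det_le hCpd h0 h1
  have h3 : (a • A + (1 - a) • B).det = A.det * (a • (1 : Matrix n n ℝ) + (1 - a) • C).det := by
    rw [key, Matrix.det_mul, Matrix.det_mul, mul_comm, ← mul_assoc, ← Matrix.det_mul, hSS]
  rw [h3]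
  have hAd := hA.det_pos
  have hBd := hB.det_pos
  calc A.det ^ a * B.det ^ (1 - a) = A.det * (B.det / A.det) ^ (1 - a) := by
        rw [Real.div_rpow hBd.le hAd.le]
        rw [show A.det ^ a = A.det / A.det ^ (1 - a) by
          rw [eq_div_iff (Real.rpow_pos_of_pos hAd _).ne', ← Real.rpow_add hAd]; simp]
        field_simp
  _ ≤ A.det * (a • (1 : Matrix n n ℝ) + (1 - a) • C).det := by
        rw [← hdetC]
        exact mul_le_mul_of_nonneg_left h2 hAd.le
  _ = _ := rfl

/-- determinant monotonicity: det M ≤ det (M + N) for PSD M, N -/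
lemma det_le_det_add {M N : Matrix n n ℝ} (hM : M.PosSemidef) (hN : N.PosSemidef) :
    M.det ≤ (M + N).det := by
  rcases eq_or_lt_of_le (posSemidef_det_nonneg hM) with h | h
  · rw [← h]
    exact posSemidef_det_nonneg (hM.add hN)
  · have hMpd : M.PosDef := posDef_of_det_ne_zero hM h.ne'
    set S := hMpd.posSemidef.sqrt with hSdef
    have hSpd : S.PosDef := posDef_sqrt hMpd
    have hSH : S.IsHermitian := hMpd.posSemidef.posSemidef_sqrt.1
    have hSS : S * S = M := hMpd.posSemidef.sqrt_mul_self
    have hSu : IsUnit S.det := isUnit_iff_ne_zero.mpr hSpd.det_pos.ne'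
    have hSiH : (S⁻¹).IsHermitian := hSH.inv
    set C := S⁻¹ * N * S⁻¹ with hCdef
    have hCpsd : C.PosSemidef := by
      have := hN.mul_mul_conjTranspose_same S⁻¹
      rwa [hSiH.eq] at this
    have key : M + N = S * (1 + C) * S := by
      rw [Matrix.mul_add, Matrix.add_mul, Matrix.mul_one, hSS, conj_sandwich hSu]
    rw [key, Matrix.det_mul, Matrix.det_mul, mul_comm, ← mul_assoc, ← Matrix.det_mul, hSS]
    nth_rewrite 1 [show M.det = M.det * 1 by ring]
    exact mul_le_mul_of_nonneg_left (one_le_det_one_add hCpsd) h.le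


lemma diag_conj_apply (A : Matrix n n ℝ) (d : n → ℝ) (i j : n) :
    ((Matrix.diagonal d)ᴴ * A * Matrix.diagonal d) i j = d i * A i j * d j := by
  rw [Matrix.diagonal_conjTranspose, Matrix.mul_diagonal, Matrix.diagonal_mul]
  simp [mul_assoc]

lemma hadamard_eq_sum {A B : Matrix n n ℝ} {L : Matrix n n ℝ} (hB : B = Lᴴ * L) :
    A ⊙ B = ∑ k : n, (Matrix.diagonal (fun i => L k i))ᴴ * A * Matrix.diagonal (fun i => L k i) := by
  ext i j
  rw [Matrix.sum_apply]
  simp only [diag_conj_apply]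
  simp only [Matrix.hadamard_apply, hB, Matrix.mul_apply, Matrix.conjTranspose_apply,
    star_trivial]
  rw [Finset.mul_sum]
  exact Finset.sum_congr rfl fun k _ => by ring

lemma quad_conj (A : Matrix n n ℝ) (d : n → ℝ) (x : n → ℝ) :
    x ⬝ᵥ ((Matrix.diagonal d)ᴴ * A * Matrix.diagonal d) *ᵥ x
      = (Matrix.diagonal d *ᵥ x) ⬝ᵥ A *ᵥ (Matrix.diagonal d *ᵥ x) := by
  rw [← Matrix.mulVec_mulVec, ← Matrix.mulVec_mulVec, Matrix.dotProduct_mulVec x,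
    Matrix.diagonal_conjTranspose]
  congr 1
  ext j
  simp [Matrix.vecMul_diagonal, Matrix.mulVec_diagonal, mul_comm]

lemma dot_sum_fin (x : n → ℝ) (f : n → Matrix n n ℝ) (s : Finset n) :
    x ⬝ᵥ (∑ k ∈ s, f k) *ᵥ x = ∑ k ∈ s, x ⬝ᵥ (f k) *ᵥ x := by
  induction s using Finset.induction_on with
  | empty => simp
  | insert _ _ h ih =>
    rw [Finset.sum_insert h, Finset.sum_insert h, Matrix.add_mulVec, dotProduct_add, ih]

lemma dot_sum (x : n → ℝ) (f : n → Matrix n n ℝ) :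
    x ⬝ᵥ (∑ k, f k) *ᵥ x = ∑ k, x ⬝ᵥ (f k) *ᵥ x :=
  dot_sum_fin x f Finset.univ

/-- Schur product theorem, PSD version -/
lemma hadamard_posSemidef {A B : Matrix n n ℝ} (hA : A.PosSemidef) (hB : B.PosSemidef) :
    (A ⊙ B).PosSemidef := by
  obtain ⟨L, hL⟩ := Matrix.posSemidef_iff_eq_transpose_mul_self.mp hB
  rw [hadamard_eq_sum hL]
  refine Finset.sum_induction _ _ (fun M N hM hN => hM.add hN) Matrix.PosSemidef.zero
    (fun k _ => hA.conjTranspose_mul_mul_same _)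

/-- Schur product theorem, PD version -/
lemma hadamard_posDef {A B : Matrix n n ℝ} (hA : A.PosDef) (hB : B.PosDef) :
    (A ⊙ B).PosDef := by
  obtain ⟨L, hL⟩ := Matrix.posSemidef_iff_eq_transpose_mul_self.mp hB.posSemidef
  refine PosDef.of_dotProduct_mulVec_pos (hadamard_posSemidef hA.posSemidef hB.posSemidef).1 fun x hx => ?_
  rw [hadamard_eq_sum hL]
  simp only [star_trivial]
  rw [dot_sum]
  -- each term nonneg; find a positive term
  obtain ⟨i, hi⟩ : ∃ i, x i ≠ 0 := Function.ne_iff.mp hx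
  have hBii : 0 < B i i := PosDef.diag_pos hB i
  have hterm : ∀ k, 0 ≤ x ⬝ᵥ ((Matrix.diagonal (fun i => L k i))ᴴ * A * Matrix.diagonal (fun i => L k i)) *ᵥ x := by
    intro k
    rw [quad_conj]
    have := hA.posSemidef.dotProduct_mulVec_nonneg (Matrix.diagonal (fun i => L k i) *ᵥ x)
    simpa using this
  obtain ⟨k, hk⟩ : ∃ k, L k i ≠ 0 := by
    by_contra hcon
    push_neg at hcon
    have : B i i = 0 := by
      rw [hL, Matrix.mul_apply]
      simp only [Matrix.conjTranspose_apply, star_trivial]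
      exact Finset.sum_eq_zero fun k _ => by rw [hcon k, zero_mul]
    rw [this] at hBii; exact lt_irrefl _ hBii
  have hy : Matrix.diagonal (fun i' => L k i') *ᵥ x ≠ 0 := by
    intro h0
    have := congrFun h0 i
    simp only [Matrix.mulVec_diagonal, Pi.zero_apply] at this
    exact hi (by
      rcases mul_eq_zero.mp this with h | h
      · exact absurd h hk
      · exact h)
  have hkpos : 0 < x ⬝ᵥ ((Matrix.diagonal (fun i => L k i))ᴴ * A * Matrix.diagonal (fun i => L k i)) *ᵥ x := by
    rw [quad_conj]
    have := hA.dotProduct_mulVec_pos hy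
    simpa using this
  exact Finset.sum_pos' (fun k _ => hterm k) ⟨k, Finset.mem_univ k, hkpos⟩



section Unique
variable {u : Type*} [Fintype u] [DecidableEq u] [Unique u]

lemma posDef_of_unique {M : Matrix u u ℝ} (h : 0 < M default default) : M.PosDef := by
  refine PosDef.of_dotProduct_mulVec_pos ?_ ?_
  · ext i j
    rw [Unique.eq_default i, Unique.eq_default j]
    simp [Matrix.conjTranspose_apply]
  · intro x hx
    have hxd : x default ≠ 0 := by
      intro h0
      exact hx (funext fun i => by rw [Unique.eq_default i]; exact h0)
    have : x ⬝ᵥ M *ᵥ x = M default default * (x default * x default) := by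
      simp [dotProduct, Matrix.mulVec, Fintype.sum_unique]
      ring
    rw [star_trivial, this]
    exact mul_pos h (mul_self_pos.mpr hxd)

lemma inv_of_unique {M : Matrix u u ℝ} (h : M default default ≠ 0) :
    M⁻¹ = (M default default)⁻¹ • (1 : Matrix u u ℝ) := by
  apply Matrix.inv_eq_right_inv
  rw [Matrix.mul_smul, Matrix.mul_one]
  ext i j
  rw [Unique.eq_default i, Unique.eq_default j]
  simp [Matrix.one_apply, inv_mul_cancel₀ h, mul_comm]

end Unique

section Blocks
variable {u m : Type*} [Fintype u] [Fintype m] [DecidableEq u] [DecidableEq m]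

lemma posDef_toBlocks₂₂ {M : Matrix (u ⊕ m) (u ⊕ m) ℝ} (hM : M.PosDef) :
    M.toBlocks₂₂.PosDef := by
  refine PosDef.of_dotProduct_mulVec_pos ?_ ?_
  · ext i j
    simpa [Matrix.toBlocks₂₂, Matrix.conjTranspose_apply] using hM.1.apply (Sum.inr i) (Sum.inr j)
  · intro x hx
    have hy : (Sum.elim 0 x : u ⊕ m → ℝ) ≠ 0 := by
      intro h
      exact hx (funext fun i => congrFun h (Sum.inr i))
    have := hM.dotProduct_mulVec_pos hy
    rw [star_trivial] at this ⊢
    convert this using 1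
    simp [dotProduct, Matrix.mulVec, Fintype.sum_sum_type, Matrix.toBlocks₂₂]

lemma herm_toBlocks₂₁ {M : Matrix (u ⊕ m) (u ⊕ m) ℝ} (hM : M.IsHermitian) :
    M.toBlocks₁₂ᴴ = M.toBlocks₂₁ := by
  ext i j
  simpa [Matrix.toBlocks₁₂, Matrix.toBlocks₂₁, Matrix.conjTranspose_apply] using
    hM.apply (Sum.inr i) (Sum.inl j)

end Blocks

section Step
variable {u m : Type*} [Fintype u] [Fintype m] [DecidableEq u] [DecidableEq m] [Unique u]

lemma oppenheim_step (A B : Matrix (u ⊕ m) (u ⊕ m) ℝ) (hA : A.PosDef) (hB : B.PosDef)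
    (IH : ∀ A' B' : Matrix m m ℝ, A'.PosDef → B'.PosDef →
      A'.det * ∏ i, B' i i ≤ (A' ⊙ B').det) :
    A.det * ∏ i, B i i ≤ (A ⊙ B).det := by
  classical
  set d : u := default
  -- Schur complement machinery for a PD matrix on u ⊕ m
  have main : ∀ (M : Matrix (u ⊕ m) (u ⊕ m) ℝ), M.PosDef →
      (M.toBlocks₂₂ - (M (Sum.inl d) (Sum.inl d))⁻¹ • (M.toBlocks₂₁ * M.toBlocks₁₂)).PosSemidef ∧
      M.det = M (Sum.inl d) (Sum.inl d) *
        (M.toBlocks₂₂ - (M (Sum.inl d) (Sum.inl d))⁻¹ • (M.toBlocks₂₁ * M.toBlocks₁₂)).det := by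
    intro M hM
    have h11 : M.toBlocks₁₁.PosDef := posDef_of_unique (by
      simpa [Matrix.toBlocks₁₁] using PosDef.diag_pos hM (Sum.inl d))
    have h11d : M.toBlocks₁₁ default default = M (Sum.inl d) (Sum.inl d) := rfl
    have h0 : M (Sum.inl d) (Sum.inl d) ≠ 0 := (PosDef.diag_pos hM _).ne'
    haveI : Invertible M.toBlocks₁₁ :=
      Matrix.invertibleOfIsUnitDet _ (isUnit_iff_ne_zero.mpr h11.det_pos.ne')
    have hinv : M.toBlocks₁₁⁻¹ = (M (Sum.inl d) (Sum.inl d))⁻¹ • (1 : Matrix u u ℝ) := by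
      rw [inv_of_unique (h11d ▸ h0), h11d]
    have hsc : M.toBlocks₂₁ * M.toBlocks₁₁⁻¹ * M.toBlocks₁₂
        = (M (Sum.inl d) (Sum.inl d))⁻¹ • (M.toBlocks₂₁ * M.toBlocks₁₂) := by
      rw [hinv, Matrix.mul_smul, Matrix.mul_one, Matrix.smul_mul]
    constructor
    · have hfb : Matrix.fromBlocks M.toBlocks₁₁ M.toBlocks₁₂ M.toBlocks₁₂ᴴ M.toBlocks₂₂
          = M := by rw [herm_toBlocks₂₁ hM.1, Matrix.fromBlocks_toBlocks]
      have := (Matrix.PosDef.fromBlocks₁₁ M.toBlocks₁₂ M.toBlocks₂₂ h11).mp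
        (hfb ▸ hM.posSemidef)
      rwa [herm_toBlocks₂₁ hM.1, hsc] at this
    · conv_lhs => rw [← Matrix.fromBlocks_toBlocks M]
      rw [Matrix.det_fromBlocks₁₁, Matrix.invOf_eq_nonsing_inv, hsc, Matrix.det_unique, h11d]
  obtain ⟨hSA_psd, hdetA⟩ := main A hA
  obtain ⟨hSB_psd, hdetB⟩ := main B hB
  have hCpd : (A ⊙ B).PosDef := hadamard_posDef hA hB
  obtain ⟨hSC_psd, hdetC⟩ := main (A ⊙ B) hCpd
  set a0 : ℝ := A (Sum.inl d) (Sum.inl d) with ha0def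
  set b0 : ℝ := B (Sum.inl d) (Sum.inl d) with hb0def
  have ha0 : 0 < a0 := PosDef.diag_pos hA _
  have hb0 : 0 < b0 := PosDef.diag_pos hB _
  set SA : Matrix m m ℝ := A.toBlocks₂₂ - a0⁻¹ • (A.toBlocks₂₁ * A.toBlocks₁₂) with hSAdef
  set SB : Matrix m m ℝ := B.toBlocks₂₂ - b0⁻¹ • (B.toBlocks₂₁ * B.toBlocks₁₂) with hSBdef
  set SC : Matrix m m ℝ :=
    (A ⊙ B).toBlocks₂₂ - ((A ⊙ B) (Sum.inl d) (Sum.inl d))⁻¹ •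
      ((A ⊙ B).toBlocks₂₁ * (A ⊙ B).toBlocks₁₂) with hSCdef
  have hc0 : (A ⊙ B) (Sum.inl d) (Sum.inl d) = a0 * b0 := rfl
  have hSApd : SA.PosDef := by
    apply posDef_of_det_ne_zero hSA_psd
    intro h
    have hpos := hA.det_pos
    rw [hdetA, h, mul_zero] at hpos
    exact lt_irrefl _ hpos
  have hB22pd : B.toBlocks₂₂.PosDef := posDef_toBlocks₂₂ hB
  -- the key decomposition
  have key : SC = SA ⊙ B.toBlocks₂₂ + (a0⁻¹ • (A.toBlocks₂₁ * A.toBlocks₁₂)) ⊙ SB := by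
    rw [hSCdef, hSAdef, hSBdef, hc0]
    ext i j
    simp only [Matrix.toBlocks₂₂, Matrix.toBlocks₂₁, Matrix.toBlocks₁₂, Matrix.sub_apply,
      Matrix.add_apply, Matrix.smul_apply, Matrix.hadamard_apply, Matrix.mul_apply,
      Matrix.of_apply, smul_eq_mul, Fintype.sum_unique]
    rw [mul_inv]
    ring
  have hP : ((a0⁻¹ • (A.toBlocks₂₁ * A.toBlocks₁₂)) ⊙ SB).PosSemidef := by
    apply hadamard_posSemidef _ hSB_psd
    apply posSemidef_smul _ (inv_nonneg.mpr ha0.le)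
    rw [← herm_toBlocks₂₁ hA.1]
    exact Matrix.posSemidef_conjTranspose_mul_self _
  have hprod : ∏ i, B i i = b0 * ∏ i : m, B.toBlocks₂₂ i i := by
    rw [Fintype.prod_sum_type]
    congr 1
    exact Fintype.prod_unique _
  calc A.det * ∏ i, B i i = (a0 * SA.det) * (b0 * ∏ i : m, B.toBlocks₂₂ i i) := by
        rw [hdetA, hprod]
  _ = (a0 * b0) * (SA.det * ∏ i : m, B.toBlocks₂₂ i i) := by ring
  _ ≤ (a0 * b0) * (SA ⊙ B.toBlocks₂₂).det := by
        apply mul_le_mul_of_nonneg_left (IH SA B.toBlocks₂₂ hSApd hB22pd)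
        positivity
  _ ≤ (a0 * b0) * SC.det := by
        apply mul_le_mul_of_nonneg_left _ (by positivity)
        rw [key]
        exact det_le_det_add (hadamard_posDef hSApd hB22pd).posSemidef hP
  _ = (A ⊙ B).det := by rw [hdetC, hc0]

end Step

namespace Opp

theorem oppenheim_aux (γ : Type*) [inst : Fintype γ] :
    ∀ [DecidableEq γ] (A B : Matrix γ γ ℝ), A.PosDef → B.PosDef →
      A.det * ∏ i, B i i ≤ (A ⊙ B).det := by
  apply @Fintype.induction_subsingleton_or_nontrivial
    (fun α _ => ∀ [DecidableEq α] (A B : Matrix α α ℝ), A.PosDef → B.PosDef →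
      A.det * ∏ i, B i i ≤ (A ⊙ B).det) γ inst
  · intro α _ _ _ A B hA hB
    rcases isEmpty_or_nonempty α with h | ⟨⟨a⟩⟩
    · simp [Matrix.det_isEmpty]
    · haveI : Unique α := ⟨⟨a⟩, fun b => Subsingleton.elim b a⟩
      rw [Matrix.det_unique, Matrix.det_unique, Fintype.prod_unique, Matrix.hadamard_apply]
  · intro α _ _ IH _ A B hA hB
    classical
    obtain ⟨a⟩ : Nonempty α := inferInstance
    haveI hu : Unique {x // x = a} := ⟨⟨⟨a, rfl⟩⟩, by rintro ⟨x, rfl⟩; rfl⟩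
    set e : {x // x = a} ⊕ {x // ¬ x = a} ≃ α := Equiv.sumCompl (· = a) with hedef
    have hcard : Fintype.card {x // ¬ x = a} < Fintype.card α :=
      Fintype.card_subtype_lt (x := a) (by simp)
    have hsub : ∀ (M : Matrix α α ℝ), M.PosDef → (M.submatrix e e).PosDef := by
      intro M hM
      apply posDef_of_det_ne_zero ((Matrix.posSemidef_submatrix_equiv e).mpr hM.posSemidef)
      rw [Matrix.det_submatrix_equiv_self]
      exact hM.det_pos.ne'
    have hstep := oppenheim_step (A.submatrix e e) (B.submatrix e e) (hsub A hA) (hsub B hB)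
      (fun A' B' hA' hB' => IH {x // ¬ x = a} hcard A' B' hA' hB')
    have h1 : (A.submatrix e e).det = A.det := Matrix.det_submatrix_equiv_self e A
    have h2 : ∏ i, (B.submatrix e e) i i = ∏ i, B i i := by
      simp only [Matrix.submatrix_apply]
      exact Equiv.prod_comp e (fun j => B j j)
    have h3 : A.submatrix e e ⊙ B.submatrix e e = (A ⊙ B).submatrix e e := by
      ext i j
      simp [Matrix.submatrix_apply, Matrix.hadamard_apply]
    rw [h1, h2, h3, Matrix.det_submatrix_equiv_self] at hstep
    exact hstep

theorem oppenheim {α : Type*} [Fintype α] [DecidableEq α] (A B : Matrix α α ℝ)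
    (hA : A.PosDef) (hB : B.PosDef) : A.det * ∏ i, B i i ≤ (A ⊙ B).det :=
  oppenheim_aux α A B hA hB

end Opp

end Tau

theorem statement_3 {V : Type*} [Fintype V] [DecidableEq V] (G : SimpleGraph V)
    (x y α : ℝ) (hx : x ∈ Set.Ioo (-1 : ℝ) 1) (hy : y ∈ Set.Ioo (-1 : ℝ) 1)
    (hα : α ∈ Set.Ioo (0 : ℝ) 1)
    (A₁ A₂ A₃ A₄ : Matrix V V ℝ)
    (h1 : IsMaxA G x A₁) (h2 : IsMaxA G y A₂)
    (h3 : IsMaxA G (α * x + (1 - α) * y) A₃)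
    (h4 : IsMaxA G (x * y) A₄) :
    A₃.det ≥ A₁.det ^ α * A₂.det ^ (1 - α) ∧ A₄.det ≥ A₁.det := by
  obtain ⟨⟨h1pd, h1diag, h1edge⟩, _⟩ := h1
  obtain ⟨⟨h2pd, h2diag, h2edge⟩, _⟩ := h2
  obtain ⟨_, h3max⟩ := h3
  obtain ⟨_, h4max⟩ := h4
  obtain ⟨hα0, hα1⟩ := hα
  constructor
  · -- log-concavity part
    set M : Matrix V V ℝ := α • A₁ + (1 - α) • A₂ with hMdef
    have hMpd : M.PosDef := (Tau.posDef_smul h1pd hα0).add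
      (Tau.posDef_smul h2pd (by linarith))
    have hMmem : memA G (α * x + (1 - α) * y) M := by
      refine ⟨hMpd, fun i => ?_, fun i j hij => ?_⟩
      · simp only [hMdef, Matrix.add_apply, Matrix.smul_apply, smul_eq_mul,
          h1diag i, h2diag i]
        ring
      · simp only [hMdef, Matrix.add_apply, Matrix.smul_apply, smul_eq_mul,
          h1edge i j hij, h2edge i j hij]
    have hdet : A₁.det ^ α * A₂.det ^ (1 - α) ≤ M.det :=
      Tau.det_convex_comb h1pd h2pd hα0.le hα1.le
    exact le_trans hdet (h3max M hMmem)
  · -- Oppenheim part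
    set M : Matrix V V ℝ := A₁ ⊙ A₂ with hMdef
    have hMpd : M.PosDef := Tau.hadamard_posDef h1pd h2pd
    have hMmem : memA G (x * y) M := by
      refine ⟨hMpd, fun i => ?_, fun i j hij => ?_⟩
      · simp [hMdef, Matrix.hadamard_apply, h1diag i, h2diag i]
      · simp [hMdef, Matrix.hadamard_apply, h1edge i j hij, h2edge i j hij]
    have hopp : A₁.det * ∏ i, A₂ i i ≤ M.det :=
      Tau.Opp.oppenheim A₁ A₂ h1pd h2pd
    have : ∏ i, A₂ i i = 1 := by
      rw [Finset.prod_congr rfl fun i _ => h2diag i, Finset.prod_const_one]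
    rw [this, mul_one] at hopp
    exact le_trans hopp (h4max M hMmem)
end

section
/- Let G = (V,E) be a finite simple graph and x ∈ (−1,1). Let B be any real symmetric positive definite V×V matrix such that B_{uv} = 0 whenever u ≠ v are non-adjacent, and such that B_{uu} = 1 − x·∑_{v ∈ N(u)} B_{uv} for every vertex u (where N(u) is the neighborhood of u). Then det B ≤ det B_G(x) = 1/τ(G,x), and equality holds if and only if B = B_G(x). -/
open Matrix Finset Real

lemma det_le_one_of_trace_eq {n : Type*} [Fintype n] [DecidableEq n]
    {C : Matrix n n ℝ} (hC : C.PosDef) (htr : C.trace = (Fintype.card n : ℝ)) :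
    C.det ≤ 1 ∧ (C.det = 1 → C = 1) := by
  have hH := hC.isHermitian
  have hdet : C.det = ∏ i, hH.eigenvalues i := by
    simpa using hH.det_eq_prod_eigenvalues
  have hU : (star (hH.eigenvectorUnitary : Matrix n n ℝ)) * (hH.eigenvectorUnitary : Matrix n n ℝ) = 1 :=
    Matrix.mem_unitaryGroup_iff'.mp (hH.eigenvectorUnitary).2
  have htr2 : C.trace = ∑ i, hH.eigenvalues i := by
    conv_lhs => rw [hH.spectral_theorem]
    rw [Unitary.conjStarAlgAut_apply, Matrix.trace_mul_cycle, hU, Matrix.one_mul, Matrix.trace_diagonal]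
    simp
  have hsum : ∑ i, hH.eigenvalues i = (Fintype.card n : ℝ) := by rw [← htr2, htr]
  have hpos : ∀ i, 0 < hH.eigenvalues i := hC.eigenvalues_pos
  have hle : ∀ i, hH.eigenvalues i ≤ Real.exp (hH.eigenvalues i - 1) := fun i => by
    linarith [Real.add_one_le_exp (hH.eigenvalues i - 1)]
  have hexp : ∏ i, Real.exp (hH.eigenvalues i - 1) = 1 := by
    rw [← Real.exp_sum]
    simp [Finset.sum_sub_distrib, hsum]
  constructor
  · calc C.det = ∏ i, hH.eigenvalues i := hdet
      _ ≤ ∏ i, Real.exp (hH.eigenvalues i - 1) :=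
        Finset.prod_le_prod (fun i _ => (hpos i).le) (fun i _ => hle i)
      _ = 1 := hexp
  · intro h1
    have hall : ∀ i, hH.eigenvalues i = 1 := by
      by_contra hc
      push_neg at hc
      obtain ⟨j, hj⟩ := hc
      have hjlt : hH.eigenvalues j < Real.exp (hH.eigenvalues j - 1) := by
        have := Real.add_one_lt_exp (x := hH.eigenvalues j - 1) (by intro h; apply hj; linarith)
        linarith
      have hstrict : C.det < 1 := by
        rw [hdet, ← hexp]
        exact Finset.prod_lt_prod (fun i _ => hpos i) (fun i _ => hle i)
          ⟨j, Finset.mem_univ j, hjlt⟩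
      linarith
    have hdiag : Matrix.diagonal (RCLike.ofReal ∘ hH.eigenvalues) = (1 : Matrix n n ℝ) := by
      rw [show (RCLike.ofReal ∘ hH.eigenvalues : n → ℝ) = fun _ => (1 : ℝ) from
        funext fun i => by simp [hall i], Matrix.diagonal_one]
    have hspec := hH.spectral_theorem
    rw [hdiag, Unitary.conjStarAlgAut_apply, Matrix.mul_one] at hspec
    rw [hspec]
    exact Matrix.mem_unitaryGroup_iff.mp (hH.eigenvectorUnitary).2

theorem statement_4 {V : Type*} [Fintype V] [DecidableEq V] (G : SimpleGraph V)
    [DecidableRel G.Adj]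
    (x : ℝ) (hx : x ∈ Set.Ioo (-1 : ℝ) 1)
    (A : Matrix V V ℝ) (hA : IsMaxA G x A)
    (B : Matrix V V ℝ) (hB : B.PosDef)
    (hB0 : ∀ u v : V, u ≠ v → ¬ G.Adj u v → B u v = 0)
    (hBd : ∀ u : V, B u u = 1 - x * ∑ v ∈ G.neighborFinset u, B u v) :
    B.det ≤ A⁻¹.det ∧ A⁻¹.det = 1 / A.det ∧ (B.det = A⁻¹.det ↔ B = A⁻¹) := by
  obtain ⟨⟨hApd, hAdiag, hAedge⟩, -⟩ := hA
  obtain ⟨S, hS, hSS⟩ : ∃ S : Matrix V V ℝ, S.PosSemidef ∧ S * S = A := by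
    open scoped MatrixOrder in
    exact ⟨CFC.sqrt A, (CFC.sqrt_nonneg A).posSemidef, CFC.sqrt_mul_sqrt_self A hApd.posSemidef.nonneg⟩
  have hSH : Sᴴ = S := hS.isHermitian
  have hdetA : 0 < A.det := hApd.det_pos
  have hdetS : S.det ≠ 0 := by
    intro h
    rw [← hSS, Matrix.det_mul, h, mul_zero] at hdetA
    exact lt_irrefl _ hdetA
  have hdetAinv : A⁻¹.det = 1 / A.det := by
    rw [Matrix.det_nonsing_inv, one_div, Ring.inverse_eq_inv]
  -- the conjugated matrix C = S * B * S
  set C := S * B * S with hCdef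
  have hCH : C.IsHermitian := by
    show Cᴴ = C
    rw [hCdef, Matrix.conjTranspose_mul, Matrix.conjTranspose_mul, hSH, hB.isHermitian.eq,
      Matrix.mul_assoc]
  have hSinj : Function.Injective S.mulVec :=
    Matrix.mulVec_injective_iff_isUnit.mpr ((Matrix.isUnit_iff_isUnit_det S).mpr hdetS.isUnit)
  have hCpd : C.PosDef := by
    refine Matrix.PosDef.of_dotProduct_mulVec_pos hCH fun y hy => ?_
    have hy' : S *ᵥ y ≠ 0 := fun h => hy (hSinj (h.trans (S.mulVec_zero).symm))
    have hkey : star y ⬝ᵥ (C *ᵥ y) = star (S *ᵥ y) ⬝ᵥ (B *ᵥ (S *ᵥ y)) := by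
      rw [Matrix.star_mulVec, hSH, Matrix.mulVec_mulVec, ← Matrix.dotProduct_mulVec,
        Matrix.mulVec_mulVec, hCdef, Matrix.mul_assoc]
    rw [hkey]
    exact hB.dotProduct_mulVec_pos hy'
  have hdetC : C.det = A.det * B.det := by
    rw [hCdef, Matrix.det_mul, Matrix.det_mul, ← hSS, Matrix.det_mul]
    ring
  -- trace of B * A is the number of vertices
  have hrow : ∀ u : V, ∑ v, B u v * A v u = 1 := by
    intro u
    have hstep : ∀ v, B u v * A v u =
        (if v = u then 1 - x * ∑ w ∈ G.neighborFinset u, B u w else 0) +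
        (if v ∈ G.neighborFinset u then x * B u v else 0) := by
      intro v
      by_cases hvu : v = u
      · subst hvu
        simp [hAdiag, hBd v, SimpleGraph.irrefl]
      · by_cases hadj : G.Adj u v
        · have : A v u = x := hAedge v u hadj.symm
          simp [hvu, this, SimpleGraph.mem_neighborFinset, hadj, mul_comm]
        · have hb : B u v = 0 := hB0 u v (fun h => hvu h.symm) hadj
          simp [hvu, hb, SimpleGraph.mem_neighborFinset, hadj]
    rw [Finset.sum_congr rfl (fun v _ => hstep v), Finset.sum_add_distrib]
    rw [Finset.sum_ite_eq' Finset.univ u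
      (fun _ => 1 - x * ∑ w ∈ G.neighborFinset u, B u w)]
    rw [Finset.sum_ite_mem, Finset.univ_inter, ← Finset.mul_sum]
    simp
  have htrC : C.trace = (Fintype.card V : ℝ) := by
    have h1 : C.trace = (B * A).trace := by
      rw [hCdef, Matrix.trace_mul_cycle, hSS, Matrix.trace_mul_comm]
    rw [h1, Matrix.trace]
    simp only [Matrix.diag_apply, Matrix.mul_apply]
    rw [Finset.sum_congr rfl (fun u _ => hrow u)]
    simp
  obtain ⟨hle, heq⟩ := det_le_one_of_trace_eq hCpd htrC
  have hBdet : B.det ≤ A⁻¹.det := by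
    rw [hdetAinv]
    rw [hdetC] at hle
    rw [le_div_iff₀ hdetA]
    linarith [mul_comm A.det B.det]
  refine ⟨hBdet, hdetAinv, ?_, fun h => by rw [h]⟩
  · intro h
    have hC1 : C = 1 := by
      apply heq
      rw [hdetC, h, hdetAinv]
      field_simp
    have hB1 : B = S⁻¹ * S⁻¹ := by
      have h2 : S⁻¹ * (S * B * S) * S⁻¹ = S⁻¹ * 1 * S⁻¹ := by rw [← hCdef, hC1]
      rw [Matrix.mul_one] at h2
      rw [← h2, Matrix.mul_assoc, Matrix.mul_assoc, Matrix.mul_nonsing_inv _ hdetS.isUnit,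
        Matrix.mul_one, ← Matrix.mul_assoc, Matrix.nonsing_inv_mul _ hdetS.isUnit, Matrix.one_mul]
    rw [hB1, ← Matrix.mul_inv_rev, hSS]
end

section
/- Let G = (V,E) be a finite simple graph. For every x ∈ (−1,1), the function t ↦ τ(G,t) is differentiable at x and its derivative τ'(G,x) satisfies −τ'(G,x)/τ(G,x) = 2·∑_{{u,v} ∈ E} y_G(u,v), where the sum runs over the edges of G. -/
open Matrix Finset Real

section Statement7AuxSection

open Polynomial

set_option linter.unusedSectionVars false
set_option maxHeartbeats 1600000

namespace Statement7Aux
variable {V : Type*} [Fintype V] [DecidableEq V]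

lemma abs_quadform_le (C : Matrix V V ℝ) (x : V → ℝ) :
    |x ⬝ᵥ C *ᵥ x| ≤ (∑ i, ∑ j, |C i j|) * (x ⬝ᵥ x) := by
  have hxx : ∀ i j : V, |x i * x j| ≤ x ⬝ᵥ x := by
    intro i j
    have h1 : x i * x i ≤ x ⬝ᵥ x := by
      simpa [dotProduct] using Finset.single_le_sum (f := fun k => x k * x k)
        (fun k _ => mul_self_nonneg _) (Finset.mem_univ i)
    have h2 : x j * x j ≤ x ⬝ᵥ x := by
      simpa [dotProduct] using Finset.single_le_sum (f := fun k => x k * x k)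
        (fun k _ => mul_self_nonneg _) (Finset.mem_univ j)
    rw [abs_mul]
    nlinarith [abs_nonneg (x i), abs_nonneg (x j), abs_mul_abs_self (x i),
      abs_mul_abs_self (x j), sq_nonneg (|x i| - |x j|)]
  have heq : x ⬝ᵥ C *ᵥ x = ∑ i, ∑ j, C i j * (x i * x j) := by
    simp only [dotProduct, mulVec, Finset.mul_sum]
    exact Finset.sum_congr rfl fun i _ => Finset.sum_congr rfl fun j _ => by ring
  rw [heq]
  calc |∑ i, ∑ j, C i j * (x i * x j)| ≤ ∑ i, ∑ j, |C i j * (x i * x j)| := by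
        refine (Finset.abs_sum_le_sum_abs _ _).trans ?_
        exact Finset.sum_le_sum fun i _ => Finset.abs_sum_le_sum_abs _ _
    _ ≤ ∑ i, ∑ j, |C i j| * (x ⬝ᵥ x) := by
        refine Finset.sum_le_sum fun i _ => Finset.sum_le_sum fun j _ => ?_
        rw [abs_mul]
        exact mul_le_mul_of_nonneg_left (hxx i j) (abs_nonneg _)
    _ = (∑ i, ∑ j, |C i j|) * (x ⬝ᵥ x) := by rw [Finset.sum_mul]; exact Finset.sum_congr rfl fun i _ => (Finset.sum_mul _ _ _).symm

lemma quadform_symm {A : Matrix V V ℝ} (hA : A.IsHermitian) (x y : V → ℝ) :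
    y ⬝ᵥ A *ᵥ x = x ⬝ᵥ A *ᵥ y := by
  have hsymm : ∀ u w, A u w = A w u := fun u w => by
    simpa using (congrFun (congrFun hA.eq u) w).symm
  have h1 : y ⬝ᵥ A *ᵥ x = ∑ i, ∑ j, A i j * (y i * x j) := by
    simp only [dotProduct, mulVec, Finset.mul_sum]
    exact Finset.sum_congr rfl fun i _ => Finset.sum_congr rfl fun j _ => by ring
  have h2 : x ⬝ᵥ A *ᵥ y = ∑ i, ∑ j, A i j * (x i * y j) := by
    simp only [dotProduct, mulVec, Finset.mul_sum]
    exact Finset.sum_congr rfl fun i _ => Finset.sum_congr rfl fun j _ => by ring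
  rw [h1, h2, Finset.sum_comm]
  exact Finset.sum_congr rfl fun i _ => Finset.sum_congr rfl fun j _ => by
    rw [hsymm i j]; ring

lemma cauchy_schwarz {A : Matrix V V ℝ} (hA : A.PosSemidef) (x y : V → ℝ) :
    (x ⬝ᵥ A *ᵥ y) ^ 2 ≤ (x ⬝ᵥ A *ᵥ x) * (y ⬝ᵥ A *ᵥ y) := by
  have key : ∀ t : ℝ, 0 ≤ (y ⬝ᵥ A *ᵥ y) * (t * t) + (2 * (x ⬝ᵥ A *ᵥ y)) * t + (x ⬝ᵥ A *ᵥ x) := by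
    intro t
    have h0 : (0:ℝ) ≤ (x + t • y) ⬝ᵥ A *ᵥ (x + t • y) := by
      simpa using hA.dotProduct_mulVec_nonneg (x + t • y)
    have hexp : (x + t • y) ⬝ᵥ A *ᵥ (x + t • y)
        = (y ⬝ᵥ A *ᵥ y) * (t * t) + (2 * (x ⬝ᵥ A *ᵥ y)) * t + (x ⬝ᵥ A *ᵥ x) := by
      rw [add_dotProduct, mulVec_add, dotProduct_add, dotProduct_add,
        mulVec_smul, smul_dotProduct, dotProduct_smul, smul_dotProduct, dotProduct_smul]
      rw [quadform_symm hA.1 x y]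
      simp [smul_eq_mul]; ring
    linarith [hexp ▸ h0]
  have hd := discrim_le_zero key
  rw [discrim] at hd
  nlinarith [hd]


lemma dot_self_nonneg (x : V → ℝ) : 0 ≤ x ⬝ᵥ x :=
  Finset.sum_nonneg fun i _ => mul_self_nonneg _

lemma exists_coercive {A : Matrix V V ℝ} (hA : A.PosDef) :
    ∃ c > 0, ∀ x : V → ℝ, c * (x ⬝ᵥ x) ≤ x ⬝ᵥ A *ᵥ x := by
  rcases isEmpty_or_nonempty V with hV | hV
  · exact ⟨1, one_pos, fun x => by simp [dotProduct]⟩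
  have hAinv : A⁻¹.PosDef := hA.inv
  set K : ℝ := ∑ i, ∑ j, |A⁻¹ i j| with hKdef
  have hK : 0 < K := by
    obtain ⟨i0⟩ := hV
    have hdiag : 0 < A⁻¹ i0 i0 := by
      have h := hAinv.dotProduct_mulVec_pos (x := Pi.single i0 1) (by simp [Pi.single_eq_same, Function.ne_iff])
      simpa [dotProduct, mulVec, Pi.single_apply, Finset.mul_sum] using h
    have h1 : |A⁻¹ i0 i0| ≤ ∑ j, |A⁻¹ i0 j| :=
      Finset.single_le_sum (f := fun j => |A⁻¹ i0 j|) (fun j _ => abs_nonneg _) (Finset.mem_univ i0)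
    have h2 : ∑ j, |A⁻¹ i0 j| ≤ K :=
      Finset.single_le_sum (f := fun i => ∑ j, |A⁻¹ i j|)
        (fun i _ => Finset.sum_nonneg fun j _ => abs_nonneg _) (Finset.mem_univ i0)
    calc (0:ℝ) < A⁻¹ i0 i0 := hdiag
      _ ≤ |A⁻¹ i0 i0| := le_abs_self _
      _ ≤ K := h1.trans h2
  refine ⟨K⁻¹, inv_pos.mpr hK, fun x => ?_⟩
  by_cases hx : x = 0
  · simp [hx]
  have hxx : 0 < x ⬝ᵥ x :=
    lt_of_le_of_ne (dot_self_nonneg x) (fun h => hx (dotProduct_self_eq_zero.mp h.symm))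
  have hinv : A *ᵥ (A⁻¹ *ᵥ x) = x := by
    rw [mulVec_mulVec, Matrix.mul_nonsing_inv A (isUnit_iff_ne_zero.mpr hA.det_pos.ne'), one_mulVec]
  have hcs := cauchy_schwarz hA.posSemidef x (A⁻¹ *ᵥ x)
  rw [hinv] at hcs
  rw [dotProduct_comm (A⁻¹ *ᵥ x) x] at hcs
  have hb : x ⬝ᵥ A⁻¹ *ᵥ x ≤ K * (x ⬝ᵥ x) :=
    (le_abs_self _).trans (abs_quadform_le A⁻¹ x)
  have hAx : 0 ≤ x ⬝ᵥ A *ᵥ x := le_of_lt (by simpa using hA.dotProduct_mulVec_pos hx)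
  -- (x⬝x)^2 ≤ (x⬝Ax) * (K (x⬝x))
  have h3 : (x ⬝ᵥ x) ^ 2 ≤ (x ⬝ᵥ A *ᵥ x) * (K * (x ⬝ᵥ x)) := by
    refine hcs.trans (mul_le_mul_of_nonneg_left hb hAx)
  rw [inv_mul_le_iff₀ hK]
  nlinarith [h3, hxx]

lemma posdef_perturb {A : Matrix V V ℝ} (hA : A.PosDef) (S : Matrix V V ℝ) (hS : S.IsHermitian) :
    ∃ ε > 0, ∀ δ : ℝ, |δ| < ε → (A + δ • S).PosDef := by
  obtain ⟨c, hc, hcoer⟩ := exists_coercive hA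
  set KS : ℝ := ∑ i, ∑ j, |S i j| with hKS
  have hKS0 : 0 ≤ KS := Finset.sum_nonneg fun i _ => Finset.sum_nonneg fun j _ => abs_nonneg _
  refine ⟨c / (KS + 1), by positivity, fun δ hδ => ?_⟩
  refine Matrix.PosDef.of_dotProduct_mulVec_pos ?_ ?_
  · have : (A + δ • S)ᴴ = A + δ • S := by
      rw [conjTranspose_add, conjTranspose_smul, hA.1.eq, hS.eq, star_trivial]
    exact this
  · intro x hx
    have hxx : 0 < x ⬝ᵥ x :=
      lt_of_le_of_ne (dot_self_nonneg x) (fun h => hx (dotProduct_self_eq_zero.mp h.symm))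
    have hq : |x ⬝ᵥ S *ᵥ x| ≤ KS * (x ⬝ᵥ x) := abs_quadform_le S x
    have hexp : x ⬝ᵥ (A + δ • S) *ᵥ x = x ⬝ᵥ A *ᵥ x + δ * (x ⬝ᵥ S *ᵥ x) := by
      rw [add_mulVec, dotProduct_add, smul_mulVec, dotProduct_smul, smul_eq_mul]
    have h1 : c * (x ⬝ᵥ x) ≤ x ⬝ᵥ A *ᵥ x := hcoer x
    have h2 : |δ * (x ⬝ᵥ S *ᵥ x)| ≤ |δ| * (KS * (x ⬝ᵥ x)) := by
      rw [abs_mul]; exact mul_le_mul_of_nonneg_left hq (abs_nonneg _)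
    have h3 : |δ| * KS < c := by
      rcases eq_or_lt_of_le hKS0 with h | h
      · rw [← h]; simpa using hc
      · calc |δ| * KS < (c / (KS + 1)) * KS := by
              apply mul_lt_mul_of_pos_right hδ h
          _ < c := by rw [div_mul_eq_mul_div, div_lt_iff₀ (by linarith)]; nlinarith
    have h4 : δ * (x ⬝ᵥ S *ᵥ x) ≥ -(|δ| * (KS * (x ⬝ᵥ x))) := neg_le_of_abs_le h2
    have : 0 < x ⬝ᵥ (A + δ • S) *ᵥ x := by
      rw [hexp]
      nlinarith [abs_nonneg δ]
    simpa using this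


lemma det_perturb {A : Matrix V V ℝ} (hA : A.PosDef) (S : Matrix V V ℝ) (δ : ℝ) :
    (A + δ • S).det = A.det * (1 + trace (A⁻¹ * S) * δ +
      (Matrix.det (1 + (X : ℝ[X]) • (A⁻¹ * S).map Polynomial.C)).divX.divX.eval δ * δ ^ 2) := by
  have hu : IsUnit A.det := isUnit_iff_ne_zero.mpr hA.det_pos.ne'
  have hfac : A + δ • S = A * (1 + δ • (A⁻¹ * S)) := by
    rw [mul_add, mul_one, mul_smul_comm, ← Matrix.mul_assoc, Matrix.mul_nonsing_inv A hu, Matrix.one_mul]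
  rw [hfac, det_mul, Matrix.det_one_add_smul δ]

lemma hasDerivAt_detp (a b : ℝ) (q : ℝ[X]) :
    HasDerivAt (fun δ : ℝ => a * (1 + b * δ + q.eval δ * δ ^ 2)) (a * b) 0 := by
  have h1 : HasDerivAt (fun δ : ℝ => q.eval δ * δ ^ 2)
      (q.derivative.eval 0 * 0 ^ 2 + q.eval 0 * (↑2 * 0 ^ 1)) 0 :=
    (q.hasDerivAt 0).mul (hasDerivAt_pow 2 0)
  have h2 : HasDerivAt (fun δ : ℝ => 1 + b * δ) b 0 := by
    simpa using (hasDerivAt_id (0:ℝ)).const_mul b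
  have h3 := (h2.add h1).const_mul a
  exact h3.congr_deriv (by simp)

lemma trace_eq_sum_eigenvalues {P : Matrix V V ℝ} (hP : P.IsHermitian) :
    trace P = ∑ i, hP.eigenvalues i := by
  conv_lhs => rw [hP.spectral_theorem, Unitary.conjStarAlgAut_apply]
  rw [Matrix.trace_mul_comm, ← Matrix.mul_assoc]
  rw [Unitary.coe_star_mul_self, Matrix.one_mul, trace_diagonal]
  simp

open scoped MatrixOrder in
lemma det_le_exp {A M : Matrix V V ℝ} (hA : A.PosDef) (hM : M.PosDef) :
    M.det ≤ A.det * Real.exp (trace (A⁻¹ * M) - Fintype.card V) := by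
  have hAinv : A⁻¹.PosDef := hA.inv
  set R := CFC.sqrt A⁻¹ with hR
  have hRps : R.PosSemidef := (CFC.sqrt_nonneg A⁻¹).posSemidef
  have hRR : R * R = A⁻¹ := CFC.sqrt_mul_sqrt_self A⁻¹ hAinv.posSemidef.nonneg
  set P := R * M * R with hPdef
  have hP : P.PosSemidef := by
    have := hM.posSemidef.mul_mul_conjTranspose_same R
    rwa [hRps.1.eq] at this
  have hdetP : P.det = A⁻¹.det * M.det := by
    rw [hPdef, det_mul, det_mul, ← hRR, det_mul]; ring
  have htrP : trace P = trace (A⁻¹ * M) := by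
    rw [hPdef, Matrix.trace_mul_comm, ← Matrix.mul_assoc, hRR]
  set lam := hP.1.eigenvalues with hlam
  have hdet2 : P.det = ∏ i, lam i := by
    simpa using hP.1.det_eq_prod_eigenvalues
  have htr2 : trace P = ∑ i, lam i := trace_eq_sum_eigenvalues hP.1
  have hprod : ∏ i, lam i ≤ ∏ i, Real.exp (lam i - 1) := by
    refine Finset.prod_le_prod (fun i _ => hP.eigenvalues_nonneg i) (fun i _ => ?_)
    have := Real.add_one_le_exp (lam i - 1)
    linarith
  have hexp : ∏ i, Real.exp (lam i - 1) = Real.exp (trace (A⁻¹ * M) - Fintype.card V) := by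
    rw [← Real.exp_sum]
    congr 1
    rw [Finset.sum_sub_distrib, ← htr2, htrP]
    simp [Finset.card_univ]
  have hkey : A⁻¹.det * M.det ≤ Real.exp (trace (A⁻¹ * M) - Fintype.card V) := by
    rw [← hdetP, hdet2]; rw [← hexp]; exact hprod
  have hdAinv : A⁻¹.det = (A.det)⁻¹ := by
    rw [det_nonsing_inv, Ring.inverse_eq_inv]
  have hdA : 0 < A.det := hA.det_pos
  calc M.det = A.det * (A⁻¹.det * M.det) := by
        rw [hdAinv]; field_simp
    _ ≤ A.det * Real.exp (trace (A⁻¹ * M) - Fintype.card V) :=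
        mul_le_mul_of_nonneg_left hkey hdA.le


/-- first-order optimality: off-pattern entries of the inverse vanish -/
lemma inv_apply_eq_zero_of_not_adj (G : SimpleGraph V) [DecidableRel G.Adj] {x : ℝ}
    {A : Matrix V V ℝ} (hA : IsMaxA G x A) {u v : V} (hne : u ≠ v) (hnadj : ¬ G.Adj u v) :
    A⁻¹ u v = 0 := by
  obtain ⟨⟨hpd, hdiag, hedge⟩, hmax⟩ := hA
  set S : Matrix V V ℝ := Matrix.of fun i j =>
    (if i = u ∧ j = v then (1:ℝ) else 0) + (if i = v ∧ j = u then (1:ℝ) else 0) with hSdef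
  have hS : S.IsHermitian := by
    ext i j
    simp only [conjTranspose_apply, of_apply, star_trivial, hSdef]
    by_cases h1 : i = u <;> by_cases h2 : i = v <;> by_cases h3 : j = u <;> by_cases h4 : j = v <;>
      simp_all
  obtain ⟨ε, hε, hpert⟩ := posdef_perturb hpd S hS
  set q : ℝ[X] := (Matrix.det (1 + (X : ℝ[X]) • (A⁻¹ * S).map Polynomial.C)).divX.divX with hq
  set f : ℝ → ℝ := fun δ => A.det * (1 + trace (A⁻¹ * S) * δ + q.eval δ * δ ^ 2) with hf
  have hfz : f 0 = A.det := by simp [hf]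
  have hmem : ∀ δ : ℝ, |δ| < ε → memA G x (A + δ • S) := by
    intro δ hδ
    refine ⟨hpert δ hδ, fun i => ?_, fun i j hij => ?_⟩
    · have hSii : S i i = 0 := by
        simp only [hSdef, of_apply]
        have h1 : ¬(i = u ∧ i = v) := fun ⟨h1, h2⟩ => hne (h1 ▸ h2 ▸ rfl)
        have h2 : ¬(i = v ∧ i = u) := fun ⟨h1, h2⟩ => hne (h2 ▸ h1 ▸ rfl)
        simp [h1, h2]
      simp [Matrix.add_apply, hSii, hdiag i]
    · have hSij : S i j = 0 := by
        simp only [hSdef, of_apply]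
        have h1 : ¬(i = u ∧ j = v) := fun ⟨h1, h2⟩ => hnadj (h1 ▸ h2 ▸ hij)
        have h2 : ¬(i = v ∧ j = u) := fun ⟨h1, h2⟩ => hnadj (h1 ▸ h2 ▸ hij.symm)
        simp [h1, h2]
      simp [Matrix.add_apply, hSij, hedge i j hij]
  have hlocmax : IsLocalMax f 0 := by
    filter_upwards [eventually_abs_sub_lt (0:ℝ) hε] with δ hδ
    rw [sub_zero] at hδ
    rw [hfz, hf]
    simp only
    rw [← det_perturb hpd S δ]
    exact hmax _ (hmem δ hδ)
  have hderiv : HasDerivAt f (A.det * trace (A⁻¹ * S)) 0 := hasDerivAt_detp _ _ q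
  have hzero : A.det * trace (A⁻¹ * S) = 0 := hlocmax.hasDerivAt_eq_zero hderiv
  have htr : trace (A⁻¹ * S) = 0 := by
    rcases mul_eq_zero.mp hzero with h | h
    · exact absurd h hpd.det_pos.ne'
    · exact h
  -- compute the trace
  have hcalc : trace (A⁻¹ * S) = A⁻¹ v u + A⁻¹ u v := by
    rw [Matrix.trace]
    simp only [Matrix.diag_apply, Matrix.mul_apply, hSdef, of_apply]
    rw [Finset.sum_comm]
    simp [mul_add, Finset.sum_add_distrib, Finset.mul_sum, ite_and, mul_ite]
  have hsymm : A⁻¹ v u = A⁻¹ u v := by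
    have h := congrFun (congrFun hpd.1.inv.eq u) v
    simpa using h
  rw [hcalc, hsymm] at htr
  linarith


lemma squeeze_hasDerivAt {f g h : ℝ → ℝ} {x d : ℝ}
    (hfg : ∀ᶠ t in nhds x, f t ≤ g t) (hgh : ∀ᶠ t in nhds x, g t ≤ h t)
    (hfx : f x = g x) (hhx : h x = g x)
    (hf : HasDerivAt f d x) (hh : HasDerivAt h d x) : HasDerivAt g d x := by
  rw [hasDerivAt_iff_isLittleO] at hf hh ⊢
  rw [Asymptotics.isLittleO_iff] at hf hh ⊢
  intro c hc
  filter_upwards [hf (half_pos hc), hh (half_pos hc), hfg, hgh] with t h1 h2 h3 h4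
  have key1 : f t - f x - (t - x) * d ≤ g t - g x - (t - x) * d := by
    rw [hfx]; linarith
  have key2 : g t - g x - (t - x) * d ≤ h t - h x - (t - x) * d := by
    rw [← hhx]; linarith
  rw [Real.norm_eq_abs] at *
  have b1 : |f t - f x - (t - x) * d| ≤ c / 2 * |t - x| := by simpa [smul_eq_mul] using h1
  have b2 : |h t - h x - (t - x) * d| ≤ c / 2 * |t - x| := by simpa [smul_eq_mul] using h2
  have : |g t - g x - (t - x) * d| ≤ c / 2 * |t - x| + c / 2 * |t - x| := by
    rw [abs_le]
    constructor
    · have := neg_abs_le (f t - f x - (t - x) * d)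
      nlinarith [abs_nonneg (t - x)]
    · have := le_abs_self (h t - h x - (t - x) * d)
      nlinarith [abs_nonneg (t - x)]
  calc |g t - g x - (t - x) • d| = |g t - g x - (t - x) * d| := by rw [smul_eq_mul]
    _ ≤ c / 2 * |t - x| + c / 2 * |t - x| := this
    _ = c * |t - x| := by ring

lemma trace_inv_mul_memA (G : SimpleGraph V) [DecidableRel G.Adj] {x t : ℝ}
    {A M : Matrix V V ℝ} (hA : IsMaxA G x A) (hM : memA G t M) :
    trace (A⁻¹ * M) = Fintype.card V
      + (t - x) * ∑ u, ∑ w, if G.Adj u w then A⁻¹ u w else 0 := by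
  have hopt : ∀ i j, i ≠ j → ¬ G.Adj i j → A⁻¹ i j = 0 :=
    fun i j hne hnadj => inv_apply_eq_zero_of_not_adj G hA hne hnadj
  obtain ⟨⟨hpd, hdiag, hedge⟩, _⟩ := hA
  obtain ⟨hMpd, hMdiag, hMedge⟩ := hM
  have hu : IsUnit A.det := isUnit_iff_ne_zero.mpr hpd.det_pos.ne'
  have hterm : ∀ i j, A⁻¹ i j * M j i
      = A⁻¹ i j * A j i + (if G.Adj i j then (t - x) * A⁻¹ i j else 0) := by
    intro i j
    by_cases hadj : G.Adj i j
    · rw [hMedge j i hadj.symm, hedge j i hadj.symm, if_pos hadj]; ring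
    · by_cases hij : i = j
      · subst hij
        rw [hMdiag i, hdiag i, if_neg hadj]; ring
      · rw [hopt i j hij hadj, if_neg hadj]; ring
  have h1 : trace (A⁻¹ * M) = ∑ i, ∑ j, A⁻¹ i j * M j i := by
    simp [Matrix.trace, Matrix.diag, Matrix.mul_apply]
  have h2 : trace (A⁻¹ * A) = (Fintype.card V : ℝ) := by
    rw [Matrix.nonsing_inv_mul A hu, Matrix.trace_one]
  have h3 : (∑ i, ∑ j, A⁻¹ i j * A j i) = trace (A⁻¹ * A) := by
    simp [Matrix.trace, Matrix.diag, Matrix.mul_apply]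
  rw [h1]
  calc ∑ i, ∑ j, A⁻¹ i j * M j i
      = ∑ i, ∑ j, (A⁻¹ i j * A j i + (if G.Adj i j then (t - x) * A⁻¹ i j else 0)) :=
        Finset.sum_congr rfl fun i _ => Finset.sum_congr rfl fun j _ => hterm i j
    _ = (∑ i, ∑ j, A⁻¹ i j * A j i)
        + ∑ i, ∑ j, (if G.Adj i j then (t - x) * A⁻¹ i j else 0) := by
        rw [← Finset.sum_add_distrib]
        exact Finset.sum_congr rfl fun i _ => Finset.sum_add_distrib
    _ = Fintype.card V + (t - x) * ∑ u, ∑ w, if G.Adj u w then A⁻¹ u w else 0 := by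
        rw [h3, h2]
        congr 1
        rw [Finset.mul_sum]
        refine Finset.sum_congr rfl fun i _ => ?_
        rw [Finset.mul_sum]
        refine Finset.sum_congr rfl fun j _ => ?_
        split <;> simp


end Statement7Aux

end Statement7AuxSection

open Statement7Aux in
set_option maxHeartbeats 1600000 in
theorem statement_7 {V : Type*} [Fintype V] [DecidableEq V] (G : SimpleGraph V) [DecidableRel G.Adj]
    (tau : ℝ → ℝ)
    (htau : ∀ t ∈ Set.Ioo (-1 : ℝ) 1,
      ∃ A : Matrix V V ℝ, IsMaxA G t A ∧ tau t = A.det)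
    (x : ℝ) (hx : x ∈ Set.Ioo (-1 : ℝ) 1)
    (A : Matrix V V ℝ) (hA : IsMaxA G x A) :
    ∃ d : ℝ, HasDerivAt tau d x ∧
      -(d / A.det) = ∑ u : V, ∑ w : V, if G.Adj u w then -(A⁻¹ u w) else 0 := by
  obtain ⟨hx1, hx2⟩ := hx
  have hAmem := hA.1
  obtain ⟨hpd, hdiag, hedge⟩ := hAmem
  have hdet : (0:ℝ) < A.det := hpd.det_pos
  set s : ℝ := ∑ u, ∑ w, if G.Adj u w then A⁻¹ u w else 0 with hs
  refine ⟨A.det * s, ?_, ?_⟩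
  · -- the derivative claim
    -- edge-indicator matrix
    set E : Matrix V V ℝ := Matrix.of fun i j => if G.Adj i j then (1:ℝ) else 0 with hE
    have hEherm : E.IsHermitian := by
      ext i j
      simp only [conjTranspose_apply, of_apply, star_trivial, hE]
      by_cases h : G.Adj i j
      · simp [h, h.symm]
      · have h' : ¬ G.Adj j i := fun hh => h hh.symm
        simp [h, h']
    have htrE : trace (A⁻¹ * E) = s := by
      rw [Matrix.trace, hs]
      simp only [Matrix.diag_apply, Matrix.mul_apply, hE, Matrix.of_apply, mul_ite, mul_one,
        mul_zero]
      refine Finset.sum_congr rfl fun i _ => Finset.sum_congr rfl fun j _ => ?_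
      by_cases h : G.Adj i j
      · simp [h, h.symm]
      · have h' : ¬ G.Adj j i := fun hh => h hh.symm
        simp [h, h']
    set q : Polynomial ℝ :=
      (Matrix.det (1 + (Polynomial.X : Polynomial ℝ) • (A⁻¹ * E).map Polynomial.C)).divX.divX
      with hq
    set l : ℝ → ℝ := fun t => A.det * (1 + s * (t - x) + q.eval (t - x) * (t - x) ^ 2) with hl
    set U : ℝ → ℝ := fun t => A.det * Real.exp (s * (t - x)) with hU
    have hldet : ∀ t : ℝ, (A + (t - x) • E).det = l t := by
      intro t
      rw [det_perturb hpd E (t - x), htrE, hl]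
    -- tau x = A.det
    have htaux : tau x = A.det := by
      obtain ⟨A', hA', htx⟩ := htau x ⟨hx1, hx2⟩
      have : A'.det = A.det := le_antisymm (hA.2 A' hA'.1) (hA'.2 A ⟨hpd, hdiag, hedge⟩)
      rw [htx, this]
    obtain ⟨ε₀, hε₀, hpert⟩ := posdef_perturb hpd E hEherm
    set ε : ℝ := min ε₀ (min (x + 1) (1 - x)) with hεdef
    have hεpos : 0 < ε := by
      refine lt_min hε₀ (lt_min (by linarith) (by linarith))
    have hIoo : ∀ t : ℝ, |t - x| < ε → t ∈ Set.Ioo (-1:ℝ) 1 := by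
      intro t ht
      have h1 := abs_lt.mp ht
      have h2 : ε ≤ x + 1 := (min_le_right _ _).trans (min_le_left _ _)
      have h3 : ε ≤ 1 - x := (min_le_right _ _).trans (min_le_right _ _)
      constructor <;> [linarith [h1.1]; linarith [h1.2]]
    have hmem : ∀ t : ℝ, |t - x| < ε → memA G t (A + (t - x) • E) := by
      intro t ht
      refine ⟨hpert (t - x) (ht.trans_le (min_le_left _ _)), fun i => ?_, fun i j hij => ?_⟩
      · have : E i i = 0 := by simp [hE]
        simp [Matrix.add_apply, this, hdiag i]
      · have : E i j = 1 := by simp [hE, hij]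
        simp [Matrix.add_apply, this, hedge i j hij]
    -- lower bound
    have hlower : ∀ᶠ t in nhds x, l t ≤ tau t := by
      filter_upwards [eventually_abs_sub_lt x hεpos] with t ht
      obtain ⟨A', hA', htx⟩ := htau t (hIoo t ht)
      rw [htx, ← hldet t]
      exact hA'.2 _ (hmem t ht)
    -- upper bound
    have hupper : ∀ᶠ t in nhds x, tau t ≤ U t := by
      filter_upwards [eventually_abs_sub_lt x hεpos] with t ht
      obtain ⟨A', hA', htx⟩ := htau t (hIoo t ht)
      have h1 := det_le_exp hpd hA'.1.1
      have h2 := trace_inv_mul_memA G hA hA'.1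
      rw [htx, hU]
      simp only
      rw [h2] at h1
      convert h1 using 3
      push_cast
      ring
    -- values agree at x
    have hlx : l x = tau x := by rw [htaux, hl]; simp
    have hUx : U x = tau x := by rw [htaux, hU]; simp
    -- derivatives of bounds
    have hderivl : HasDerivAt l (A.det * s) x := by
      have hF := hasDerivAt_detp A.det s q
      have hsub : HasDerivAt (fun t : ℝ => t - x) 1 x := (hasDerivAt_id x).sub_const x
      have := HasDerivAt.comp x (by simpa using hF) hsub
      rw [mul_one] at this
      exact this
    have hderivU : HasDerivAt U (A.det * s) x := by
      have hinner : HasDerivAt (fun t : ℝ => s * (t - x)) s x := by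
        simpa using ((hasDerivAt_id x).sub_const x).const_mul s
      have := (hinner.exp).const_mul A.det
      simpa using this
    exact squeeze_hasDerivAt hlower hupper hlx hUx hderivl hderivU
  · -- the formula
    have h1 : A.det * s / A.det = s := by
      field_simp
    rw [h1]
    have h2 : ∀ u w : V, (if G.Adj u w then -(A⁻¹ u w) else 0)
        = -(if G.Adj u w then A⁻¹ u w else 0) := by
      intro u w; split <;> simp
    simp only [h2, ← Finset.sum_neg_distrib, hs]
end

section
/- Let G = (V,E) be a finite simple graph and x ∈ [0,1). Suppose that every off-diagonal entry of B_G(x) is nonpositive (i.e., B_G(x) is an M-matrix), and suppose the edge {u,v} ∈ E is contained in a clique of G on r vertices. Then y_G(u,v) ≤ x/((1 − x)(1 + (r−1)x)). In particular, y_G(u,v) ≤ x/(1 − x²) for every edge {u,v} of G. -/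
open Matrix Finset Real

/-- The inverse of a positive definite matrix with nonpositive off-diagonal entries
(an M-matrix) is entrywise nonnegative. -/
lemma mmatrix_inv_nonneg {n : Type*} [Fintype n] [DecidableEq n] (M : Matrix n n ℝ)
    (hM : M.PosDef) (hoff : ∀ i j, i ≠ j → M i j ≤ 0) (i j : n) : 0 ≤ M⁻¹ i j := by
  classical
  have hdet : IsUnit M.det := isUnit_iff_ne_zero.mpr hM.det_pos.ne'
  have hMMinv : M * M⁻¹ = 1 := Matrix.mul_nonsing_inv M hdet
  set z : n → ℝ := fun k => M⁻¹ k j with hz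
  have hMz : ∀ k, (M *ᵥ z) k = if k = j then 1 else 0 := by
    intro k
    have h1 : (M *ᵥ z) k = (M * M⁻¹) k j := by
      simp [Matrix.mulVec, Matrix.mul_apply, dotProduct, hz]
    rw [h1, hMMinv, Matrix.one_apply]
  set p : n → ℝ := fun k => max (z k) 0 with hp
  set q : n → ℝ := fun k => max (-z k) 0 with hq
  have hpnn : ∀ k, 0 ≤ p k := fun k => le_max_right _ _
  have hqnn : ∀ k, 0 ≤ q k := fun k => le_max_right _ _
  have hzpq : ∀ k, z k = p k - q k := by
    intro k
    rcases le_total (z k) 0 with h | h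
    · simp [hp, hq, max_eq_right h, max_eq_left (neg_nonneg.mpr h)]
    · simp [hp, hq, max_eq_left h, max_eq_right (neg_nonpos.mpr h)]
  have hqp0 : ∀ k, q k * p k = 0 := by
    intro k
    rcases le_total (z k) 0 with h | h
    · simp [hp, max_eq_right h]
    · simp [hq, max_eq_right (neg_nonpos.mpr h)]
  -- q ⬝ᵥ M z = q j ≥ 0
  have hqMz : q ⬝ᵥ (M *ᵥ z) = q j := by
    simp only [dotProduct]
    rw [Finset.sum_congr rfl fun k _ => by rw [hMz k]]
    simp
  -- q ⬝ᵥ M p ≤ 0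
  have hqMp : q ⬝ᵥ (M *ᵥ p) ≤ 0 := by
    simp only [dotProduct, Matrix.mulVec]
    apply Finset.sum_nonpos
    intro k _
    rw [Finset.mul_sum]
    apply Finset.sum_nonpos
    intro l _
    rcases eq_or_ne k l with h | h
    · subst h
      rw [mul_comm (M k k) (p k), ← mul_assoc, hqp0 k, zero_mul]
    · have h1 : M k l ≤ 0 := hoff k l h
      have := mul_nonneg (hqnn k) (hpnn l)
      nlinarith
  -- M z = M p - M q
  have hzvec : z = p - q := funext fun k => by simpa [Pi.sub_apply] using hzpq k
  have hkey : q ⬝ᵥ (M *ᵥ q) ≤ 0 := by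
    have h1 : q ⬝ᵥ (M *ᵥ z) = q ⬝ᵥ (M *ᵥ p) - q ⬝ᵥ (M *ᵥ q) := by
      rw [hzvec, Matrix.mulVec_sub, dotProduct_sub]
    have h2 : 0 ≤ q j := hqnn j
    rw [hqMz] at h1
    linarith
  have hq0 : q = 0 := by
    by_contra hne
    have := hM.dotProduct_mulVec_pos hne
    have hstar : star q = q := by
      funext k; simp
    rw [hstar] at this
    linarith
  have : z i = p i := by rw [hzpq i, hq0]; simp
  rw [hz] at this
  calc (0:ℝ) ≤ p i := hpnn i
  _ = M⁻¹ i j := this.symm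

/-- Key inequality: if `A` is positive definite with unit diagonal, all entries equal to `x`
on a set `s` (off-diagonal), and `A⁻¹` has nonpositive off-diagonal entries, then for
distinct `u v ∈ s` we have `-(A⁻¹ u v) ≤ x / ((1-x)(1+(|s|-1)x))`. -/
lemma key_clique_bound {V : Type*} [Fintype V] [DecidableEq V] {x : ℝ}
    (hx0 : 0 ≤ x) (hx1 : x < 1) (A : Matrix V V ℝ) (hApd : A.PosDef)
    (hdiag : ∀ i, A i i = 1)
    (hMm : ∀ i j : V, i ≠ j → A⁻¹ i j ≤ 0)
    (s : Finset V) (hs : ∀ i ∈ s, ∀ j ∈ s, i ≠ j → A i j = x)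
    (u v : V) (hu : u ∈ s) (hv : v ∈ s) (huv : u ≠ v) :
    -(A⁻¹ u v) ≤ x / ((1 - x) * (1 + ((s.card : ℝ) - 1) * x)) := by
  classical
  set B : Matrix V V ℝ := A⁻¹ with hBdef
  have hAdet : IsUnit A.det := isUnit_iff_ne_zero.mpr hApd.det_pos.ne'
  have hAB : A * B = 1 := Matrix.mul_nonsing_inv A hAdet
  have hBpd : B.PosDef := hApd.inv
  have hBsymm : ∀ i j, B i j = B j i := by
    intro i j
    have h := hBpd.isHermitian
    have := congrFun (congrFun h i) j
    simpa [Matrix.conjTranspose_apply] using this.symm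
  -- the "block diagonal" matrix with identity on s and B off s
  set Bt : Matrix V V ℝ :=
    Matrix.of (fun i j => if i ∈ s ∨ j ∈ s then (if i = j then (1:ℝ) else 0) else B i j)
    with hBt
  have hBtsymm : ∀ i j, Bt i j = Bt j i := by
    intro i j
    rcases eq_or_ne i j with h | h
    · subst h; rfl
    · have h' : ¬ j = i := fun hh => h hh.symm
      by_cases hi : i ∈ s <;> by_cases hj : j ∈ s <;>
        simp [hBt, hi, hj, h, h', hBsymm i j]
  have hBtrow_mem : ∀ i ∈ s, ∀ j, Bt i j = if i = j then (1:ℝ) else 0 := by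
    intro i hi j
    simp [hBt, hi]
  have hBtrow_not : ∀ i, i ∉ s → ∀ j, Bt i j = if j ∈ s then 0 else B i j := by
    intro i hi j
    by_cases hj : j ∈ s
    · have : i ≠ j := fun h => hi (h ▸ hj)
      simp [hBt, hi, hj, this]
    · simp [hBt, hi, hj]
  -- Bt is positive definite
  have hBtpd : Bt.PosDef := by
    refine Matrix.PosDef.of_dotProduct_mulVec_pos ?_ ?_
    · ext i j
      simp only [Matrix.conjTranspose_apply, RCLike.star_def]
      simpa using hBtsymm j i
    · intro w hw
      have hstar : star w = w := by funext k; simp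
      set w2 : V → ℝ := fun k => if k ∈ s then 0 else w k with hw2
      have hrow : ∀ i, (Bt *ᵥ w) i = if i ∈ s then w i else (B *ᵥ w2) i := by
        intro i
        by_cases hi : i ∈ s
        · simp only [hi, if_pos, Matrix.mulVec, dotProduct]
          rw [Finset.sum_congr rfl fun j _ => by rw [hBtrow_mem i hi j]]
          simp
        · simp only [hi, if_neg, Matrix.mulVec, dotProduct, not_false_iff]
          apply Finset.sum_congr rfl
          intro j _
          rw [hBtrow_not i hi j]
          by_cases hj : j ∈ s <;> simp [hw2, hj]
      have hquad : w ⬝ᵥ (Bt *ᵥ w) = (∑ i ∈ s, w i ^ 2) + w2 ⬝ᵥ (B *ᵥ w2) := by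
        have h1 : w ⬝ᵥ (Bt *ᵥ w)
            = ∑ i, ((if i ∈ s then w i ^ 2 else 0) + (if i ∈ s then 0 else w i * (B *ᵥ w2) i)) := by
          simp only [dotProduct]
          apply Finset.sum_congr rfl
          intro i _
          rw [hrow i]
          by_cases hi : i ∈ s <;> simp [hi] <;> ring
        rw [h1, Finset.sum_add_distrib]
        congr 1
        · rw [Finset.sum_ite_mem, Finset.univ_inter]
        · have h2 : w2 ⬝ᵥ (B *ᵥ w2) = ∑ i, (if i ∈ s then 0 else w i * (B *ᵥ w2) i) := by
            simp only [dotProduct]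
            apply Finset.sum_congr rfl
            intro i _
            by_cases hi : i ∈ s <;> simp [hw2, hi]
          rw [h2]
      have hq1 : 0 ≤ ∑ i ∈ s, w i ^ 2 := Finset.sum_nonneg fun i _ => sq_nonneg _
      have hq2 : 0 ≤ w2 ⬝ᵥ (B *ᵥ w2) := by
        have h := hBpd.posSemidef.dotProduct_mulVec_nonneg w2
        have hstar2 : star w2 = w2 := by funext k; simp
        rwa [hstar2] at h
      obtain ⟨k, hk⟩ := Function.ne_iff.mp hw
      rw [hstar, hquad]
      by_cases hks : k ∈ s
      · have hpos : 0 < ∑ i ∈ s, w i ^ 2 :=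
          Finset.sum_pos' (fun i _ => sq_nonneg _) ⟨k, hks, lt_of_le_of_ne (sq_nonneg _) (Ne.symm (pow_ne_zero 2 hk))⟩
        linarith
      · have hw2ne : w2 ≠ 0 := by
          intro h0
          apply hk
          have := congrFun h0 k
          simpa [hw2, hks] using this
        have hpos : 0 < w2 ⬝ᵥ (B *ᵥ w2) := by
          have h := hBpd.dotProduct_mulVec_pos hw2ne
          have hstar2 : star w2 = w2 := by funext k; simp
          rwa [hstar2] at h
        linarith
  have hBtoff : ∀ i j, i ≠ j → Bt i j ≤ 0 := by
    intro i j h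
    by_cases hij : i ∈ s ∨ j ∈ s
    · simp [hBt, hij, h]
    · simp only [hBt, Matrix.of_apply, hij, if_neg, not_false_iff]
      exact hMm i j h
  set T : Matrix V V ℝ := Bt⁻¹ with hT
  have hTnn : ∀ i j, 0 ≤ T i j := mmatrix_inv_nonneg Bt hBtpd hBtoff
  have hBtdet : IsUnit Bt.det := isUnit_iff_ne_zero.mpr hBtpd.det_pos.ne'
  have hBtT : Bt * T = 1 := Matrix.mul_nonsing_inv Bt hBtdet
  have hTrow : ∀ i ∈ s, ∀ k, T i k = (1 : Matrix V V ℝ) i k := by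
    intro i hi k
    have h1 : (Bt * T) i k = T i k := by
      rw [Matrix.mul_apply]
      rw [Finset.sum_congr rfl fun j _ => by rw [hBtrow_mem i hi j]]
      simp
    rw [← h1, hBtT]
  set bv : V → ℝ := fun k => if k ∈ s then 0 else -(B k v) with hbv
  have hbvnn : ∀ k, 0 ≤ bv k := by
    intro k
    by_cases hk : k ∈ s
    · simp [hbv, hk]
    · have : k ≠ v := fun h => hk (h ▸ hv)
      simp only [hbv, hk, if_neg, not_false_iff]
      linarith [hMm k v this]
  set g : V → ℝ := T *ᵥ bv with hg
  have hgnn : ∀ k, 0 ≤ g k := by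
    intro k
    simp only [hg, Matrix.mulVec, dotProduct]
    exact Finset.sum_nonneg fun j _ => mul_nonneg (hTnn k j) (hbvnn j)
  have hgs : ∀ i ∈ s, g i = 0 := by
    intro i hi
    have h1 : g i = ((1 : Matrix V V ℝ) *ᵥ bv) i := by
      simp only [hg, Matrix.mulVec, dotProduct]
      exact Finset.sum_congr rfl fun k _ => by rw [hTrow i hi k]
    rw [h1, Matrix.one_mulVec]
    simp [hbv, hi]
  have hBg : ∀ i, i ∉ s → (B *ᵥ g) i = bv i := by
    intro i hi
    have h1 : (B *ᵥ g) i = (Bt *ᵥ g) i := by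
      simp only [Matrix.mulVec, dotProduct]
      apply Finset.sum_congr rfl
      intro j _
      by_cases hj : j ∈ s
      · rw [hgs j hj, mul_zero, mul_zero]
      · rw [hBtrow_not i hi j, if_neg hj]
    rw [h1]
    have h2 : Bt *ᵥ g = bv := by
      rw [hg, Matrix.mulVec_mulVec, hBtT, Matrix.one_mulVec]
    rw [h2]
  set ev : V → ℝ := fun k => if k = v then 1 else 0 with hev
  have hBev : ∀ i, (B *ᵥ ev) i = B i v := by
    intro i
    simp only [Matrix.mulVec, dotProduct, hev, mul_ite, mul_one, mul_zero]
    simp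
  set z : V → ℝ := B *ᵥ (ev + g) with hzdef
  have hzi : ∀ i, z i = B i v + (B *ᵥ g) i := by
    intro i
    rw [hzdef, Matrix.mulVec_add]
    simp [hBev i]
  have hz0 : ∀ i, i ∉ s → z i = 0 := by
    intro i hi
    rw [hzi, hBg i hi]
    simp [hbv, hi]
  have hzu : z u ≤ B u v := by
    rw [hzi]
    have h1 : (B *ᵥ g) u ≤ 0 := by
      simp only [Matrix.mulVec, dotProduct]
      apply Finset.sum_nonpos
      intro j _
      rcases eq_or_ne j u with h | h
      · subst h
        rw [hgs j hu, mul_zero]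
      · exact mul_nonpos_iff.mpr (Or.inr ⟨hMm u j (Ne.symm h), hgnn j⟩)
    linarith
  have hAz : A *ᵥ z = ev + g := by
    rw [hzdef, Matrix.mulVec_mulVec, hAB, Matrix.one_mulVec]
  have hAzs : ∀ i ∈ s, (A *ᵥ z) i = ev i := by
    intro i hi
    rw [hAz]
    simp [hgs i hi]
  set Z : ℝ := ∑ k ∈ s, z k with hZdef
  have hsys : ∀ i ∈ s, x * Z + (1 - x) * z i = ev i := by
    intro i hi
    have h1 : (A *ᵥ z) i = ∑ k ∈ s, A i k * z k := by
      simp only [Matrix.mulVec, dotProduct]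
      exact (Finset.sum_subset (Finset.subset_univ s)
        (fun k _ hk => by rw [hz0 k hk, mul_zero])).symm
    have h2 : ∑ k ∈ s, A i k * z k
        = ∑ k ∈ s, (x * z k + (if i = k then (1 - x) * z k else 0)) := by
      apply Finset.sum_congr rfl
      intro k hk
      rcases eq_or_ne i k with h | h
      · subst h
        rw [hdiag i]
        simp; ring
      · rw [hs i hi k hk h, if_neg h, add_zero]
    have h3 : ∑ k ∈ s, (x * z k + (if i = k then (1 - x) * z k else 0))
        = x * Z + (1 - x) * z i := by
      rw [Finset.sum_add_distrib, ← Finset.mul_sum, Finset.sum_ite_eq s i (fun k => (1-x) * z k)]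
      simp [hi, hZdef]
    rw [← hAzs i hi, h1, h2, h3]
  have hcard2 : (2:ℝ) ≤ (s.card : ℝ) := by
    have : 1 < s.card := Finset.one_lt_card.mpr ⟨u, hu, v, hv, huv⟩
    exact_mod_cast this
  have hden1 : 0 < 1 - x := by linarith
  have hden2 : 0 < 1 + ((s.card : ℝ) - 1) * x := by nlinarith
  have hZeq : Z * (1 + ((s.card : ℝ) - 1) * x) = 1 := by
    have h1 : ∑ i ∈ s, ev i = 1 := by
      simp only [hev]
      rw [Finset.sum_ite_eq' s v (fun _ => (1:ℝ))]
      simp [hv]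
    have h2 : ∑ i ∈ s, (x * Z + (1 - x) * z i) = 1 := by
      have h2' : ∑ i ∈ s, (x * Z + (1 - x) * z i) = ∑ i ∈ s, ev i :=
        Finset.sum_congr rfl fun i hi => hsys i hi
      rw [h2', h1]
    rw [Finset.sum_add_distrib, Finset.sum_const, ← Finset.mul_sum, ← hZdef,
      nsmul_eq_mul] at h2
    ring_nf
    ring_nf at h2
    linarith
  have hzueq : x * Z + (1 - x) * z u = 0 := by
    have := hsys u hu
    rwa [show ev u = 0 by simp [hev, huv]] at this
  -- conclude
  have hZval : Z = 1 / (1 + ((s.card : ℝ) - 1) * x) := by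
    field_simp at hZeq ⊢
    linarith
  have hzuval : z u = -(x / ((1 - x) * (1 + ((s.card : ℝ) - 1) * x))) := by
    rw [hZval] at hzueq
    field_simp at hzueq ⊢
    linarith
  have : -(B u v) ≤ -(z u) := by linarith [hzu]
  rw [hzuval] at this
  simpa using this

theorem statement_12 {V : Type*} [Fintype V] [DecidableEq V] (G : SimpleGraph V)
    (x : ℝ) (hx0 : 0 ≤ x) (hx1 : x < 1)
    (A : Matrix V V ℝ) (hA : IsMaxA G x A)
    (hM : ∀ u v : V, u ≠ v → A⁻¹ u v ≤ 0)
    (u v : V) (huv : G.Adj u v)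
    (r : ℕ) (s : Finset V) (hclique : G.IsClique s) (hcard : s.card = r)
    (hus : u ∈ s) (hvs : v ∈ s) :
    -(A⁻¹ u v) ≤ x / ((1 - x) * (1 + ((r : ℝ) - 1) * x)) ∧
    ∀ u' v' : V, G.Adj u' v' → -(A⁻¹ u' v') ≤ x / (1 - x ^ 2) := by
  obtain ⟨⟨hApd, hAdiag, hAedge⟩, -⟩ := hA
  constructor
  · subst hcard
    exact key_clique_bound hx0 hx1 A hApd hAdiag hM s
      (fun i hi j hj hij => hAedge i j (hclique hi hj hij)) u v hus hvs huv.ne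
  · intro u' v' h'
    have hne : u' ≠ v' := h'.ne
    have hpair : ∀ i ∈ ({u', v'} : Finset V), ∀ j ∈ ({u', v'} : Finset V),
        i ≠ j → A i j = x := by
      intro i hi j hj hij
      simp only [Finset.mem_insert, Finset.mem_singleton] at hi hj
      rcases hi with rfl | rfl <;> rcases hj with rfl | rfl
      · exact absurd rfl hij
      · exact hAedge i j h'
      · exact hAedge i j h'.symm
      · exact absurd rfl hij
    have hkey := key_clique_bound hx0 hx1 A hApd hAdiag hM ({u', v'} : Finset V)
      hpair u' v' (Finset.mem_insert_self _ _)
      (Finset.mem_insert_of_mem (Finset.mem_singleton_self _)) hne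
    rw [Finset.card_pair hne] at hkey
    have heq : ((2:ℕ):ℝ) - 1 = 1 := by norm_num
    calc -(A⁻¹ u' v') ≤ x / ((1 - x) * (1 + (((2:ℕ):ℝ) - 1) * x)) := hkey
    _ = x / (1 - x ^ 2) := by rw [heq]; ring_nf
end

section
/- Let G = (V,E) be a finite simple vertex-transitive graph (its automorphism group acts transitively on V) and let x ∈ (0,1). Then y_G(u,v) > 0 for every edge {u,v} ∈ E, and z_G(u,v) < x for every pair of distinct non-adjacent vertices u, v. -/
open Matrix Finset Real

section Infra

variable {V : Type*} [Fintype V] [DecidableEq V]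

open scoped MatrixOrder

lemma posDef_of_psd_det_pos {M : Matrix V V ℝ} (h : M.PosSemidef) (hd : 0 < M.det) :
    M.PosDef := by
  refine Matrix.PosDef.of_dotProduct_mulVec_pos h.1 (fun z hz => ?_)
  rcases lt_or_eq_of_le (h.dotProduct_mulVec_nonneg z) with hlt | heq
  · exact hlt
  · exfalso
    have hz0 : M *ᵥ z = 0 := (h.dotProduct_mulVec_zero_iff z).mp heq.symm
    have : (M⁻¹ * M) *ᵥ z = 0 := by rw [← Matrix.mulVec_mulVec, hz0, Matrix.mulVec_zero]
    rw [Matrix.nonsing_inv_mul M (isUnit_iff_ne_zero.mpr hd.ne'), Matrix.one_mulVec] at this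
    exact hz this

lemma trace_eq_sum_eigenvalues {A : Matrix V V ℝ} (hA : A.IsHermitian) :
    A.trace = ∑ i, hA.eigenvalues i := by
  conv_lhs => rw [hA.spectral_theorem, Unitary.conjStarAlgAut_apply]
  rw [Matrix.trace_mul_cycle]
  have hU : star (hA.eigenvectorUnitary : Matrix V V ℝ) * (hA.eigenvectorUnitary : Matrix V V ℝ) = 1 := by
    simpa using (Matrix.mem_unitaryGroup_iff'.mp (hA.eigenvectorUnitary).2)
  rw [hU, Matrix.one_mul, Matrix.trace_diagonal]
  simp

lemma core_ineq {M B : Matrix V V ℝ} (hM : M.PosDef) (hB : B.PosDef) :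
    Real.log M.det + Real.log B.det ≤ (B * M).trace - Fintype.card V ∧
      (Real.log M.det + Real.log B.det = (B * M).trace - Fintype.card V → B * M = 1) := by
  classical
  have hMs := hM.posSemidef
  set S := CFC.sqrt M with hSdef
  have hS : S.PosSemidef := (CFC.sqrt_nonneg M).posSemidef
  have hSS : S * S = M := CFC.sqrt_mul_sqrt_self M hMs.nonneg
  have hdetS : S.det * S.det = M.det := by rw [← Matrix.det_mul, hSS]
  have hSdet0 : S.det ≠ 0 := by
    intro h0; rw [h0, mul_zero] at hdetS; exact hM.det_pos.ne hdetS
  set C := S * B * S with hCdef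
  have hCh : C.IsHermitian := by
    have : Sᴴ = S := hS.1
    unfold C
    unfold Matrix.IsHermitian
    rw [Matrix.conjTranspose_mul, Matrix.conjTranspose_mul, this, hB.1, ← Matrix.mul_assoc]
  have hCpsd : C.PosSemidef := by
    have := hB.posSemidef.mul_mul_conjTranspose_same S
    rwa [hS.1] at this
  have hCdet : C.det = M.det * B.det := by
    unfold C
    rw [Matrix.det_mul, Matrix.det_mul, ← hdetS]; ring
  have hCtr : C.trace = (B * M).trace := by
    unfold C
    rw [Matrix.trace_mul_cycle, hSS, Matrix.trace_mul_comm]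
  have hCpd : C.PosDef := posDef_of_psd_det_pos hCpsd (by
    rw [hCdet]; exact mul_pos hM.det_pos hB.det_pos)
  have hev : ∀ i, 0 < hCh.eigenvalues i := fun i => hCpd.eigenvalues_pos i
  have hdetev : C.det = ∏ i, hCh.eigenvalues i := by
    have := hCh.det_eq_prod_eigenvalues
    simpa using this
  have htrev : C.trace = ∑ i, hCh.eigenvalues i := trace_eq_sum_eigenvalues hCh
  have hlog : Real.log M.det + Real.log B.det = ∑ i, Real.log (hCh.eigenvalues i) := by
    rw [← Real.log_mul hM.det_pos.ne' hB.det_pos.ne', ← hCdet, hdetev,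
      Real.log_prod (fun i _ => (hev i).ne')]
  constructor
  · rw [hlog, hCtr.symm, htrev]
    have : ∑ i, Real.log (hCh.eigenvalues i) ≤ ∑ i, (hCh.eigenvalues i - 1) :=
      Finset.sum_le_sum (fun i _ => Real.log_le_sub_one_of_pos (hev i))
    simpa [Finset.sum_sub_distrib, Finset.card_univ] using this
  · intro heq
    have hsum0 : ∑ i, (hCh.eigenvalues i - 1 - Real.log (hCh.eigenvalues i)) = 0 := by
      rw [hlog, hCtr.symm, htrev] at heq
      have : ∑ i, (hCh.eigenvalues i - 1 - Real.log (hCh.eigenvalues i))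
          = (∑ i, hCh.eigenvalues i) - Fintype.card V - ∑ i, Real.log (hCh.eigenvalues i) := by
        rw [Finset.sum_sub_distrib, Finset.sum_sub_distrib]
        simp [Finset.card_univ]
      rw [this]; linarith
    have hterm : ∀ j ∈ (Finset.univ : Finset V), (0:ℝ) ≤ hCh.eigenvalues j - 1 - Real.log (hCh.eigenvalues j) :=
      fun j _ => by linarith [Real.log_le_sub_one_of_pos (hev j)]
    have hzero := (Finset.sum_eq_zero_iff_of_nonneg hterm).mp hsum0
    have hone : ∀ i, hCh.eigenvalues i = 1 := by
      intro i
      by_contra hne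
      have := hzero i (Finset.mem_univ i)
      linarith [Real.log_lt_sub_one_of_pos (hev i) hne]
    -- C = 1
    have hC1 : C = 1 := by
      have := hCh.spectral_theorem
      rw [this, Unitary.conjStarAlgAut_apply]
      have hd1 : Matrix.diagonal (RCLike.ofReal ∘ hCh.eigenvalues) = (1 : Matrix V V ℝ) := by
        ext i j
        by_cases hij : i = j
        · subst hij; simp [Matrix.diagonal_apply, Matrix.one_apply, hone i]
        · simp [Matrix.diagonal_apply, Matrix.one_apply, hij]
      rw [hd1, Matrix.mul_one]
      simpa using (Matrix.mem_unitaryGroup_iff.mp (hCh.eigenvectorUnitary).2)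
    -- derive B * M = 1
    have hSB : S * B * S = 1 := hC1
    have hSinv : IsUnit S.det := isUnit_iff_ne_zero.mpr hSdet0
    have hBS : B * S = S⁻¹ := by
      have := congrArg (fun X => S⁻¹ * X) hSB
      simpa [← Matrix.mul_assoc, Matrix.nonsing_inv_mul S hSinv, Matrix.mul_one] using this
    calc B * M = B * (S * S) := by rw [hSS]
      _ = (B * S) * S := by rw [Matrix.mul_assoc]
      _ = S⁻¹ * S := by rw [hBS]
      _ = 1 := Matrix.nonsing_inv_mul S hSinv


-- crude quadratic form bound
lemma quadform_crude (N : Matrix V V ℝ) (z : V → ℝ) :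
    |z ⬝ᵥ N *ᵥ z| ≤ (∑ i, ∑ j, |N i j|) * (z ⬝ᵥ z) := by
  have h1 : z ⬝ᵥ N *ᵥ z = ∑ i, ∑ j, z i * (N i j * z j) := by
    simp [dotProduct, Matrix.mulVec, Finset.mul_sum]
  rw [h1]
  have hzz : ∀ i j, |z i * z j| ≤ z ⬝ᵥ z := by
    intro i j
    have h2 : |z i * z j| ≤ (z i ^ 2 + z j ^ 2) / 2 := by
      rw [abs_mul]
      nlinarith [sq_nonneg (|z i| - |z j|), sq_abs (z i), sq_abs (z j)]
    have h3 : z i ^ 2 ≤ z ⬝ᵥ z := by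
      have : z ⬝ᵥ z = ∑ k, z k ^ 2 := by simp [dotProduct, sq]
      rw [this]
      exact Finset.single_le_sum (fun k _ => sq_nonneg (z k)) (Finset.mem_univ i)
    have h4 : z j ^ 2 ≤ z ⬝ᵥ z := by
      have : z ⬝ᵥ z = ∑ k, z k ^ 2 := by simp [dotProduct, sq]
      rw [this]
      exact Finset.single_le_sum (fun k _ => sq_nonneg (z k)) (Finset.mem_univ j)
    linarith
  calc |∑ i, ∑ j, z i * (N i j * z j)| ≤ ∑ i, |∑ j, z i * (N i j * z j)| :=
        Finset.abs_sum_le_sum_abs _ _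
    _ ≤ ∑ i, ∑ j, |z i * (N i j * z j)| :=
        Finset.sum_le_sum fun i _ => Finset.abs_sum_le_sum_abs _ _
    _ ≤ ∑ i, ∑ j, |N i j| * (z ⬝ᵥ z) := by
        refine Finset.sum_le_sum fun i _ => Finset.sum_le_sum fun j _ => ?_
        have : |z i * (N i j * z j)| = |N i j| * |z i * z j| := by
          rw [abs_mul, abs_mul, abs_mul]; ring
        rw [this]
        exact mul_le_mul_of_nonneg_left (hzz i j) (abs_nonneg _)
    _ = (∑ i, ∑ j, |N i j|) * (z ⬝ᵥ z) := by rw [Finset.sum_mul]; congr 1; ext i; rw [Finset.sum_mul]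

lemma posDef_congruence {P S : Matrix V V ℝ} (hP : P.PosDef) (hS : S.IsHermitian)
    (hSdet : S.det ≠ 0) : (S * P * S).PosDef := by
  have hpsd : (S * P * S).PosSemidef := by
    have := hP.posSemidef.mul_mul_conjTranspose_same S
    rwa [hS] at this
  refine posDef_of_psd_det_pos hpsd ?_
  rw [Matrix.det_mul, Matrix.det_mul]
  have h1 := hP.det_pos
  have h2 : 0 < S.det * S.det := mul_self_pos.mpr hSdet
  nlinarith [mul_pos h1 h2]

lemma posDef_perturb {A : Matrix V V ℝ} (hA : A.PosDef) (K : Matrix V V ℝ)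
    (hK : K.IsHermitian) : ∃ t0 : ℝ, 0 < t0 ∧ ∀ t : ℝ, |t| ≤ t0 → (A + t • K).PosDef := by
  classical
  have hMs := hA.posSemidef
  set S := CFC.sqrt A with hSdef
  have hS : S.PosSemidef := (CFC.sqrt_nonneg A).posSemidef
  have hSh : S.IsHermitian := hS.1
  have hSS : S * S = A := CFC.sqrt_mul_sqrt_self A hMs.nonneg
  have hdetS : S.det * S.det = A.det := by rw [← Matrix.det_mul, hSS]
  have hSdet0 : S.det ≠ 0 := fun h0 => hA.det_pos.ne (by rw [h0, mul_zero] at hdetS; exact hdetS)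
  have hSunit : IsUnit S.det := isUnit_iff_ne_zero.mpr hSdet0
  have hSinvh : (S⁻¹).IsHermitian := hSh.inv
  set N := S⁻¹ * K * S⁻¹ with hNdef
  have hNh : N.IsHermitian := by
    unfold Matrix.IsHermitian
    rw [hNdef, Matrix.conjTranspose_mul, Matrix.conjTranspose_mul, hSinvh, hK, ← Matrix.mul_assoc]
  set c := ∑ i, ∑ j, |N i j| with hcdef
  have hc0 : 0 ≤ c := Finset.sum_nonneg fun i _ => Finset.sum_nonneg fun j _ => abs_nonneg _
  refine ⟨1 / (2 * (c + 1)), by positivity, fun t ht => ?_⟩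
  have hone : (1 + t • N).PosDef := by
    refine Matrix.PosDef.of_dotProduct_mulVec_pos ?_ ?_
    · unfold Matrix.IsHermitian
      rw [Matrix.conjTranspose_add, Matrix.conjTranspose_smul, hNh]
      · simp [Matrix.conjTranspose_one]
    · intro z hz
      have hzz : 0 < z ⬝ᵥ z := by
        rcases Function.ne_iff.mp hz with ⟨i, hi⟩
        have : z ⬝ᵥ z = ∑ k, z k ^ 2 := by simp [dotProduct, sq]
        rw [this]
        exact Finset.sum_pos' (fun k _ => sq_nonneg _)
          ⟨i, Finset.mem_univ i, by simpa [sq_abs] using pow_pos (abs_pos.mpr hi) 2⟩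
      have hN := quadform_crude N z
      have expand : star z ⬝ᵥ (1 + t • N) *ᵥ z = z ⬝ᵥ z + t * (z ⬝ᵥ N *ᵥ z) := by
        simp [Matrix.add_mulVec, Matrix.smul_mulVec, Matrix.one_mulVec, dotProduct_add,
          dotProduct_smul, star_trivial, smul_eq_mul]
      rw [expand]
      have habs : |t * (z ⬝ᵥ N *ᵥ z)| ≤ (1 / (2 * (c + 1))) * (c * (z ⬝ᵥ z)) := by
        rw [abs_mul]
        apply mul_le_mul ht hN (abs_nonneg _) (by positivity)
      have hlt : (1 / (2 * (c + 1))) * (c * (z ⬝ᵥ z)) < z ⬝ᵥ z := by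
        rw [div_mul_eq_mul_div, one_mul, div_lt_iff₀ (by positivity)]
        nlinarith
      have := neg_abs_le (t * (z ⬝ᵥ N *ᵥ z))
      linarith
  have key : S * (1 + t • N) * S = A + t • K := by
    rw [Matrix.mul_add, Matrix.add_mul, Matrix.mul_one, hSS]
    congr 1
    rw [Matrix.mul_smul, Matrix.smul_mul]
    congr 1
    rw [hNdef, ← Matrix.mul_assoc, ← Matrix.mul_assoc, Matrix.mul_nonsing_inv S hSunit,
      Matrix.one_mul, Matrix.mul_assoc, Matrix.nonsing_inv_mul S hSunit, Matrix.mul_one]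
  rw [← key]
  exact posDef_congruence hone hSh hSdet0

lemma inv_zero_of_not_adj {G : SimpleGraph V} {x : ℝ} {A : Matrix V V ℝ}
    (hA : IsMaxA G x A) {u v : V} (huv : u ≠ v) (hna : ¬ G.Adj u v) : A⁻¹ u v = 0 := by
  classical
  obtain ⟨⟨hpd, hdiag, hedge⟩, hmax⟩ := hA
  set B := A⁻¹ with hBdef
  have hdet := hpd.det_pos
  have hBh : B.IsHermitian := hpd.isHermitian.inv
  have hBsymm : B v u = B u v := by
    have h1 : Bᴴ u v = B u v := by rw [hBh]
    rw [Matrix.conjTranspose_apply] at h1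
    simpa using h1
  set K : Matrix V V ℝ := Matrix.single u v (1:ℝ) + Matrix.single v u 1 with hKdef
  have hKapp : ∀ i j, K i j = (if i = u ∧ j = v then (1:ℝ) else 0) + (if i = v ∧ j = u then 1 else 0) := by
    intro i j
    simp [hKdef, Matrix.single, Matrix.add_apply, eq_comm]
  have hKh : K.IsHermitian := by
    unfold Matrix.IsHermitian
    ext i j
    rw [Matrix.conjTranspose_apply, star_trivial, hKapp, hKapp]
    by_cases h1 : i = u ∧ j = v <;> by_cases h2 : i = v ∧ j = u <;>
      simp [h1, h2, and_comm] <;> aesop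
  obtain ⟨t0, ht0, hpert⟩ := posDef_perturb hpd K hKh
  -- feasibility
  have hfeas : ∀ t : ℝ, |t| ≤ t0 → memA G x (A + t • K) := by
    intro t ht
    refine ⟨hpert t ht, fun i => ?_, fun i j hij => ?_⟩
    · have : K i i = 0 := by
        rw [hKapp]
        have h1 : ¬(i = u ∧ i = v) := fun ⟨h1, h2⟩ => huv (h1 ▸ h2 ▸ rfl)
        have h2 : ¬(i = v ∧ i = u) := fun ⟨h1, h2⟩ => huv (h2 ▸ h1 ▸ rfl)
        simp [h1, h2]
      simp [Matrix.add_apply, this, hdiag i]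
    · have : K i j = 0 := by
        rw [hKapp]
        have h1 : ¬(i = u ∧ j = v) := fun ⟨h1, h2⟩ => hna (h1 ▸ h2 ▸ hij)
        have h2 : ¬(i = v ∧ j = u) := fun ⟨h1, h2⟩ => hna (h1 ▸ h2 ▸ hij.symm)
        simp [h1, h2]
      simp [Matrix.add_apply, this, hedge i j hij]
  -- determinant expansion
  have hswap : ∀ (w s : V → ℝ),
      Matrix.updateRow (Matrix.updateRow A u w) v s = Matrix.updateRow (Matrix.updateRow A v s) u w := by
    intro w s
    ext i j
    by_cases h1 : i = u <;> by_cases h2 : i = v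
    · exact absurd (h1 ▸ h2 : u = v) huv
    · subst h1; rw [Matrix.updateRow_ne h2, Matrix.updateRow_self, Matrix.updateRow_self]
    · subst h2; rw [Matrix.updateRow_self, Matrix.updateRow_ne h1, Matrix.updateRow_self]
    · rw [Matrix.updateRow_ne h2, Matrix.updateRow_ne h1, Matrix.updateRow_ne h1,
        Matrix.updateRow_ne h2]
  have hrep : ∀ t : ℝ, A + t • K =
      Matrix.updateRow (Matrix.updateRow A u ((A u : V → ℝ) + t • (Pi.single v 1 : V → ℝ))) v
        ((A v : V → ℝ) + t • (Pi.single u 1 : V → ℝ)) := by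
    intro t
    ext i j
    by_cases h1 : i = u <;> by_cases h2 : i = v
    · exact absurd (h1 ▸ h2 : u = v) huv
    · subst h1
      rw [Matrix.updateRow_ne h2, Matrix.updateRow_self, Matrix.add_apply, Matrix.smul_apply,
        hKapp]
      have hvi : ¬(i = v ∧ j = i) := fun ⟨hh, _⟩ => h2 hh
      by_cases h3 : j = v <;> simp [h3, hvi, h2, Pi.single_apply]
    · subst h2
      rw [Matrix.updateRow_self, Matrix.add_apply, Matrix.smul_apply, hKapp]
      have hvi : ¬(i = u ∧ j = i) := fun ⟨hh, _⟩ => h1 hh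
      by_cases h3 : j = u <;> simp [h3, hvi, h1, Pi.single_apply]
    · rw [Matrix.updateRow_ne h2, Matrix.updateRow_ne h1, Matrix.add_apply, Matrix.smul_apply,
        hKapp]
      simp [h1, h2]
  set D12 : ℝ := (Matrix.updateRow (Matrix.updateRow A v ((Pi.single u 1 : V → ℝ))) u ((Pi.single v 1 : V → ℝ))).det
    with hD12
  have hdetexp : ∀ t : ℝ, (A + t • K).det = A.det + t * (2 * A.det * B u v) + t^2 * D12 := by
    intro t
    rw [hrep t]
    set Q := Matrix.updateRow A u (A u + t • (Pi.single v 1 : V → ℝ)) with hQdef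
    rw [Matrix.det_updateRow_add, Matrix.det_updateRow_smul]
    have e1 : Matrix.updateRow Q v (A v) = Q := by
      have : A v = Q v := (Matrix.updateRow_ne (Ne.symm huv)).symm
      rw [this, Matrix.updateRow_eq_self]
    have e2 : Q.det = A.det + t * A.det * (B v u) := by
      rw [hQdef, Matrix.det_updateRow_add, Matrix.det_updateRow_smul, Matrix.updateRow_eq_self]
      have : (Matrix.updateRow A u ((Pi.single v 1 : V → ℝ))).det = A.adjugate v u := (Matrix.adjugate_apply A v u).symm
      rw [this]
      have hadj : A.adjugate v u = A.det * B v u := by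
        have hb : B v u = Ring.inverse A.det * A.adjugate v u := by
          rw [hBdef, Matrix.inv_def, Matrix.smul_apply, smul_eq_mul]
        rw [hb, Ring.inverse_eq_inv]
        field_simp
      rw [hadj]; ring
    have e3 : (Matrix.updateRow Q v ((Pi.single u 1 : V → ℝ))).det
        = A.det * B u v + t * D12 := by
      rw [hQdef, hswap, Matrix.det_updateRow_add, Matrix.det_updateRow_smul]
      have : Matrix.updateRow (Matrix.updateRow A v ((Pi.single u 1 : V → ℝ))) u
          ((Matrix.updateRow A v ((Pi.single u 1 : V → ℝ))) u) = Matrix.updateRow A v ((Pi.single u 1 : V → ℝ)) :=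
        Matrix.updateRow_eq_self _ _
      have e4 : (Matrix.updateRow A v ((Pi.single u 1 : V → ℝ))) u = A u := Matrix.updateRow_ne huv
      rw [e4] at this
      rw [this]
      have : (Matrix.updateRow A v ((Pi.single u 1 : V → ℝ))).det = A.adjugate u v := (Matrix.adjugate_apply A u v).symm
      rw [this]
      have hadj : A.adjugate u v = A.det * B u v := by
        have hb : B u v = Ring.inverse A.det * A.adjugate u v := by
          rw [hBdef, Matrix.inv_def, Matrix.smul_apply, smul_eq_mul]
        rw [hb, Ring.inverse_eq_inv]
        field_simp
      rw [hadj, hD12]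
    rw [e1, e2, e3, hBsymm]
    ring
  -- conclude B u v = 0
  by_contra hβ
  set β := B u v with hβdef
  have hkey : ∀ t : ℝ, |t| ≤ t0 → t * (2 * A.det * β) + t^2 * D12 ≤ 0 := by
    intro t ht
    have := hmax _ (hfeas t ht)
    rw [hdetexp t] at this
    linarith
  set s : ℝ := min t0 (A.det * |β| / (|D12| + 1)) with hsdef
  have hs0 : 0 < s := lt_min ht0 (by positivity)
  have hst0 : s ≤ t0 := min_le_left _ _
  have hsD : s * (|D12| + 1) ≤ A.det * |β| := by
    have := min_le_right t0 (A.det * |β| / (|D12| + 1))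
    calc s * (|D12| + 1) ≤ (A.det * |β| / (|D12| + 1)) * (|D12| + 1) := by
          apply mul_le_mul_of_nonneg_right this (by positivity)
      _ = A.det * |β| := by field_simp
  set t : ℝ := if 0 < β then s else -s with htdef
  have habs : |t| ≤ t0 := by
    rw [htdef]; split <;> simp [abs_of_pos hs0, abs_of_neg (neg_neg_iff_pos.mpr hs0), hst0]
  have h1 := hkey t habs
  have ht2 : t^2 = s^2 := by rw [htdef]; split <;> ring
  have htβ : t * (2 * A.det * β) = s * (2 * A.det * |β|) := by
    rw [htdef]; split_ifs with h
    · rw [abs_of_pos h]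
    · rw [abs_of_nonpos (le_of_not_gt h)]; ring
  rw [ht2, htβ] at h1
  have hβpos : 0 < |β| := abs_pos.mpr hβ
  have h2 : s^2 * D12 ≥ -(s^2 * |D12|) := by nlinarith [neg_abs_le D12, sq_nonneg s]
  have h3 : s * (2 * A.det * |β|) ≤ s^2 * |D12| := by linarith
  have h4 : s * (2 * A.det * |β|) ≤ s * (s * |D12|) := by nlinarith
  have h5 : 2 * A.det * |β| ≤ s * |D12| := le_of_mul_le_mul_left (by linarith [h4]) hs0
  have h6 : s * |D12| ≤ s * (|D12| + 1) := by nlinarith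
  nlinarith [mul_pos hdet hβpos]

lemma quad_eval (M : Matrix V V ℝ) (i j : V) (hij : i ≠ j) (a b : ℝ) :
    (a • (Pi.single i 1 : V → ℝ) + b • (Pi.single j 1 : V → ℝ)) ⬝ᵥ
      M *ᵥ (a • (Pi.single i 1 : V → ℝ) + b • (Pi.single j 1 : V → ℝ))
      = a * a * M i i + a * b * M i j + b * a * M j i + b * b * M j j := by
  classical
  set z : V → ℝ := a • (Pi.single i 1 : V → ℝ) + b • (Pi.single j 1 : V → ℝ) with hz
  have hzk : ∀ k, z k = (if k = i then a else 0) + (if k = j then b else 0) := by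
    intro k
    simp [hz, Pi.single_apply]
  have hinner : ∀ k, (M *ᵥ z) k = a * M k i + b * M k j := by
    intro k
    simp only [Matrix.mulVec, dotProduct]
    have : ∀ l, M k l * z l = (if l = i then a * M k i else 0) + (if l = j then b * M k j else 0) := by
      intro l
      rw [hzk l]
      by_cases h1 : l = i <;> by_cases h2 : l = j
      · exact absurd (h1.symm.trans h2) hij
      · subst h1; simp [h2]; try ring
      · subst h2; simp [h1]; try ring
      · simp [h1, h2]
    rw [Finset.sum_congr rfl (fun l _ => this l), Finset.sum_add_distrib]
    simp [Finset.sum_ite_eq']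
  simp only [dotProduct]
  have : ∀ k, z k * (M *ᵥ z) k = (if k = i then a * (a * M i i + b * M i j) else 0)
      + (if k = j then b * (a * M j i + b * M j j) else 0) := by
    intro k
    rw [hzk k, hinner k]
    by_cases h1 : k = i <;> by_cases h2 : k = j
    · exact absurd (h1.symm.trans h2) hij
    · subst h1; simp [h2]; try ring
    · subst h2; simp [h1]; try ring
    · simp [h1, h2]
  rw [Finset.sum_congr rfl (fun k _ => this k), Finset.sum_add_distrib]
  simp [Finset.sum_ite_eq']
  ring

lemma psd_offdiag_bound {M : Matrix V V ℝ} (hM : M.PosSemidef) (hdiag : ∀ i, M i i = 1)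
    {i j : V} (hij : i ≠ j) : |M i j| ≤ 1 := by
  have hsym : M j i = M i j := by
    have h1 : Mᴴ i j = M i j := by rw [hM.1]
    rw [Matrix.conjTranspose_apply] at h1
    simpa using h1
  have h1 := hM.dotProduct_mulVec_nonneg ((1:ℝ) • (Pi.single i 1 : V → ℝ) + (1:ℝ) • (Pi.single j 1 : V → ℝ))
  have h2 := hM.dotProduct_mulVec_nonneg ((1:ℝ) • (Pi.single i 1 : V → ℝ) + (-1:ℝ) • (Pi.single j 1 : V → ℝ))
  rw [star_trivial, quad_eval M i j hij 1 1] at h1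
  rw [star_trivial, quad_eval M i j hij 1 (-1)] at h2
  rw [hdiag i, hdiag j, hsym] at h1 h2
  rw [abs_le]
  constructor <;> nlinarith

lemma exists_isMaxA (G : SimpleGraph V) {x : ℝ} (hx : x ∈ Set.Ioo (0:ℝ) 1) :
    ∃ A : Matrix V V ℝ, IsMaxA G x A := by
  classical
  obtain ⟨hx0, hx1⟩ := hx
  set M0 : Matrix V V ℝ := Matrix.of fun i j => if i = j then (1:ℝ) else x with hM0
  have hM0pd : M0.PosDef := by
    refine Matrix.PosDef.of_dotProduct_mulVec_pos ?_ ?_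
    · unfold Matrix.IsHermitian
      ext i j
      by_cases h : i = j <;> simp [hM0, Matrix.conjTranspose_apply, h, eq_comm]
    · intro z hz
      have hmv : ∀ i, (M0 *ᵥ z) i = (1 - x) * z i + x * (∑ k, z k) := by
        intro i
        simp only [Matrix.mulVec, dotProduct, hM0, Matrix.of_apply]
        have : ∀ l, (if i = l then (1:ℝ) else x) * z l = x * z l + (if l = i then (1-x) * z l else 0) := by
          intro l
          by_cases h : l = i
          · subst h; simp; ring
          · simp [Ne.symm h, h]
        rw [Finset.sum_congr rfl fun l _ => this l, Finset.sum_add_distrib, Finset.sum_ite_eq']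
        simp [Finset.mul_sum]
        ring
      have hform : star z ⬝ᵥ M0 *ᵥ z = (1-x) * (∑ i, z i * z i) + x * (∑ i, z i) * (∑ i, z i) := by
        rw [star_trivial]
        simp only [dotProduct]
        rw [Finset.sum_congr rfl fun i _ => by rw [hmv i]]
        have : ∀ i, z i * ((1 - x) * z i + x * (∑ k, z k)) =
            (1-x) * (z i * z i) + (z i) * (x * (∑ k, z k)) := by intro i; ring
        rw [Finset.sum_congr rfl fun i _ => this i, Finset.sum_add_distrib, ← Finset.mul_sum,
          ← Finset.sum_mul]
        ring
      rw [hform]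
      have hzz : 0 < ∑ i, z i * z i := by
        rcases Function.ne_iff.mp hz with ⟨i, hi⟩
        have : ∀ k ∈ Finset.univ, 0 ≤ z k * z k := fun k _ => mul_self_nonneg _
        have hp : 0 < z i * z i := mul_self_pos.mpr hi
        exact Finset.sum_pos' this ⟨i, Finset.mem_univ i, hp⟩
      nlinarith [mul_self_nonneg (∑ i, z i)]
  set S : Set (Matrix V V ℝ) :=
    {M | M.PosSemidef ∧ (∀ i, M i i = 1) ∧ ∀ i j, G.Adj i j → M i j = x} with hSdef
  have hM0S : M0 ∈ S := by
    refine ⟨hM0pd.posSemidef, fun i => by simp [hM0], fun i j hij => by simp [hM0, hij.ne]⟩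
  have hclosed : IsClosed S := by
    have h1 : IsClosed {M : Matrix V V ℝ | M.PosSemidef} := by
      have : {M : Matrix V V ℝ | M.PosSemidef} =
          (⋂ i, ⋂ j, {M : Matrix V V ℝ | M i j = M j i}) ∩
            (⋂ z : V → ℝ, {M : Matrix V V ℝ | 0 ≤ z ⬝ᵥ M *ᵥ z}) := by
        ext M
        constructor
        · intro hM
          refine ⟨Set.mem_iInter.mpr fun i => Set.mem_iInter.mpr fun j => ?_, Set.mem_iInter.mpr fun z => ?_⟩
          · have h1 : Mᴴ j i = M j i := by rw [hM.1]
            rw [Matrix.conjTranspose_apply, star_trivial] at h1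
            exact h1
          · simpa using hM.dotProduct_mulVec_nonneg z
        · rintro ⟨hsym, hpos⟩
          refine Matrix.PosSemidef.of_dotProduct_mulVec_nonneg ?_ ?_
          · unfold Matrix.IsHermitian
            ext i j
            rw [Matrix.conjTranspose_apply, star_trivial]
            exact Set.mem_iInter.mp (Set.mem_iInter.mp hsym j) i
          · intro z
            simpa using Set.mem_iInter.mp hpos z
      rw [this]
      have hcont : ∀ i j : V, Continuous fun M : Matrix V V ℝ => M i j := by
        intro i j
        exact (continuous_apply j).comp (continuous_apply i)
      refine IsClosed.inter (isClosed_iInter fun i => isClosed_iInter fun j =>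
        isClosed_eq (hcont i j) (hcont j i)) (isClosed_iInter fun z => ?_)
      have : Continuous fun M : Matrix V V ℝ => z ⬝ᵥ M *ᵥ z := by
        simp only [dotProduct, Matrix.mulVec]
        refine continuous_finset_sum _ fun i _ => Continuous.mul continuous_const ?_
        exact continuous_finset_sum _ fun j _ => ((hcont i j).mul continuous_const)
      exact isClosed_le continuous_const this
    have hcont : ∀ i j : V, Continuous fun M : Matrix V V ℝ => M i j := fun i j =>
      (continuous_apply j).comp (continuous_apply i)
    have h2 : IsClosed {M : Matrix V V ℝ | ∀ i, M i i = 1} := by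
      have : {M : Matrix V V ℝ | ∀ i, M i i = 1} = ⋂ i, {M : Matrix V V ℝ | M i i = 1} := by
        ext M; simp
      rw [this]
      exact isClosed_iInter fun i => isClosed_eq (hcont i i) continuous_const
    have h3 : IsClosed {M : Matrix V V ℝ | ∀ i j, G.Adj i j → M i j = x} := by
      have : {M : Matrix V V ℝ | ∀ i j, G.Adj i j → M i j = x}
          = ⋂ i, ⋂ j, {M : Matrix V V ℝ | G.Adj i j → M i j = x} := by
        ext M; simp
      rw [this]
      refine isClosed_iInter fun i => isClosed_iInter fun j => ?_
      by_cases hadj : G.Adj i j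
      · have : {M : Matrix V V ℝ | G.Adj i j → M i j = x} = {M : Matrix V V ℝ | M i j = x} := by
          ext M; simp [hadj]
        rw [this]
        exact isClosed_eq (hcont i j) continuous_const
      · have : {M : Matrix V V ℝ | G.Adj i j → M i j = x} = Set.univ := by
          ext M; simp [hadj]
        rw [this]
        exact isClosed_univ
    have : S = {M : Matrix V V ℝ | M.PosSemidef} ∩ ({M | ∀ i, M i i = 1} ∩ {M | ∀ i j, G.Adj i j → M i j = x}) := by
      ext M
      exact ⟨fun h => ⟨h.1, h.2.1, h.2.2⟩, fun h => ⟨h.1, h.2.1, h.2.2⟩⟩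
    rw [this]
    exact h1.inter (h2.inter h3)
  have hcompact : IsCompact S := by
    have hT : IsCompact (Set.univ.pi fun _ : V => Set.univ.pi fun _ : V => Set.Icc (-1:ℝ) 1) :=
      isCompact_univ_pi fun i => isCompact_univ_pi fun j => isCompact_Icc
    refine IsCompact.of_isClosed_subset hT hclosed ?_
    intro M hM
    refine Set.mem_pi.mpr fun i _ => ?_
    rw [Set.mem_pi]
    intro j _
    rw [Set.mem_Icc, ← abs_le]
    by_cases hij : i = j
    · subst hij; rw [hM.2.1 i]; simp
    · exact psd_offdiag_bound hM.1 hM.2.1 hij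
  obtain ⟨A, hAS, hAmax⟩ := hcompact.exists_isMaxOn ⟨M0, hM0S⟩
    (Continuous.matrix_det continuous_id).continuousOn
  have hdet0 : 0 < A.det := lt_of_lt_of_le hM0pd.det_pos (hAmax hM0S)
  have hApd : A.PosDef := posDef_of_psd_det_pos hAS.1 hdet0
  refine ⟨A, ⟨hApd, hAS.2.1, hAS.2.2⟩, fun M hM => ?_⟩
  exact hAmax ⟨hM.1.posSemidef, hM.2.1, hM.2.2⟩

lemma trace_mul_apply (B M : Matrix V V ℝ) : (B * M).trace = ∑ u, ∑ w, B u w * M w u := by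
  simp [Matrix.trace, Matrix.diag, Matrix.mul_apply]

lemma isMaxA_unique {H : SimpleGraph V} {x : ℝ} {A M : Matrix V V ℝ}
    (hA : IsMaxA H x A) (hM : memA H x M) (hdet : M.det = A.det) : M = A := by
  classical
  have hpd := hA.1.1
  have hdiag := hA.1.2.1
  have hedge := hA.1.2.2
  obtain ⟨hMpd, hMdiag, hMedge⟩ := hM
  have hdet0 := hpd.det_pos
  have hAunit : IsUnit A.det := isUnit_iff_ne_zero.mpr hdet0.ne'
  set B := A⁻¹ with hBdef
  have hBpd : B.PosDef := hpd.inv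
  have hB0 : ∀ u w, u ≠ w → ¬ H.Adj u w → B u w = 0 := fun u w h1 h2 =>
    inv_zero_of_not_adj hA h1 h2
  have htr : (B * M).trace = (B * A).trace := by
    rw [trace_mul_apply, trace_mul_apply]
    refine Finset.sum_congr rfl fun u _ => Finset.sum_congr rfl fun w _ => ?_
    by_cases h1 : u = w
    · subst h1; rw [hMdiag, hdiag]
    · by_cases h2 : H.Adj u w
      · rw [hMedge w u h2.symm, hedge w u h2.symm]
      · rw [hB0 u w h1 h2, zero_mul, zero_mul]
  have htrA : (B * A).trace = (Fintype.card V : ℝ) := by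
    rw [hBdef, Matrix.nonsing_inv_mul A hAunit, Matrix.trace_one]
  have hdetB : B.det = A.det⁻¹ := by
    rw [hBdef, Matrix.det_nonsing_inv, Ring.inverse_eq_inv']
  have heq : Real.log M.det + Real.log B.det = (B * M).trace - Fintype.card V := by
    rw [hdet, hdetB, Real.log_inv, htr, htrA]
    ring
  have hBM := (core_ineq hMpd hBpd).2 heq
  calc M = (A * B) * M := by rw [Matrix.mul_nonsing_inv A hAunit, Matrix.one_mul]
    _ = A * (B * M) := by rw [Matrix.mul_assoc]
    _ = A := by rw [hBM, Matrix.mul_one]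

lemma isMaxA_invariant {H : SimpleGraph V} {x : ℝ} {A : Matrix V V ℝ}
    (hA : IsMaxA H x A) (e : V ≃ V) (he : ∀ u v, H.Adj u v → H.Adj (e u) (e v)) :
    A.submatrix e e = A := by
  obtain ⟨⟨hpd, hdiag, hedge⟩, hmax⟩ := hA
  have hdet : (A.submatrix e e).det = A.det := Matrix.det_submatrix_equiv_self e A
  have hpd' : (A.submatrix e e).PosDef :=
    posDef_of_psd_det_pos (hpd.posSemidef.submatrix e) (hdet ▸ hpd.det_pos)
  have hmem : memA H x (A.submatrix e e) :=
    ⟨hpd', fun i => hdiag (e i), fun i j hij => hedge _ _ (he i j hij)⟩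
  exact isMaxA_unique ⟨⟨hpd, hdiag, hedge⟩, hmax⟩ hmem hdet

lemma inv_submatrix_invariant {A : Matrix V V ℝ} (hpd : A.PosDef) (e : V ≃ V)
    (h : A.submatrix e e = A) : (A⁻¹).submatrix e e = A⁻¹ := by
  have hAunit : IsUnit A.det := isUnit_iff_ne_zero.mpr hpd.det_pos.ne'
  have h1 : (A⁻¹).submatrix ⇑e ⇑e * A.submatrix ⇑e ⇑e = 1 := by
    rw [Matrix.submatrix_mul_equiv, Matrix.nonsing_inv_mul A hAunit]
    exact Matrix.submatrix_one_equiv e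
  rw [h] at h1
  exact (Matrix.inv_eq_left_inv h1).symm

lemma max_principle {K : SimpleGraph V} {x : ℝ} {A : Matrix V V ℝ}
    (hx : x ∈ Set.Ioo (0:ℝ) 1)
    (hpd : A.PosDef)
    (hdiag : ∀ i, A i i = 1)
    (hedge : ∀ i j, K.Adj i j → A i j = x)
    (hB0 : ∀ i j, i ≠ j → ¬ K.Adj i j → A⁻¹ i j = 0)
    (hBdiag : ∀ i j, A⁻¹ i i = A⁻¹ j j)
    (hBnonpos : ∀ i j, i ≠ j → A⁻¹ i j ≤ 0)
    {u v : V} (huv : u ≠ v) (hna : ¬ K.Adj u v) : A u v < x := by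
  classical
  obtain ⟨hx0, hx1⟩ := hx
  set B := A⁻¹ with hBdef
  have hAunit : IsUnit A.det := isUnit_iff_ne_zero.mpr hpd.det_pos.ne'
  have hBA : B * A = 1 := Matrix.nonsing_inv_mul A hAunit
  have hAB : A * B = 1 := Matrix.mul_nonsing_inv A hAunit
  have hBpd : B.PosDef := hpd.inv
  have hBsym : ∀ i j, B i j = B j i := by
    intro i j
    have h1 : Bᴴ i j = B i j := by rw [hBpd.isHermitian]
    rw [Matrix.conjTranspose_apply, star_trivial] at h1
    exact h1.symm
  set b := B u u with hb
  set s0 : ℝ := ∑ w ∈ Finset.univ.erase u, B u w with hs0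
  -- row identity
  have hrow : ∀ i, b + x * (∑ w ∈ Finset.univ.erase i, B i w) = 1 := by
    intro i
    have h1 : (B * A) i i = 1 := by rw [hBA]; simp [Matrix.one_apply]
    rw [Matrix.mul_apply] at h1
    rw [← Finset.add_sum_erase _ _ (Finset.mem_univ i)] at h1
    rw [hdiag i, mul_one] at h1
    have h2 : ∀ w ∈ Finset.univ.erase i, B i w * A w i = x * B i w := by
      intro w hw
      have hwi : w ≠ i := Finset.ne_of_mem_erase hw
      by_cases hadj : K.Adj i w
      · rw [hedge w i hadj.symm]; ring
      · rw [hB0 i w (Ne.symm hwi) hadj]; ring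
    rw [Finset.sum_congr rfl h2, ← Finset.mul_sum] at h1
    rw [hBdiag i u] at h1
    exact h1
  have hsame : ∀ i, (∑ w ∈ Finset.univ.erase i, B i w) = s0 := by
    intro i
    have h1 := hrow i
    have h2 := hrow u
    rw [hs0]
    nlinarith [h1, h2]
  have hs0nonpos : s0 ≤ 0 := by
    rw [hs0]
    exact Finset.sum_nonpos fun w hw =>
      hBnonpos u w (Ne.symm (Finset.ne_of_mem_erase hw))
  have hbval : b = 1 - x * s0 := by have := hrow u; rw [hsame u] at this; linarith
  have hb1 : 1 ≤ b := by nlinarith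
  have hbpos : 0 < b := by linarith
  -- total sum positive
  have htot : 0 < b + s0 := by
    have hones : (fun _ : V => (1:ℝ)) ≠ 0 := by
      intro h
      have := congrFun h u
      simp at this
    have hq := hBpd.dotProduct_mulVec_pos hones
    rw [star_trivial] at hq
    have hqe : (fun _ : V => (1:ℝ)) ⬝ᵥ B *ᵥ (fun _ : V => (1:ℝ)) = ∑ i, ∑ w, B i w := by
      simp [dotProduct, Matrix.mulVec]
    rw [hqe] at hq
    have hsum : ∀ i, ∑ w, B i w = b + s0 := by
      intro i
      rw [← Finset.add_sum_erase _ _ (Finset.mem_univ i), hsame i, hBdiag i u]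
    rw [Finset.sum_congr rfl fun i _ => hsum i, Finset.sum_const, Finset.card_univ,
      nsmul_eq_mul] at hq
    have hcard : (0:ℝ) < Fintype.card V := by
      have : 0 < Fintype.card V := Fintype.card_pos_iff.mpr ⟨u⟩
      exact_mod_cast this
    by_contra hcon
    push_neg at hcon
    have : (Fintype.card V : ℝ) * (b + s0) ≤ 0 :=
      mul_nonpos_of_nonneg_of_nonpos (le_of_lt hcard) hcon
    linarith
  -- maximum over off-diagonal pairs
  obtain ⟨p, hpmem, hpmax⟩ := Finset.exists_max_image Finset.univ.offDiag
    (fun p : V × V => A p.1 p.2) ⟨(u, v), by simp [Finset.mem_offDiag, huv]⟩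
  set m := A p.1 p.2 with hm
  have hple : ∀ i j : V, i ≠ j → A i j ≤ m :=
    fun i j hij => hpmax (i, j) (by simp [Finset.mem_offDiag, hij])
  -- key bound for non-adjacent pairs
  have key : ∀ i j, i ≠ j → ¬ K.Adj i j → A i j ≤ m * (-s0) / b := by
    intro i j hij hnadj
    have h1 : (A * B) i j = 0 := by rw [hAB]; simp [Matrix.one_apply, hij]
    rw [Matrix.mul_apply] at h1
    rw [← Finset.add_sum_erase _ _ (Finset.mem_univ j)] at h1
    have hBjj : B j j = b := hBdiag j u
    rw [hBjj] at h1
    have hterm : ∀ w ∈ Finset.univ.erase j, A i w * B w j ≥ m * B w j := by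
      intro w hw
      have hwj : w ≠ j := Finset.ne_of_mem_erase hw
      by_cases hzero : B w j = 0
      · rw [hzero, mul_zero, mul_zero]
      · have hadj : K.Adj w j := by
          by_contra hc
          exact hzero (hB0 w j hwj hc)
        have hwi : w ≠ i := by
          intro hcon
          subst hcon
          exact hnadj hadj
        have hAle : A i w ≤ m := hple i w (Ne.symm hwi)
        have hBle : B w j ≤ 0 := hBnonpos w j hwj
        nlinarith
    have hsum : ∑ w ∈ Finset.univ.erase j, A i w * B w j ≥ m * s0 := by
      have hcol : ∑ w ∈ Finset.univ.erase j, B w j = s0 := by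
        rw [← hsame j]
        exact Finset.sum_congr rfl fun w hw => hBsym w j
      calc ∑ w ∈ Finset.univ.erase j, A i w * B w j
          ≥ ∑ w ∈ Finset.univ.erase j, m * B w j := Finset.sum_le_sum hterm
        _ = m * s0 := by rw [← Finset.mul_sum, hcol]
    have h2 : A i j * b ≤ -(m * s0) := by linarith
    calc A i j = A i j * b * b⁻¹ := by field_simp
      _ ≤ -(m * s0) * b⁻¹ := by
          apply mul_le_mul_of_nonneg_right h2 (by positivity)
      _ = m * (-s0) / b := by rw [div_eq_mul_inv]; ring
  have hfrac : (-s0) / b < 1 := by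
    rw [div_lt_one hbpos]; linarith
  rcases le_or_gt m 0 with hm0 | hm0
  · calc A u v ≤ m := hple u v huv
      _ ≤ 0 := hm0
      _ < x := hx0
  · -- max attained at an edge, so m = x
    have hmx : m = x := by
      have hpne : p.1 ≠ p.2 := (Finset.mem_offDiag.mp hpmem).2.2
      by_cases hadj : K.Adj p.1 p.2
      · rw [hm]; exact hedge p.1 p.2 hadj
      · exfalso
        have := key p.1 p.2 hpne hadj
        rw [← hm] at this
        have h3 : m * (-s0) / b < m := by
          rw [mul_div_assoc]
          nlinarith [hfrac, hm0]
        linarith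
    calc A u v ≤ m * (-s0) / b := key u v huv hna
      _ < m := by rw [mul_div_assoc]; nlinarith [hfrac, hm0]
      _ = x := hmx

/-- The graph `H` minus the `Aut(G)`-orbit of the pair `(u0, v0)`. -/
@[reducible] def delOrbit (G H : SimpleGraph V) (u0 v0 : V) : SimpleGraph V where
  Adj a b := H.Adj a b ∧
    ¬ (∃ φ : G ≃g G, (φ u0 = a ∧ φ v0 = b) ∨ (φ u0 = b ∧ φ v0 = a))
  symm := by
    constructor
    intro a b ⟨h1, h2⟩
    refine ⟨h1.symm, fun ⟨φ, hc⟩ => h2 ⟨φ, ?_⟩⟩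
    rcases hc with ⟨hc1, hc2⟩ | ⟨hc1, hc2⟩
    · exact Or.inr ⟨hc1, hc2⟩
    · exact Or.inl ⟨hc1, hc2⟩
  loopless := ⟨fun a ⟨h1, _⟩ => H.irrefl h1⟩

lemma delOrbit_inv {G H : SimpleGraph V} (hinv : ∀ (φ : G ≃g G) u v, H.Adj u v → H.Adj (φ u) (φ v))
    (u0 v0 : V) (ψ : G ≃g G) (a b : V) (h : (delOrbit G H u0 v0).Adj a b) :
    (delOrbit G H u0 v0).Adj (ψ a) (ψ b) := by
  refine ⟨hinv ψ a b h.1, fun ⟨φ, hc⟩ => h.2 ⟨φ.trans ψ.symm, ?_⟩⟩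
  rcases hc with ⟨hc1, hc2⟩ | ⟨hc1, hc2⟩
  · exact Or.inl ⟨by simp [RelIso.trans_apply, hc1], by simp [RelIso.trans_apply, hc2]⟩
  · exact Or.inr ⟨by simp [RelIso.trans_apply, hc1], by simp [RelIso.trans_apply, hc2]⟩

lemma main_aux (G : SimpleGraph V) (htrans : ∀ u v : V, ∃ φ : G ≃g G, φ u = v)
    {x : ℝ} (hx : x ∈ Set.Ioo (0:ℝ) 1) :
    ∀ (n : ℕ) (H : SimpleGraph V),
      (∀ (φ : G ≃g G) u v, H.Adj u v → H.Adj (φ u) (φ v)) →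
      H.edgeSet.ncard = n →
      ∀ A : Matrix V V ℝ, IsMaxA H x A →
      (∀ u v, H.Adj u v → A⁻¹ u v < 0) ∧ (∀ u v, u ≠ v → ¬ H.Adj u v → A u v < x) := by
  classical
  intro n
  induction n using Nat.strong_induction_on with
  | _ n IH =>
    intro H hinv hcard A hA
    obtain ⟨hx0, hx1⟩ := hx
    have hpd : A.PosDef := hA.1.1
    have hdiag : ∀ i, A i i = 1 := hA.1.2.1
    have hedge : ∀ i j, H.Adj i j → A i j = x := hA.1.2.2
    have hAunit : IsUnit A.det := isUnit_iff_ne_zero.mpr hpd.det_pos.ne'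
    set B := A⁻¹ with hBdef
    have hBpd : B.PosDef := hpd.inv
    have hB0 : ∀ i j, i ≠ j → ¬ H.Adj i j → B i j = 0 := fun i j h1 h2 =>
      inv_zero_of_not_adj hA h1 h2
    have hBsym : ∀ i j, B i j = B j i := by
      intro i j
      have h1 : Bᴴ i j = B i j := by rw [hBpd.isHermitian]
      rw [Matrix.conjTranspose_apply, star_trivial] at h1
      exact h1.symm
    -- invariance of A and B under automorphisms of G
    have hAinv : ∀ (φ : G ≃g G) i j, A (φ i) (φ j) = A i j := by
      intro φ i j
      have h1 : A.submatrix φ.toEquiv φ.toEquiv = A :=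
        isMaxA_invariant hA φ.toEquiv (fun u v h => hinv φ u v h)
      have := congrFun (congrFun h1 i) j
      simpa using this
    have hBinv : ∀ (φ : G ≃g G) i j, B (φ i) (φ j) = B i j := by
      intro φ i j
      have h1 : A.submatrix φ.toEquiv φ.toEquiv = A :=
        isMaxA_invariant hA φ.toEquiv (fun u v h => hinv φ u v h)
      have h2 : (A⁻¹).submatrix φ.toEquiv φ.toEquiv = A⁻¹ :=
        inv_submatrix_invariant hpd φ.toEquiv h1
      have := congrFun (congrFun h2 i) j
      simpa using this
    have hBdiag : ∀ i j, B i i = B j j := by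
      intro i j
      obtain ⟨φ, hφ⟩ := htrans i j
      have := hBinv φ i i
      rw [hφ] at this
      exact this.symm
    -- the key nonpositivity of B on edges
    have hBedge_nonpos : ∀ u0 v0, H.Adj u0 v0 → B u0 v0 ≤ 0 := by
      intro u0 v0 hadj
      set H'' := delOrbit G H u0 v0 with hH''
      have hinv'' := fun ψ a b h => delOrbit_inv hinv u0 v0 ψ a b h
      have hss : H''.edgeSet ⊂ H.edgeSet := by
        constructor
        · intro e he
          induction e with
          | _ a b => exact (SimpleGraph.mem_edgeSet _).mpr ((SimpleGraph.mem_edgeSet _).mp he).1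
        · intro hsub
          have h1 : s(u0, v0) ∈ H.edgeSet := (SimpleGraph.mem_edgeSet _).mpr hadj
          have h2 := hsub h1
          have h3 : H''.Adj u0 v0 := (SimpleGraph.mem_edgeSet _).mp h2
          exact h3.2 ⟨RelIso.refl _, Or.inl ⟨rfl, rfl⟩⟩
      have hlt : H''.edgeSet.ncard < n := by
        rw [← hcard]
        exact Set.ncard_lt_ncard hss H.edgeSet.toFinite
      obtain ⟨A'', hA''⟩ := exists_isMaxA H'' ⟨hx0, hx1⟩
      have hIH := (IH _ hlt H'' hinv'' rfl A'' hA'').2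
      -- A is feasible for H''
      have hAfeas : memA H'' x A := ⟨hpd, hdiag, fun i j hij => hedge i j hij.1⟩
      have hdetle : A.det ≤ A''.det := hA''.2 A hAfeas
      have hA''pd : A''.PosDef := hA''.1.1
      -- core inequality
      have hcore := (core_ineq hA''pd hBpd).1
      have hdetB : B.det = A.det⁻¹ := by
        rw [hBdef, Matrix.det_nonsing_inv, Ring.inverse_eq_inv']
      have hlogle : Real.log A.det ≤ Real.log A''.det :=
        Real.log_le_log hpd.det_pos hdetle
      have htrA : (B * A).trace = (Fintype.card V : ℝ) := by
        rw [hBdef, Matrix.nonsing_inv_mul A hAunit, Matrix.trace_one]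
      have hge : (0:ℝ) ≤ (B * A'').trace - (B * A).trace := by
        rw [hdetB, Real.log_inv] at hcore
        rw [htrA]
        linarith
      -- evaluate the trace difference termwise
      have htrdiff : (B * A'').trace - (B * A).trace
          = ∑ p ∈ Finset.univ ×ˢ Finset.univ, B p.1 p.2 * (A'' p.2 p.1 - A p.2 p.1) := by
        rw [trace_mul_apply, trace_mul_apply, ← Finset.sum_sub_distrib]
        rw [Finset.sum_product]
        refine Finset.sum_congr rfl fun u _ => ?_
        rw [← Finset.sum_sub_distrib]
        refine Finset.sum_congr rfl fun w _ => ?_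
        ring
      set β := B u0 v0 with hβ
      by_contra hcon
      push_neg at hcon
      -- every term is ≤ 0, and the (u0,v0) term is < 0
      have hterm_le : ∀ p ∈ Finset.univ ×ˢ Finset.univ,
          B p.1 p.2 * (A'' p.2 p.1 - A p.2 p.1) ≤ 0 := by
        rintro ⟨u, w⟩ _
        by_cases h1 : u = w
        · subst h1
          rw [hA''.1.2.1, hdiag]
          simp
        · by_cases h2 : H.Adj u w
          · by_cases h3 : H''.Adj u w
            · rw [hedge w u h2.symm, hA''.1.2.2 w u h3.symm]
              simp
            · -- orbit pair
              have horb : ∃ φ : G ≃g G, (φ u0 = u ∧ φ v0 = w) ∨ (φ u0 = w ∧ φ v0 = u) := by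
                by_contra hno
                exact h3 ⟨h2, hno⟩
              obtain ⟨φ, hφ⟩ := horb
              have hBuw : B u w = β := by
                rcases hφ with ⟨he1, he2⟩ | ⟨he1, he2⟩
                · rw [← he1, ← he2, hBinv φ u0 v0]
                · rw [← he1, ← he2, hBsym, hBinv φ u0 v0]
              have hA''lt : A'' w u < x := by
                refine hIH w u (fun hc => h1 (hc.symm)) ?_
                intro hc
                refine hc.2 ⟨φ, ?_⟩
                rcases hφ with ⟨he1, he2⟩ | ⟨he1, he2⟩
                · exact Or.inr ⟨he1, he2⟩
                · exact Or.inl ⟨he1, he2⟩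
              rw [hBuw, hedge w u h2.symm]
              nlinarith
          · rw [hB0 u w h1 h2]
            simp
      have hterm_lt : B (u0, v0).1 (u0, v0).2 * (A'' (u0, v0).2 (u0, v0).1 - A (u0, v0).2 (u0, v0).1) < 0 := by
        simp only
        have hne : u0 ≠ v0 := hadj.ne
        have hA''lt : A'' v0 u0 < x := by
          refine hIH v0 u0 (Ne.symm hne) ?_
          intro hc
          exact hc.2 ⟨RelIso.refl _, Or.inr ⟨rfl, rfl⟩⟩
        rw [hedge v0 u0 hadj.symm]
        nlinarith
      have hsumlt : ∑ p ∈ Finset.univ ×ˢ Finset.univ,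
          B p.1 p.2 * (A'' p.2 p.1 - A p.2 p.1) < 0 := by
        have h := Finset.sum_lt_sum (g := fun _ : V × V => (0:ℝ)) hterm_le
          ⟨(u0, v0), Finset.mem_product.mpr ⟨Finset.mem_univ _, Finset.mem_univ _⟩, hterm_lt⟩
        simpa using h
      rw [htrdiff] at hge
      linarith
    -- full nonpositivity off the diagonal
    have hBnonpos : ∀ i j, i ≠ j → B i j ≤ 0 := by
      intro i j hij
      by_cases hadj : H.Adj i j
      · exact hBedge_nonpos i j hadj
      · rw [hB0 i j hij hadj]
    -- part (ii)
    have hpart2 : ∀ u v, u ≠ v → ¬ H.Adj u v → A u v < x := fun u v huv hna =>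
      max_principle ⟨hx0, hx1⟩ hpd hdiag hedge hB0 hBdiag hBnonpos huv hna
    refine ⟨?_, hpart2⟩
    -- part (i): strictness
    intro u0 v0 hadj
    rcases lt_or_eq_of_le (hBedge_nonpos u0 v0 hadj) with h | h
    · exact h
    · exfalso
      -- B vanishes on the whole orbit of (u0,v0); apply the max principle to H - orbit
      set H'' := delOrbit G H u0 v0 with hH''
      have hedge'' : ∀ i j, H''.Adj i j → A i j = x := fun i j hij => hedge i j hij.1
      have hB0'' : ∀ i j, i ≠ j → ¬ H''.Adj i j → B i j = 0 := by
        intro i j hij hna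
        by_cases hadj2 : H.Adj i j
        · have horb : ∃ φ : G ≃g G, (φ u0 = i ∧ φ v0 = j) ∨ (φ u0 = j ∧ φ v0 = i) := by
            by_contra hno
            exact hna ⟨hadj2, hno⟩
          obtain ⟨φ, hφ⟩ := horb
          rcases hφ with ⟨he1, he2⟩ | ⟨he1, he2⟩
          · rw [← he1, ← he2, hBinv φ u0 v0, ← h]
          · rw [← he1, ← he2, hBsym, hBinv φ u0 v0, ← h]
        · exact hB0 i j hij hadj2
      have hne : u0 ≠ v0 := hadj.ne
      have hna'' : ¬ H''.Adj u0 v0 := fun hc => hc.2 ⟨RelIso.refl _, Or.inl ⟨rfl, rfl⟩⟩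
      have := max_principle (K := H'') ⟨hx0, hx1⟩ hpd hdiag hedge'' hB0'' hBdiag hBnonpos hne hna''
      rw [hedge u0 v0 hadj] at this
      exact lt_irrefl x this

end Infra

theorem statement_15 {V : Type*} [Fintype V] [DecidableEq V] (G : SimpleGraph V)
    (htrans : ∀ u v : V, ∃ φ : G ≃g G, φ u = v)
    (x : ℝ) (hx : x ∈ Set.Ioo (0 : ℝ) 1)
    (A : Matrix V V ℝ) (hA : IsMaxA G x A) :
    (∀ u v : V, G.Adj u v → 0 < -(A⁻¹ u v)) ∧
    (∀ u v : V, u ≠ v → ¬ G.Adj u v → A u v < x) := by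
  have main := main_aux G htrans hx G.edgeSet.ncard G
    (fun φ u v h => φ.map_rel_iff.mpr h) rfl A hA
  exact ⟨fun u v h => neg_pos.mpr (main.1 u v h), main.2⟩
end

section
/- Let d ≥ 1 and let G be a finite simple d-regular graph on v(G) vertices. Then for every x ∈ (0,1), τ(G,x)^{1/v(G)} ≤ τ(K_{d+1}, x)^{1/(d+1)}, where K_{d+1} is the complete graph on d+1 vertices. -/
open Matrix Finset Real

/-! ### Auxiliary scalar analysis -/

lemma log_cubic_bound {u : ℝ} (h0 : 0 < u) (h1 : u < 1) :
    Real.log (1 - u) + u + u ^ 2 / 2 < 0 := by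
  have key : StrictAntiOn (fun t : ℝ => Real.log (1 - t) + t + t ^ 2 / 2) (Set.Icc 0 u) := by
    apply strictAntiOn_of_deriv_neg (convex_Icc 0 u)
    · apply ContinuousOn.add
      apply ContinuousOn.add
      · apply ContinuousOn.log
        · fun_prop
        · intro t ht
          simp only [Set.mem_Icc] at ht
          nlinarith [ht.2]
      · fun_prop
      · fun_prop
    · intro t ht
      rw [interior_Icc] at ht
      obtain ⟨ht0, htu⟩ := ht
      have htlt1 : t < 1 := htu.trans h1
      have hne : 1 - t ≠ 0 := by nlinarith
      have hd : HasDerivAt (fun t : ℝ => Real.log (1 - t) + t + t ^ 2 / 2)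
          (-1 / (1 - t) + 1 + t) t := by
        have h₁ : HasDerivAt (fun t : ℝ => 1 - t) (-1) t := by
          simpa using (hasDerivAt_id t).const_sub 1
        have h₂ := (h₁.log hne)
        have h₃ : HasDerivAt (fun t : ℝ => t ^ 2 / 2) t t := by
          simpa using (hasDerivAt_pow 2 t).div_const 2
        exact (h₂.add (hasDerivAt_id t)).add h₃
      rw [hd.deriv]
      rw [div_add' _ _ _ hne, div_add' _ _ _ hne]
      apply div_neg_of_neg_of_pos
      · nlinarith
      · nlinarith
  have := key (Set.left_mem_Icc.2 h0.le) (Set.right_mem_Icc.2 h0.le) h0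
  simpa using this

noncomputable def gfun (b c c0 c1 a μ : ℝ) : ℝ :=
  Real.log (b + c * μ) - (c0 + c1 * (μ + 1) + a * (μ + 1) ^ 2)

noncomputable def phifun (b c c1 a μ : ℝ) : ℝ :=
  c * (b + c * μ)⁻¹ - c1 - 2 * a * (μ + 1)

noncomputable def psifun (b c a μ : ℝ) : ℝ :=
  -c ^ 2 / (b + c * μ) ^ 2 - 2 * a

lemma haff (b c μ : ℝ) : HasDerivAt (fun t : ℝ => b + c * t) c μ := by
  simpa using ((hasDerivAt_id μ).const_mul c).const_add b

lemma hg' (b c c0 c1 a μ : ℝ) (h : 0 < b + c * μ) :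
    HasDerivAt (gfun b c c0 c1 a) (phifun b c c1 a μ) μ := by
  have hlog := (haff b c μ).log (ne_of_gt h)
  have h₁ : HasDerivAt (fun t : ℝ => t + 1) 1 μ := (hasDerivAt_id μ).add_const 1
  have hq : HasDerivAt (fun t : ℝ => c0 + c1 * (t + 1) + a * (t + 1) ^ 2)
      (c1 + 2 * a * (μ + 1)) μ := by
    have h₂ := (h₁.const_mul c1).const_add c0
    have h₃ := (h₁.pow 2).const_mul a
    exact (h₂.add h₃).congr_deriv (by rw [show (2:ℕ) - 1 = 1 from rfl]; ring)
  have := hlog.sub hq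
  refine this.congr_deriv ?_
  unfold phifun
  rw [div_eq_mul_inv]
  ring

lemma hphi' (b c c1 a μ : ℝ) (h : 0 < b + c * μ) :
    HasDerivAt (phifun b c c1 a) (psifun b c a μ) μ := by
  have hinv := ((haff b c μ).inv (ne_of_gt h)).const_mul c
  have h₁ : HasDerivAt (fun t : ℝ => c1 + 2 * a * (t + 1)) (2 * a) μ := by
    simpa using (((hasDerivAt_id μ).add_const 1).const_mul (2 * a)).const_add c1
  have := hinv.sub h₁
  have hf : phifun b c c1 a = (fun y => c * (fun t => b + c * t)⁻¹ y) - fun t => c1 + 2 * a * (t + 1) := by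
    funext t; unfold phifun; simp only [Pi.sub_apply, Pi.inv_apply]; ring
  rw [hf]
  refine this.congr_deriv ?_
  · unfold psifun
    field_simp

lemma psi_anti {b c a : ℝ} (hc : c < 0) {s t : ℝ} (hst : s < t) (ht : 0 < b + c * t) :
    psifun b c a t < psifun b c a s := by
  have hs : 0 < b + c * s := by nlinarith
  have hlt : b + c * t < b + c * s := by nlinarith
  unfold psifun
  have h2 : (b + c * t) ^ 2 < (b + c * s) ^ 2 := by nlinarith
  have hc0 : c ≠ 0 := ne_of_lt hc
  have hc2 : 0 < c ^ 2 := by positivity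
  have h3 : c ^ 2 / (b + c * s) ^ 2 < c ^ 2 / (b + c * t) ^ 2 :=
    div_lt_div_of_pos_left hc2 (by positivity) h2
  rw [neg_div, neg_div]
  linarith

lemma key (b c a c0 c1 dr : ℝ) (hdr : 1 ≤ dr) (hc : c < 0)
    (hbd : 0 < b + c * dr)
    (h1 : c0 = Real.log (b - c))
    (h2 : c1 = c / (b - c))
    (h3 : Real.log (b + c * dr) = c0 + c1 * (dr + 1) + a * (dr + 1) ^ 2)
    (hK2 : 2 * a < -(c / (b - c)) ^ 2) :
    ∀ μ ∈ Set.Icc (-dr) dr, c0 + c1 * (μ + 1) + a * (μ + 1) ^ 2 ≤ Real.log (b + c * μ) := by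
  have pos : ∀ μ : ℝ, μ ≤ dr → 0 < b + c * μ := by
    intro μ hμ; nlinarith
  have hbc : 0 < b - c := by
    have := pos (-1) (by linarith)
    nlinarith
  have gm1 : gfun b c c0 c1 a (-1) = 0 := by
    unfold gfun; rw [h1]; ring_nf
  have phim1 : phifun b c c1 a (-1) = 0 := by
    unfold phifun; rw [h2, show b + c * (-1) = b - c by ring, div_eq_mul_inv]; ring
  have gd : gfun b c c0 c1 a dr = 0 := by
    unfold gfun; rw [h3]; ring
  have contg : ∀ s : Set ℝ, (∀ μ ∈ s, μ ≤ dr) → ContinuousOn (gfun b c c0 c1 a) s := by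
    intro s hs μ hμ
    exact (hg' b c c0 c1 a μ (pos μ (hs μ hμ))).continuousAt.continuousWithinAt
  have contphi : ∀ s : Set ℝ, (∀ μ ∈ s, μ ≤ dr) → ContinuousOn (phifun b c c1 a) s := by
    intro s hs μ hμ
    exact (hphi' b c c1 a μ (pos μ (hs μ hμ))).continuousAt.continuousWithinAt
  have step1 : ∀ μ ∈ Set.Icc (-dr) (-1 : ℝ), 0 ≤ gfun b c c0 c1 a μ := by
    intro μ hμ
    obtain ⟨hμ1, hμ2⟩ := hμ
    have hpsi_pos : ∀ t ∈ Set.Ioo (-dr) (-1 : ℝ), 0 < psifun b c a t := by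
      intro t ht
      have h4 : psifun b c a (-1) < psifun b c a t := psi_anti hc ht.2 (pos _ (by linarith))
      have h5 : 0 ≤ psifun b c a (-1) := by
        unfold psifun
        have e1 : b + c * (-1) = b - c := by ring
        rw [e1]
        have e2 : -c ^ 2 / (b - c) ^ 2 = -(c / (b - c)) ^ 2 := by
          field_simp
        rw [e2]; linarith
      linarith
    have hmono : StrictMonoOn (phifun b c c1 a) (Set.Icc (-dr) (-1)) := by
      apply strictMonoOn_of_deriv_pos (convex_Icc _ _)
      · exact contphi _ (fun t ht => by have := ht.2; linarith)
      · intro t ht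
        rw [interior_Icc] at ht
        rw [(hphi' b c c1 a t (pos t (by linarith [ht.2]))).deriv]
        exact hpsi_pos t ht
    have hphi_neg : ∀ t ∈ Set.Ioo (-dr) (-1 : ℝ), phifun b c c1 a t < 0 := by
      intro t ht
      have := hmono (Set.mem_Icc.2 ⟨ht.1.le, ht.2.le⟩)
        (Set.mem_Icc.2 ⟨by linarith, le_refl _⟩) ht.2
      rwa [phim1] at this
    have hanti : StrictAntiOn (gfun b c c0 c1 a) (Set.Icc (-dr) (-1)) := by
      apply strictAntiOn_of_deriv_neg (convex_Icc _ _)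
      · exact contg _ (fun t ht => by have := ht.2; linarith)
      · intro t ht
        rw [interior_Icc] at ht
        rw [(hg' b c c0 c1 a t (pos t (by linarith [ht.2]))).deriv]
        exact hphi_neg t ht
    rcases eq_or_lt_of_le hμ2 with h | h
    · rw [h, gm1]
    · have := hanti (Set.mem_Icc.2 ⟨hμ1, hμ2⟩)
        (Set.mem_Icc.2 ⟨by linarith, le_refl _⟩) h
      rw [gm1] at this; linarith
  have step2 : ∀ μ ∈ Set.Icc (-1 : ℝ) dr, 0 ≤ gfun b c c0 c1 a μ := by
    have hne : Set.Nonempty (Set.Icc (-1 : ℝ) dr) := ⟨-1, by constructor <;> linarith⟩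
    obtain ⟨m, hm, hmin⟩ := isCompact_Icc.exists_isMinOn hne
      (contg _ (fun t ht => ht.2))
    intro μ hμ
    by_contra hcon
    push_neg at hcon
    have hgm : gfun b c c0 c1 a m < 0 := lt_of_le_of_lt (hmin hμ) hcon
    have hm1 : -1 < m := by
      rcases eq_or_lt_of_le hm.1 with h | h
      · rw [← h, gm1] at hgm; linarith
      · exact h
    have hmd : m < dr := by
      rcases eq_or_lt_of_le hm.2 with h | h
      · rw [h, gd] at hgm; linarith
      · exact h
    have hloc : IsLocalMin (gfun b c c0 c1 a) m :=
      hmin.isLocalMin (Icc_mem_nhds hm1 hmd)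
    have hphim : phifun b c c1 a m = 0 :=
      hloc.hasDerivAt_eq_zero (hg' b c c0 c1 a m (pos m hm.2))
    rcases le_or_gt 0 (psifun b c a m) with hpm | hpm
    · have hmono : StrictMonoOn (phifun b c c1 a) (Set.Icc (-1) m) := by
        apply strictMonoOn_of_deriv_pos (convex_Icc _ _)
        · exact contphi _ (fun t ht => le_trans ht.2 hm.2)
        · intro t ht
          rw [interior_Icc] at ht
          rw [(hphi' b c c1 a t (pos t (le_trans ht.2.le hm.2))).deriv]
          have := psi_anti (b := b) (a := a) hc ht.2 (pos m hm.2)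
          linarith
      have := hmono (Set.mem_Icc.2 ⟨le_refl _, by linarith⟩)
        (Set.mem_Icc.2 ⟨hm1.le, le_refl _⟩) hm1
      rw [phim1, hphim] at this; linarith
    · have hanti : StrictAntiOn (phifun b c c1 a) (Set.Icc m dr) := by
        apply strictAntiOn_of_deriv_neg (convex_Icc _ _)
        · exact contphi _ (fun t ht => ht.2)
        · intro t ht
          rw [interior_Icc] at ht
          rw [(hphi' b c c1 a t (pos t ht.2.le)).deriv]
          have := psi_anti (b := b) (a := a) hc ht.1 (pos t ht.2.le)
          linarith
      have hphi_neg : ∀ t ∈ Set.Ioo m dr, phifun b c c1 a t < 0 := by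
        intro t ht
        have := hanti (Set.mem_Icc.2 ⟨le_refl _, by linarith⟩)
          (Set.mem_Icc.2 ⟨ht.1.le, ht.2.le⟩) ht.1
        rw [hphim] at this; linarith
      have hganti : StrictAntiOn (gfun b c c0 c1 a) (Set.Icc m dr) := by
        apply strictAntiOn_of_deriv_neg (convex_Icc _ _)
        · exact contg _ (fun t ht => ht.2)
        · intro t ht
          rw [interior_Icc] at ht
          rw [(hg' b c c0 c1 a t (pos t ht.2.le)).deriv]
          exact hphi_neg t ht
      have := hganti (Set.mem_Icc.2 ⟨le_refl _, hmd.le⟩)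
        (Set.mem_Icc.2 ⟨hmd.le, le_refl _⟩) hmd
      rw [gd] at this; linarith
  intro μ hμ
  have : 0 ≤ gfun b c c0 c1 a μ := by
    rcases le_or_gt μ (-1) with h | h
    · exact step1 μ ⟨hμ.1, h⟩
    · exact step2 μ ⟨h.le, hμ.2⟩
  unfold gfun at this
  linarith

/-! ### Spectral facts for real symmetric matrices -/

section spectral
variable {V : Type*} [Fintype V] [DecidableEq V]
variable {M : Matrix V V ℝ} (hM : M.IsHermitian)

lemma diagonal_eigs (β γ : ℝ) :
    diagonal (fun i => β + γ * hM.eigenvalues i)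
      = β • (1 : Matrix V V ℝ) + γ • diagonal (RCLike.ofReal ∘ hM.eigenvalues) := by
  ext i j
  by_cases h : i = j
  · subst h; simp [diagonal_apply, one_apply, RCLike.ofReal]
  · simp [diagonal_apply_ne _ h, one_apply_ne h, h]

lemma trace_eq_sum_eigs : M.trace = ∑ i, hM.eigenvalues i := by
  set U : Matrix V V ℝ := (hM.eigenvectorUnitary : Matrix V V ℝ)
  set sU : Matrix V V ℝ := star (hM.eigenvectorUnitary : Matrix V V ℝ)
  have hU : sU * U = 1 := (Matrix.mem_unitaryGroup_iff').mp hM.eigenvectorUnitary.2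
  conv_lhs => rw [hM.spectral_theorem, Unitary.conjStarAlgAut_apply]
  rw [trace_mul_comm, ← mul_assoc, hU, one_mul, trace_diagonal]
  simp

lemma trace_sq_eq_sum_sq : (M * M).trace = ∑ i, hM.eigenvalues i ^ 2 := by
  set U : Matrix V V ℝ := (hM.eigenvectorUnitary : Matrix V V ℝ)
  set sU : Matrix V V ℝ := star (hM.eigenvectorUnitary : Matrix V V ℝ)
  set D : Matrix V V ℝ := diagonal (RCLike.ofReal ∘ hM.eigenvalues)
  have hU : sU * U = 1 := (Matrix.mem_unitaryGroup_iff').mp hM.eigenvectorUnitary.2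
  have h1 : (U * D * sU) * (U * D * sU) = U * (D * D) * sU := by
    calc (U * D * sU) * (U * D * sU) = U * D * (sU * U) * D * sU := by
          simp only [mul_assoc]
      _ = U * (D * D) * sU := by rw [hU, mul_one]; simp only [mul_assoc]
  conv_lhs => rw [hM.spectral_theorem, Unitary.conjStarAlgAut_apply]
  rw [h1, trace_mul_comm, ← mul_assoc, hU, one_mul]
  show (D * D).trace = _
  rw [show D * D = diagonal ((RCLike.ofReal ∘ hM.eigenvalues) * (RCLike.ofReal ∘ hM.eigenvalues))
    from diagonal_mul_diagonal _ _, trace_diagonal]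
  simp [pow_two, RCLike.ofReal]

lemma det_smul_one_add_smul (β γ : ℝ) :
    (β • (1 : Matrix V V ℝ) + γ • M).det = ∏ i, (β + γ * hM.eigenvalues i) := by
  set U : Matrix V V ℝ := (hM.eigenvectorUnitary : Matrix V V ℝ)
  set sU : Matrix V V ℝ := star (hM.eigenvectorUnitary : Matrix V V ℝ)
  set D : Matrix V V ℝ := diagonal (RCLike.ofReal ∘ hM.eigenvalues)
  have hU : sU * U = 1 := (Matrix.mem_unitaryGroup_iff').mp hM.eigenvectorUnitary.2
  have hU' : U * sU = 1 := (Matrix.mem_unitaryGroup_iff).mp hM.eigenvectorUnitary.2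
  have key : β • (1 : Matrix V V ℝ) + γ • M
      = U * diagonal (fun i => β + γ * hM.eigenvalues i) * sU := by
    rw [diagonal_eigs hM]
    show _ = U * (β • (1 : Matrix V V ℝ) + γ • D) * sU
    rw [Matrix.mul_add, Matrix.add_mul, Matrix.mul_smul, Matrix.smul_mul, Matrix.mul_smul,
      Matrix.smul_mul, mul_one, hU']
    congr 1
    conv_lhs => rw [hM.spectral_theorem, Unitary.conjStarAlgAut_apply]
  rw [key, det_mul, det_mul, det_diagonal]
  rw [mul_comm (U.det), mul_assoc, ← det_mul, hU', det_one, mul_one]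

open scoped MatrixOrder in
lemma master_det_le {M B : Matrix V V ℝ} (hM : M.PosDef) (hB : B.PosDef) :
    M.det * B.det ≤ Real.exp ((B * M).trace - Fintype.card V) := by
  set S : Matrix V V ℝ := CFC.sqrt M with hS
  have hSherm : S.IsHermitian := (CFC.sqrt_nonneg M).posSemidef.1
  have hSS : S * S = M := by
    have := CFC.sq_sqrt M hM.posSemidef.nonneg
    rwa [pow_two] at this
  set C : Matrix V V ℝ := S * B * S with hC
  have hCpsd : C.PosSemidef := by
    have := hB.posSemidef.mul_mul_conjTranspose_same S
    rwa [hSherm.eq] at this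
  have hdetC : C.det = M.det * B.det := by
    rw [hC, det_mul, det_mul, mul_comm, ← mul_assoc, ← det_mul, hSS, mul_comm]
  have htrC : C.trace = (B * M).trace := by
    rw [hC, trace_mul_comm, ← mul_assoc, hSS, trace_mul_comm]
  rw [← hdetC, ← htrC]
  have hdet := hCpsd.1.det_eq_prod_eigenvalues
  have htr := trace_eq_sum_eigs hCpsd.1
  rw [htr]
  have hdet' : C.det = ∏ i, hCpsd.1.eigenvalues i := by exact_mod_cast hdet
  rw [hdet']
  have hle : ∏ i, hCpsd.1.eigenvalues i ≤ ∏ i, Real.exp (hCpsd.1.eigenvalues i - 1) := by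
    apply Finset.prod_le_prod
    · intro i _; exact hCpsd.eigenvalues_nonneg i
    · intro i _
      have := Real.add_one_le_exp (hCpsd.1.eigenvalues i - 1)
      linarith
  calc ∏ i, hCpsd.1.eigenvalues i ≤ ∏ i, Real.exp (hCpsd.1.eigenvalues i - 1) := hle
    _ = Real.exp (∑ i, (hCpsd.1.eigenvalues i - 1)) := by rw [Real.exp_sum]
    _ = Real.exp ((∑ i, hCpsd.1.eigenvalues i) - Fintype.card V) := by
        rw [Finset.sum_sub_distrib]
        simp

end spectral

/-! ### Adjacency matrix facts -/

section adjacency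
variable {V : Type*} [Fintype V] [DecidableEq V]
variable (G : SimpleGraph V) [DecidableRel G.Adj]

lemma adj_row_sum {d : ℕ} (hreg : G.IsRegularOfDegree d) (i : V) :
    ∑ j, G.adjMatrix ℝ i j = (d : ℝ) := by
  simp [SimpleGraph.adjMatrix]
  rw [show Finset.filter (fun x => G.Adj i x) Finset.univ = G.neighborFinset i from
    (SimpleGraph.neighborFinset_eq_filter G).symm]
  rw [show (G.neighborFinset i).card = G.degree i from rfl, hreg i]

lemma adj_quad_bound {d : ℕ} (hreg : G.IsRegularOfDegree d) (v : V → ℝ) :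
    |∑ i, ∑ j, G.adjMatrix ℝ i j * v i * v j| ≤ (d : ℝ) * ∑ i, v i ^ 2 := by
  have hsym : ∀ i j, G.adjMatrix ℝ i j = G.adjMatrix ℝ j i := by
    intro i j; simp [SimpleGraph.adjMatrix_apply, SimpleGraph.adj_comm]
  have hrow : ∀ i, ∑ j, G.adjMatrix ℝ i j = (d : ℝ) := adj_row_sum G hreg
  have hnn : ∀ i j, 0 ≤ G.adjMatrix ℝ i j := by
    intro i j; simp [SimpleGraph.adjMatrix_apply]; positivity
  have habs : ∀ i j, G.adjMatrix ℝ i j * v i * v j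
      ≤ G.adjMatrix ℝ i j * (v i ^ 2 + v j ^ 2) / 2 := by
    intro i j
    have h1 : 0 ≤ G.adjMatrix ℝ i j * (v i - v j) ^ 2 := mul_nonneg (hnn i j) (sq_nonneg _)
    nlinarith
  have habs' : ∀ i j, -(G.adjMatrix ℝ i j * (v i ^ 2 + v j ^ 2) / 2)
      ≤ G.adjMatrix ℝ i j * v i * v j := by
    intro i j
    have h1 : 0 ≤ G.adjMatrix ℝ i j * (v i + v j) ^ 2 := mul_nonneg (hnn i j) (sq_nonneg _)
    nlinarith
  have hbig : ∑ i, ∑ j, G.adjMatrix ℝ i j * (v i ^ 2 + v j ^ 2) / 2 = (d : ℝ) * ∑ i, v i ^ 2 := by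
    have hsplit : ∀ i j, G.adjMatrix ℝ i j * (v i ^ 2 + v j ^ 2) / 2
        = G.adjMatrix ℝ i j * v i ^ 2 / 2 + G.adjMatrix ℝ i j * v j ^ 2 / 2 := by
      intro i j; ring
    simp_rw [hsplit, Finset.sum_add_distrib]
    have e1 : ∑ i, ∑ j, G.adjMatrix ℝ i j * v i ^ 2 / 2 = (d : ℝ) * (∑ i, v i ^ 2) / 2 := by
      have h2 : ∀ i, ∑ j, G.adjMatrix ℝ i j * v i ^ 2 / 2 = (d : ℝ) * v i ^ 2 / 2 := by
        intro i
        rw [← Finset.sum_div, ← Finset.sum_mul, hrow]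
      simp_rw [h2]
      rw [← Finset.sum_div, ← Finset.mul_sum]
    have e2 : ∑ i, ∑ j, G.adjMatrix ℝ i j * v j ^ 2 / 2 = (d : ℝ) * (∑ i, v i ^ 2) / 2 := by
      rw [Finset.sum_comm]
      calc ∑ j, ∑ i, G.adjMatrix ℝ i j * v j ^ 2 / 2 = ∑ j, (d:ℝ) * v j ^ 2/2 := by
            apply Finset.sum_congr rfl
            intro j _
            have h3 : ∀ i, G.adjMatrix ℝ i j = G.adjMatrix ℝ j i := fun i => hsym i j
            simp_rw [h3]
            rw [← Finset.sum_div, ← Finset.sum_mul, hrow]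
        _ = (d : ℝ) * (∑ i, v i ^ 2) / 2 := by rw [← Finset.sum_div, ← Finset.mul_sum]
    rw [e1, e2]; ring
  rw [abs_le]
  constructor
  · have h := Finset.sum_le_sum (fun i (_ : i ∈ Finset.univ) =>
      Finset.sum_le_sum fun j (_ : j ∈ Finset.univ) => habs' i j)
    have hL : ∑ i, ∑ j, -(G.adjMatrix ℝ i j * (v i ^ 2 + v j ^ 2) / 2)
        = -((d : ℝ) * ∑ i, v i ^ 2) := by
      rw [← hbig]
      simp [Finset.sum_neg_distrib]
    rw [hL] at h
    exact h
  · rw [← hbig]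
    exact Finset.sum_le_sum fun i _ => Finset.sum_le_sum fun j _ => habs i j

lemma adj_isHermitian : (G.adjMatrix ℝ).IsHermitian := by
  show (G.adjMatrix ℝ)ᴴ = G.adjMatrix ℝ
  ext i j
  simp [Matrix.conjTranspose_apply, SimpleGraph.adjMatrix_apply, SimpleGraph.adj_comm]

lemma adj_eigs_bound {d : ℕ} (hreg : G.IsRegularOfDegree d)
    (hH : (G.adjMatrix ℝ).IsHermitian) (i : V) :
    hH.eigenvalues i ∈ Set.Icc (-(d : ℝ)) d := by
  set v : V → ℝ := ⇑(hH.eigenvectorBasis i) with hv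
  have hev : G.adjMatrix ℝ *ᵥ v = hH.eigenvalues i • v := hH.mulVec_eigenvectorBasis i
  have hvne : v ≠ 0 := by
    have hne := hH.eigenvectorBasis.orthonormal.ne_zero i
    intro h
    apply hne
    ext j
    have := congrFun h j
    simpa using this
  have hsum : 0 < ∑ j, v j ^ 2 := by
    rcases Function.ne_iff.mp hvne with ⟨j, hj⟩
    exact Finset.sum_pos' (fun k _ => sq_nonneg _)
      ⟨j, Finset.mem_univ j, pow_two_pos_of_ne_zero hj⟩
  have hquad : ∑ k, ∑ j, G.adjMatrix ℝ k j * v k * v j = hH.eigenvalues i * ∑ j, v j ^ 2 := by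
    have h4 : ∀ k, ∑ j, G.adjMatrix ℝ k j * v k * v j = v k * (G.adjMatrix ℝ *ᵥ v) k := by
      intro k
      rw [mulVec, dotProduct, Finset.mul_sum]
      apply Finset.sum_congr rfl
      intro j _; ring
    simp_rw [h4, hev]
    simp [Pi.smul_apply, smul_eq_mul, Finset.mul_sum]
    apply Finset.sum_congr rfl
    intro j _; ring
  have hb := adj_quad_bound G hreg v
  rw [hquad, abs_le] at hb
  constructor
  · rcases hb with ⟨h1, _⟩
    by_contra hcon
    push_neg at hcon
    nlinarith
  · rcases hb with ⟨_, h2⟩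
    by_contra hcon
    push_neg at hcon
    nlinarith

lemma B_isHermitian (β γ : ℝ) :
    (β • (1 : Matrix V V ℝ) + γ • G.adjMatrix ℝ).IsHermitian := by
  show _ᴴ = _
  rw [conjTranspose_add, conjTranspose_smul, conjTranspose_smul, conjTranspose_one,
    (adj_isHermitian G).eq, star_trivial, star_trivial]

lemma quad_expand (v : V → ℝ) :
    v ⬝ᵥ (G.adjMatrix ℝ *ᵥ v) = ∑ i, ∑ j, G.adjMatrix ℝ i j * v i * v j := by
  rw [dotProduct]
  apply Finset.sum_congr rfl
  intro i _
  rw [mulVec, dotProduct, Finset.mul_sum]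
  apply Finset.sum_congr rfl
  intro j _; ring

lemma B_posDef {d : ℕ} (hreg : G.IsRegularOfDegree d) {β γ : ℝ} (hγ : γ < 0)
    (hβd : 0 < β + γ * d) :
    (β • (1 : Matrix V V ℝ) + γ • G.adjMatrix ℝ).PosDef := by
  refine Matrix.PosDef.of_dotProduct_mulVec_pos (B_isHermitian G β γ) ?_
  intro v hv
  have hquad := adj_quad_bound G hreg v
  have hsum : 0 < ∑ j, v j ^ 2 := by
    rcases Function.ne_iff.mp hv with ⟨j, hj⟩
    exact Finset.sum_pos' (fun k _ => sq_nonneg _)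
      ⟨j, Finset.mem_univ j, pow_two_pos_of_ne_zero hj⟩
  have hexp : (star v) ⬝ᵥ ((β • (1 : Matrix V V ℝ) + γ • G.adjMatrix ℝ) *ᵥ v)
      = β * (∑ j, v j ^ 2) + γ * (∑ i, ∑ j, G.adjMatrix ℝ i j * v i * v j) := by
    rw [show (star v) = v from rfl, Matrix.add_mulVec, Matrix.smul_mulVec,
      Matrix.smul_mulVec, Matrix.one_mulVec, dotProduct_add, dotProduct_smul,
      dotProduct_smul, smul_eq_mul, smul_eq_mul, quad_expand G v]
    congr 1
    rw [dotProduct]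
    simp [pow_two]
  rw [hexp]
  have h2 := (abs_le.mp hquad).2
  nlinarith

lemma trace_BM {d : ℕ} (hreg : G.IsRegularOfDegree d) {β γ x : ℝ}
    (M : Matrix V V ℝ) (hdiag : ∀ i, M i i = 1) (hedge : ∀ i j, G.Adj i j → M i j = x) :
    ((β • (1 : Matrix V V ℝ) + γ • G.adjMatrix ℝ) * M).trace
      = (Fintype.card V : ℝ) * (β + γ * x * d) := by
  have hrow : ∀ i, ∑ j, G.adjMatrix ℝ i j = (d : ℝ) := adj_row_sum G hreg
  rw [Matrix.trace]
  have key : ∀ i, ((β • (1 : Matrix V V ℝ) + γ • G.adjMatrix ℝ) * M).diag i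
      = β + γ * (x * d) := by
    intro i
    show ∑ j, (β • (1 : Matrix V V ℝ) + γ • G.adjMatrix ℝ) i j * M j i = _
    have expand : ∀ j, (β • (1 : Matrix V V ℝ) + γ • G.adjMatrix ℝ) i j * M j i
        = β * ((1 : Matrix V V ℝ) i j * M j i) + γ * (G.adjMatrix ℝ i j * M j i) := by
      intro j
      simp only [Matrix.add_apply, Matrix.smul_apply, smul_eq_mul]
      ring
    simp_rw [expand]
    rw [Finset.sum_add_distrib, ← Finset.mul_sum, ← Finset.mul_sum]
    congr 1
    · rw [show ∑ j, (1 : Matrix V V ℝ) i j * M j i = M i i from ?_, hdiag i, mul_one]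
      rw [Finset.sum_eq_single i]
      · simp [Matrix.one_apply]
      · intro j _ hji
        simp [Matrix.one_apply_ne (Ne.symm hji)]
      · intro h; exact absurd (Finset.mem_univ i) h
    · congr 1
      have h5 : ∀ j, G.adjMatrix ℝ i j * M j i = G.adjMatrix ℝ i j * x := by
        intro j
        by_cases h : G.Adj i j
        · rw [hedge j i h.symm]
        · simp [SimpleGraph.adjMatrix_apply, h]
      simp_rw [h5]
      rw [← Finset.sum_mul, hrow, mul_comm]
  simp_rw [key]
  rw [Finset.sum_const, Finset.card_univ, nsmul_eq_mul]
  ring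

end adjacency

/-! ### Determinant of the complete graph matrix -/

lemma det_complete (d : ℕ) (x : ℝ) (hx1 : x < 1) (A' : Matrix (Fin (d+1)) (Fin (d+1)) ℝ)
    (hA' : ∀ i j, A' i j = if i = j then 1 else x) :
    A'.det = (1 - x) ^ d * (1 + d * x) := by
  have key : A' = (1 - x) • (1 + Matrix.replicateCol (Fin 1) (fun _ => x / (1-x)) * Matrix.replicateRow (Fin 1) (fun _ => (1:ℝ))) := by
    ext i j
    by_cases h : i = j
    all_goals
      have h1x : (1:ℝ) - x ≠ 0 := by linarith
      simp [hA', h, Matrix.add_apply, Matrix.one_apply, Matrix.mul_apply]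
      field_simp <;> ring
  rw [key, det_smul]; erw [det_one_add_replicateCol_mul_replicateRow (ι := Fin 1) (fun _ : Fin (d+1) => x / (1-x)) (fun _ => (1:ℝ))]
  have h1x : (1:ℝ) - x ≠ 0 := by linarith
  have hd : ((fun _ => (1:ℝ)) : Fin (d+1) → ℝ) ⬝ᵥ ((fun _ => x / (1-x)) : Fin (d+1) → ℝ) = ((d:ℝ)+1) * (x / (1-x)) := by
    simp [dotProduct]
  rw [hd]
  simp only [smul_eq_mul, Fintype.card_fin]
  rw [pow_succ]
  field_simp
  ring

/-! ### Main theorem -/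

set_option maxHeartbeats 1000000 in
theorem statement_16 {V : Type*} [Fintype V] [Nonempty V] [DecidableEq V]
    (d : ℕ) (hd : 1 ≤ d)
    (G : SimpleGraph V) [DecidableRel G.Adj] (hreg : G.IsRegularOfDegree d)
    (x : ℝ) (hx : x ∈ Set.Ioo (0 : ℝ) 1)
    (A : Matrix V V ℝ) (hA : IsMaxA G x A)
    (A' : Matrix (Fin (d + 1)) (Fin (d + 1)) ℝ)
    (hA' : IsMaxA (⊤ : SimpleGraph (Fin (d + 1))) x A') :
    A.det ^ ((1 : ℝ) / Fintype.card V) ≤ A'.det ^ ((1 : ℝ) / (d + 1)) := by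
  obtain ⟨hx0, hx1⟩ := hx
  have hdr1 : (1 : ℝ) ≤ (d : ℝ) := by exact_mod_cast hd
  have hnpos : 0 < Fintype.card V := Fintype.card_pos
  have hnR : (0:ℝ) < (Fintype.card V : ℝ) := by exact_mod_cast hnpos
  have h1x : (0:ℝ) < 1 - x := by linarith
  have hdx : (0:ℝ) < 1 + (d:ℝ) * x := by nlinarith
  have h1 : (1:ℝ) - x ≠ 0 := ne_of_gt h1x
  have h2 : (1:ℝ) + (d:ℝ) * x ≠ 0 := ne_of_gt hdx
  have hdp1 : (0:ℝ) < (d:ℝ) + 1 := by linarith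
  -- the constant D = τ(K_{d+1}, x)
  obtain ⟨D, hD⟩ : ∃ D : ℝ, D = (1 - x) ^ d * (1 + (d:ℝ) * x) := ⟨_, rfl⟩
  have hDpos : 0 < D := by rw [hD]; positivity
  -- A'.det = D
  have hdetA' : A'.det = D := by
    rw [hD]
    apply det_complete d x hx1
    intro i j
    by_cases h : i = j
    · subst h; simp [hA'.1.2.1 i]
    · simp only [h, if_false]
      exact hA'.1.2.2 i j (by simp [h])
  -- the dual matrix parameters
  obtain ⟨β, hβ⟩ : ∃ b : ℝ, b = (1 + ((d:ℝ) - 1) * x) / ((1 - x) * (1 + (d:ℝ) * x)) := ⟨_, rfl⟩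
  obtain ⟨γ, hγ⟩ : ∃ c : ℝ, c = -x / ((1 - x) * (1 + (d:ℝ) * x)) := ⟨_, rfl⟩
  have hγneg : γ < 0 := by
    rw [hγ]
    apply div_neg_of_neg_of_pos
    · linarith
    · positivity
  have hβγd : β + γ * (d:ℝ) = 1 / (1 + (d:ℝ) * x) := by
    rw [hβ, hγ]
    field_simp
    first | (left; ring) | ring | skip
    all_goals first | (exact Or.inl trivial) | (left; ring)
  have hβγd_pos : 0 < β + γ * (d:ℝ) := by rw [hβγd]; positivity
  have hβmγ : β - γ = 1 / (1 - x) := by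
    rw [hβ, hγ]
    field_simp
    first | (left; ring) | ring | skip
    all_goals first | (exact Or.inl trivial) | (left; ring)
  have hβmγ_pos : 0 < β - γ := by rw [hβmγ]; positivity
  have htr1 : β + γ * x * (d:ℝ) = 1 := by
    rw [hβ, hγ]
    field_simp
    first | (left; ring) | ring | skip
    all_goals first | (exact Or.inl trivial) | (left; ring)
  -- scalar parameters of the quadratic
  obtain ⟨c0, hc0⟩ : ∃ c0 : ℝ, c0 = Real.log (β - γ) := ⟨_, rfl⟩
  obtain ⟨c1, hc1⟩ : ∃ c1 : ℝ, c1 = γ / (β - γ) := ⟨_, rfl⟩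
  obtain ⟨a, ha⟩ : ∃ a : ℝ,
      a = (Real.log (β + γ * (d:ℝ)) - c0 - c1 * ((d:ℝ) + 1)) / ((d:ℝ) + 1) ^ 2 := ⟨_, rfl⟩
  have h3 : Real.log (β + γ * (d:ℝ)) = c0 + c1 * ((d:ℝ) + 1) + a * ((d:ℝ) + 1) ^ 2 := by
    rw [ha]
    field_simp
    ring
  -- the key scalar inequality (K2)
  obtain ⟨u, hu⟩ : ∃ u : ℝ, u = ((d:ℝ) + 1) * x / (1 + (d:ℝ) * x) := ⟨_, rfl⟩
  have hu0 : 0 < u := by rw [hu]; positivity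
  have hu1 : u < 1 := by
    rw [hu, div_lt_one hdx]
    nlinarith
  have h1u : (0:ℝ) < 1 - u := by linarith
  have hcube := log_cubic_bound hu0 hu1
  have hBGu : β + γ * (d:ℝ) = (1 - u) * (β - γ) := by
    rw [hβγd, hβmγ, hu]
    field_simp
    first | (left; ring) | ring | skip
    all_goals first | (exact Or.inl trivial) | (left; ring)
  have hlogsplit : Real.log (β + γ * (d:ℝ)) = Real.log (1 - u) + c0 := by
    rw [hBGu, Real.log_mul (ne_of_gt h1u) (ne_of_gt hβmγ_pos), hc0]
  have hc1u : c1 * ((d:ℝ) + 1) = -u := by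
    rw [hc1, hβmγ, hγ, hu]
    field_simp
    first | (left; ring) | ring | skip
    all_goals first | (exact Or.inl trivial) | (left; ring)
  have ha' : a * ((d:ℝ) + 1) ^ 2 = Real.log (1 - u) + u := by
    have e : a * ((d:ℝ) + 1) ^ 2 = Real.log (β + γ * (d:ℝ)) - c0 - c1 * ((d:ℝ) + 1) := by
      rw [ha]
      field_simp
    rw [e, hlogsplit, hc1u]
    ring
  have hc1sq : c1 ^ 2 * ((d:ℝ) + 1) ^ 2 = u ^ 2 := by
    calc c1 ^ 2 * ((d:ℝ) + 1) ^ 2 = (c1 * ((d:ℝ) + 1)) ^ 2 := by ring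
      _ = (-u) ^ 2 := by rw [hc1u]
      _ = u ^ 2 := by ring
  have hK2 : 2 * a < -(γ / (β - γ)) ^ 2 := by
    rw [← hc1]
    have h6 : 2 * (a * ((d:ℝ) + 1) ^ 2) < -(u ^ 2) := by
      rw [ha']
      nlinarith
    have hsq : (0:ℝ) < ((d:ℝ) + 1) ^ 2 := by positivity
    nlinarith [h6, hsq, hc1sq, sq_nonneg c1]
  -- eigenvalue data for the adjacency matrix
  have hH : (G.adjMatrix ℝ).IsHermitian := adj_isHermitian G
  have hμrange : ∀ i, hH.eigenvalues i ∈ Set.Icc (-(d:ℝ)) (d:ℝ) := adj_eigs_bound G hreg hH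
  have hsum0 : ∑ i, hH.eigenvalues i = 0 := by
    have := trace_eq_sum_eigs hH
    rw [SimpleGraph.trace_adjMatrix] at this
    linarith [this]
  have hsum2 : ∑ i, hH.eigenvalues i ^ 2 = (Fintype.card V : ℝ) * (d:ℝ) := by
    have e1 := trace_sq_eq_sum_sq hH
    have e2 : (G.adjMatrix ℝ * G.adjMatrix ℝ).trace = (Fintype.card V : ℝ) * (d:ℝ) := by
      rw [Matrix.trace]
      have e3 : ∀ i, (G.adjMatrix ℝ * G.adjMatrix ℝ).diag i = (d:ℝ) := by
        intro i
        show (G.adjMatrix ℝ * G.adjMatrix ℝ) i i = (d:ℝ)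
        rw [SimpleGraph.adjMatrix_mul_self_apply_self]
        exact_mod_cast congrArg Nat.cast (hreg i)
      simp_rw [e3]
      rw [Finset.sum_const, Finset.card_univ, nsmul_eq_mul]
    rw [← e1, e2]
  -- per-eigenvalue inequality
  have hkey := key β γ a c0 c1 (d:ℝ) hdr1 hγneg hβγd_pos hc0 hc1 h3 hK2
  -- the matrix B
  have hBpd : (β • (1 : Matrix V V ℝ) + γ • G.adjMatrix ℝ).PosDef :=
    B_posDef G hreg hγneg hβγd_pos
  have hdetB : (β • (1 : Matrix V V ℝ) + γ • G.adjMatrix ℝ).det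
      = ∏ i, (β + γ * hH.eigenvalues i) := det_smul_one_add_smul hH β γ
  -- lower bound on det B
  have hpos_i : ∀ i : V, 0 < β + γ * hH.eigenvalues i := by
    intro i
    have := (hμrange i).2
    nlinarith
  have hdetB_ge : Real.exp ((Fintype.card V : ℝ) * (-(Real.log D) / ((d:ℝ) + 1)))
      ≤ (β • (1 : Matrix V V ℝ) + γ • G.adjMatrix ℝ).det := by
    rw [hdetB]
    have hterm : ∀ i : V, Real.exp (c0 + c1 * (hH.eigenvalues i + 1)
        + a * (hH.eigenvalues i + 1) ^ 2) ≤ β + γ * hH.eigenvalues i := by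
      intro i
      have hq := hkey (hH.eigenvalues i) (hμrange i)
      calc Real.exp (c0 + c1 * (hH.eigenvalues i + 1) + a * (hH.eigenvalues i + 1) ^ 2)
          ≤ Real.exp (Real.log (β + γ * hH.eigenvalues i)) := Real.exp_le_exp.2 hq
        _ = β + γ * hH.eigenvalues i := Real.exp_log (hpos_i i)
    have hprod : ∏ i, Real.exp (c0 + c1 * (hH.eigenvalues i + 1)
        + a * (hH.eigenvalues i + 1) ^ 2) ≤ ∏ i, (β + γ * hH.eigenvalues i) :=
      Finset.prod_le_prod (fun i _ => (Real.exp_pos _).le) (fun i _ => hterm i)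
    refine le_trans (le_of_eq ?_) hprod
    rw [← Real.exp_sum]
    congr 1
    have expand : ∀ i : V, c0 + c1 * (hH.eigenvalues i + 1) + a * (hH.eigenvalues i + 1) ^ 2
        = (c0 + c1 + a) + (c1 + 2 * a) * hH.eigenvalues i + a * hH.eigenvalues i ^ 2 := by
      intro i; ring
    simp_rw [expand]
    rw [Finset.sum_add_distrib, Finset.sum_add_distrib, ← Finset.mul_sum, ← Finset.mul_sum,
      hsum0, hsum2, Finset.sum_const, Finset.card_univ, nsmul_eq_mul, mul_zero, add_zero]
    -- now: n * (-(log D)/(d+1)) = n*(c0+c1+a) + a*(n*d)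
    have hlogD : Real.log D = (d:ℝ) * Real.log (1 - x) + Real.log (1 + (d:ℝ) * x) := by
      rw [hD, Real.log_mul (by positivity) h2, Real.log_pow]
    have hc0x : c0 = -Real.log (1 - x) := by
      rw [hc0, hβmγ, one_div, Real.log_inv]
    have hLx : Real.log (β + γ * (d:ℝ)) = -Real.log (1 + (d:ℝ) * x) := by
      rw [hβγd, one_div, Real.log_inv]
    have hmain : c0 + c1 + a * ((d:ℝ) + 1) = -(Real.log D) / ((d:ℝ) + 1) := by
      rw [eq_div_iff (ne_of_gt hdp1)]
      linear_combination (-1:ℝ) * h3 + (d:ℝ) * hc0x + hLx + hlogD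
    linear_combination (-(Fintype.card V : ℝ)) * hmain
  -- master inequality: det A * det B ≤ 1
  have hApd : A.PosDef := hA.1.1
  have hmaster := master_det_le hApd hBpd
  have htrBA : ((β • (1 : Matrix V V ℝ) + γ • G.adjMatrix ℝ) * A).trace
      = (Fintype.card V : ℝ) := by
    rw [trace_BM G hreg A hA.1.2.1 hA.1.2.2, htr1, mul_one]
  rw [htrBA, sub_self, Real.exp_zero] at hmaster
  -- conclude det A ≤ exp(n log D/(d+1))
  have hdetApos : 0 < A.det := hApd.det_pos
  have hdetBpos : 0 < (β • (1 : Matrix V V ℝ) + γ • G.adjMatrix ℝ).det := hBpd.det_pos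
  have hdetA_le : A.det ≤ Real.exp ((Fintype.card V : ℝ) * (Real.log D / ((d:ℝ) + 1))) := by
    have e0 : A.det * Real.exp ((Fintype.card V : ℝ) * (-(Real.log D) / ((d:ℝ) + 1)))
        ≤ A.det * (β • (1 : Matrix V V ℝ) + γ • G.adjMatrix ℝ).det :=
      mul_le_mul_of_nonneg_left hdetB_ge hdetApos.le
    have e1 : A.det * Real.exp ((Fintype.card V : ℝ) * (-(Real.log D) / ((d:ℝ) + 1))) ≤ 1 :=
      le_trans e0 hmaster
    have e2 : Real.exp ((Fintype.card V : ℝ) * (-(Real.log D) / ((d:ℝ) + 1)))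
        = (Real.exp ((Fintype.card V : ℝ) * (Real.log D / ((d:ℝ) + 1))))⁻¹ := by
      rw [← Real.exp_neg]
      congr 1
      ring
    rw [e2] at e1
    have e3 := (Real.exp_pos ((Fintype.card V : ℝ) * (Real.log D / ((d:ℝ) + 1))))
    rw [mul_inv_le_iff₀ e3, one_mul] at e1
    exact e1
  -- final rpow manipulation
  rw [hdetA']
  have hgoal : A.det ^ ((1 : ℝ) / (Fintype.card V : ℝ))
      ≤ (Real.exp ((Fintype.card V : ℝ) * (Real.log D / ((d:ℝ) + 1)))) ^ ((1 : ℝ) / (Fintype.card V : ℝ)) :=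
    Real.rpow_le_rpow hdetApos.le hdetA_le (by positivity)
  have hexp_rpow : (Real.exp ((Fintype.card V : ℝ) * (Real.log D / ((d:ℝ) + 1)))) ^ ((1 : ℝ) / (Fintype.card V : ℝ))
      = Real.exp (Real.log D * ((1:ℝ) / ((d:ℝ) + 1))) := by
    rw [Real.rpow_def_of_pos (Real.exp_pos _), Real.log_exp]
    congr 1
    field_simp
  have hDrpow : D ^ ((1 : ℝ) / ((d:ℝ) + 1)) = Real.exp (Real.log D * ((1:ℝ) / ((d:ℝ) + 1))) :=
    Real.rpow_def_of_pos hDpos _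
  calc A.det ^ ((1 : ℝ) / (Fintype.card V : ℝ))
      ≤ (Real.exp ((Fintype.card V : ℝ) * (Real.log D / ((d:ℝ) + 1)))) ^ ((1 : ℝ) / (Fintype.card V : ℝ)) := hgoal
    _ = Real.exp (Real.log D * ((1:ℝ) / ((d:ℝ) + 1))) := hexp_rpow
    _ = D ^ ((1 : ℝ) / ((d:ℝ) + 1)) := hDrpow.symm
end
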